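/- arXiv:1412.3676 — 4 statements merged into one kernel-verified Lean document; each statement's English description precedes it below -/
import Mathlib

section
/- Let ρ1 and ρ2 be density matrices (positive semidefinite with trace 1) of the same finite size. Then: (a) if supp ρ1 = supp ρ2, then D_f^min(ρ1‖ρ2) < +∞; (b) if supp ρ1 ⊄ supp ρ2 and supp ρ2 ⊄ supp ρ1, then D_f^min(ρ1‖ρ2) < +∞ if and only if f* is bounded from below on dom f* and dom f* is bounded from above; (c) if supp ρ1 is properly contained in supp ρ2, then D_f^min(ρ1‖ρ2) < +∞ if and only if f* is bounded from below on dom f*; (d) if supp ρ2 is properly contained in supp ρ1, then D_f^min(ρ1‖ρ2) < +∞ if and only if dom f* is bounded from above. Here supp ρ denotes the range (column space) of ρ. -/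
open Filter Matrix
open scoped ComplexOrder
open scoped BigOperators

noncomputable section

attribute [local instance] Classical.propDecidable

/-- The effective domain of an extended-real-valued function. -/
def edom (f : ℝ → EReal) : Set ℝ := {x | f x < ⊤}

/-- The convex conjugate `f*`(t) = sup_λ (t·λ − f(λ)). -/
def econj (f : ℝ → EReal) (t : ℝ) : EReal := ⨆ l : ℝ, ((t * l : ℝ) : EReal) - f l

/-- The function `g` associated to `f`, i.e. the lsc positively homogeneous
extension of `(λ1,λ2) ↦ λ2 f(λ1/λ2)`. -/
def gfun (f : ℝ → EReal) (l1 l2 : ℝ) : EReal :=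
  if l1 = 0 ∧ l2 = 0 then 0
  else if l1 ∈ edom f ∧ 0 < l2 then ((l2 : ℝ) : EReal) * f (l1 / l2)
  else if l1 ∈ edom f ∧ l2 = 0 then
    limUnder (nhdsWithin 0 (Set.Ioi 0)) fun u : ℝ => ((u : ℝ) : EReal) * f (l1 / u)
  else ⊤

/-- A finite-outcome POVM. -/
def IsPOVM {n m : ℕ} (M : Fin m → Matrix (Fin n) (Fin n) ℂ) : Prop :=
  (∀ x, (M x).PosSemidef) ∧ ∑ x, M x = 1

/-- The maximized measured f-divergence `D_f^min`. -/
def Dfmin (f : ℝ → EReal) {n : ℕ} (ρ1 ρ2 : Matrix (Fin n) (Fin n) ℂ) : EReal :=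
  ⨆ (m : ℕ) (M : Fin m → Matrix (Fin n) (Fin n) ℂ) (_ : IsPOVM M),
    ∑ x, gfun f ((ρ1 * M x).trace.re) ((ρ2 * M x).trace.re)

/-- Functional calculus on a Hermitian matrix: apply `h` to the eigenvalues. -/
def hermFC {k : ℕ} (h : ℝ → ℝ) {A : Matrix (Fin k) (Fin k) ℂ} (hA : A.IsHermitian) :
    Matrix (Fin k) (Fin k) ℂ :=
  (hA.eigenvectorUnitary : Matrix (Fin k) (Fin k) ℂ) *
    Matrix.diagonal (fun i => (h (hA.eigenvalues i) : ℂ)) *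
    (star (hA.eigenvectorUnitary : Matrix (Fin k) (Fin k) ℂ))

/-- The spectrum of the Hermitian matrix `A` is contained in `S`. -/
def specIn {k : ℕ} {A : Matrix (Fin k) (Fin k) ℂ} (hA : A.IsHermitian) (S : Set ℝ) : Prop :=
  ∀ i, hA.eigenvalues i ∈ S

/-- The Loewner order: `A ≤ B`. -/
def Loewner {k : ℕ} (A B : Matrix (Fin k) (Fin k) ℂ) : Prop := (B - A).PosSemidef

/-- Operator convexity of a real function on a set `S` (midpoint form, via
the functional calculus on Hermitian matrices with spectrum in `S`). -/
def OpConvexOn (h : ℝ → ℝ) (S : Set ℝ) : Prop :=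
  ∀ (k : ℕ), 1 ≤ k → ∀ (A B : Matrix (Fin k) (Fin k) ℂ)
    (hA : A.IsHermitian) (hB : B.IsHermitian) (hM : ((1/2 : ℂ) • (A + B)).IsHermitian),
    specIn hA S → specIn hB S →
    Loewner (hermFC h hM) ((1/2 : ℂ) • (hermFC h hA + hermFC h hB))

/-- The real-valued version of the convex conjugate of `f` (used for the
functional calculus; on `dom f*` it agrees with `f*` when `f` is proper). -/
def econjR (f : ℝ → EReal) (t : ℝ) : ℝ := (econj f t).toReal

/-- Condition (I): `f*` is operator convex on its effective domain. -/
def CondI (f : ℝ → EReal) : Prop := OpConvexOn (econjR f) (edom (econj f))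

/-- `f` is a proper lower semicontinuous convex function with `dom f ⊇ (0,∞)`. -/
structure NiceF (f : ℝ → EReal) : Prop where
  ne_bot : ∀ x, f x ≠ ⊥
  ne_top : ∃ x, f x ≠ ⊤
  lsc : LowerSemicontinuous f
  convex : ∀ x y a b : ℝ, 0 ≤ a → 0 ≤ b → a + b = 1 →
    f (a * x + b * y) ≤ ((a : ℝ) : EReal) * f x + ((b : ℝ) : EReal) * f y
  dom : Set.Ioi (0 : ℝ) ⊆ edom f

/-- The support of a matrix: its range (column space). -/
def suppM {n : ℕ} (ρ : Matrix (Fin n) (Fin n) ℂ) : Submodule ℂ (Fin n → ℂ) :=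
  LinearMap.range ρ.mulVecLin

/-- A density matrix: positive semidefinite with trace one. -/
def IsDensity {n : ℕ} (ρ : Matrix (Fin n) (Fin n) ℂ) : Prop :=
  ρ.PosSemidef ∧ ρ.trace = 1

/-- `f*` is bounded from below on its effective domain. -/
def ConjBddBelow (f : ℝ → EReal) : Prop :=
  ∃ c : ℝ, ∀ t ∈ edom (econj f), ((c : ℝ) : EReal) ≤ econj f t

/-- The effective domain of `f*` is bounded from above. -/
def ConjDomBddAbove (f : ℝ → EReal) : Prop :=
  ∃ a : ℝ, ∀ t ∈ edom (econj f), t ≤ a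

-- SECTION 1 : analysis of f
namespace Stmt2

variable {f : ℝ → EReal}

lemma mem_edom {g : ℝ → EReal} {x : ℝ} : x ∈ edom g ↔ g x < ⊤ := Iff.rfl

/-- real restriction of f -/
noncomputable def FR (f : ℝ → EReal) (x : ℝ) : ℝ := (f x).toReal

lemma f_ne_top (hf : NiceF f) {x : ℝ} (hx : 0 < x) : f x ≠ ⊤ :=
  (hf.dom (Set.mem_Ioi.mpr hx)).ne

lemma f_coe (hf : NiceF f) {x : ℝ} (hx : 0 < x) : f x = ((FR f x : ℝ) : EReal) :=
  (EReal.coe_toReal (f_ne_top hf hx) (hf.ne_bot x)).symm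

lemma f_coe' (hf : NiceF f) {x : ℝ} (hx : f x ≠ ⊤) : f x = ((FR f x : ℝ) : EReal) :=
  (EReal.coe_toReal hx (hf.ne_bot x)).symm

lemma comb_pos {x y a b : ℝ} (hx : 0 < x) (hy : 0 < y) (ha : 0 ≤ a) (hb : 0 ≤ b)
    (hab : a + b = 1) : 0 < a * x + b * y := by
  rcases ha.eq_or_lt with h | h
  · have hb1 : b = 1 := by linarith
    rw [← h, hb1]; simpa using hy
  · nlinarith [mul_nonneg hb hy.le]

lemma fR_cvx (hf : NiceF f) {x y a b : ℝ} (hx : 0 < x) (hy : 0 < y) (ha : 0 ≤ a)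
    (hb : 0 ≤ b) (hab : a + b = 1) :
    FR f (a * x + b * y) ≤ a * FR f x + b * FR f y := by
  have hpos := comb_pos hx hy ha hb hab
  have h := hf.convex x y a b ha hb hab
  rw [f_coe hf hx, f_coe hf hy, f_coe hf hpos, ← EReal.coe_mul, ← EReal.coe_mul,
    ← EReal.coe_add] at h
  exact_mod_cast h

/-- three point convexity, right version: `u < v ≤ w`. -/
lemma tp_right (hf : NiceF f) {u v w : ℝ} (hu : 0 < u) (huv : u < v) (hvw : v ≤ w) :
    FR f v * (w - u) ≤ FR f u * (w - v) + FR f w * (v - u) := by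
  rcases hvw.eq_or_lt with h | h
  · rw [← h]; apply le_of_eq; ring
  · have hwu : (0:ℝ) < w - u := by linarith
    set a := (w - v) / (w - u) with hadef
    set b := (v - u) / (w - u) with hbdef
    have ha : 0 ≤ a := div_nonneg (by linarith) hwu.le
    have hb : 0 ≤ b := div_nonneg (by linarith) hwu.le
    have hab : a + b = 1 := by
      rw [hadef, hbdef, ← add_div, show w - v + (v - u) = w - u by ring,
        div_self hwu.ne']
    have e1 : a * (w - u) = w - v := div_mul_cancel₀ _ hwu.ne'
    have e2 : b * (w - u) = v - u := div_mul_cancel₀ _ hwu.ne'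
    have harg : a * u + b * w = v := by
      have h' : (a * u + b * w) * (w - u) = v * (w - u) := by
        rw [add_mul, mul_right_comm a u, e1, mul_right_comm b w, e2]; ring
      exact mul_right_cancel₀ hwu.ne' h'
    have h1 := fR_cvx hf hu (hu.trans (huv.trans h)) ha hb hab
    rw [harg] at h1
    have h2 := mul_le_mul_of_nonneg_right h1 hwu.le
    calc FR f v * (w - u) ≤ (a * FR f u + b * FR f w) * (w - u) := h2
      _ = FR f u * (a * (w - u)) + FR f w * (b * (w - u)) := by ring
      _ = FR f u * (w - v) + FR f w * (v - u) := by rw [e1, e2]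

/-- three point convexity, left version: `z ≤ u < v`, allowing `z ≤ 0` provided `f z` finite. -/
lemma tp_left (hf : NiceF f) {z u v : ℝ} (hu : 0 < u) (huv : u < v) (hz : z ≤ u)
    (hfz : f z ≠ ⊤) :
    FR f u * (v - z) ≤ FR f z * (v - u) + FR f v * (u - z) := by
  rcases hz.eq_or_lt with h | h
  · rw [h]; apply le_of_eq; ring
  · have hvz : (0:ℝ) < v - z := by linarith
    set a := (v - u) / (v - z) with hadef
    set b := (u - z) / (v - z) with hbdef
    have ha : 0 ≤ a := div_nonneg (by linarith) hvz.le
    have hb : 0 ≤ b := div_nonneg (by linarith) hvz.le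
    have hab : a + b = 1 := by
      rw [hadef, hbdef, ← add_div, show v - u + (u - z) = v - z by ring,
        div_self hvz.ne']
    have e1 : a * (v - z) = v - u := div_mul_cancel₀ _ hvz.ne'
    have e2 : b * (v - z) = u - z := div_mul_cancel₀ _ hvz.ne'
    have harg : a * z + b * v = u := by
      have h' : (a * z + b * v) * (v - z) = u * (v - z) := by
        rw [add_mul, mul_right_comm a z, e1, mul_right_comm b v, e2]; ring
      exact mul_right_cancel₀ hvz.ne' h'
    have h1 := hf.convex z v a b ha hb hab
    rw [harg] at h1
    rw [f_coe hf hu, f_coe hf (hu.trans huv), f_coe' hf hfz, ← EReal.coe_mul, ← EReal.coe_mul,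
      ← EReal.coe_add] at h1
    have h1r : FR f u ≤ a * FR f z + b * FR f v := by exact_mod_cast h1
    have h2 := mul_le_mul_of_nonneg_right h1r hvz.le
    calc FR f u * (v - z) ≤ (a * FR f z + b * FR f v) * (v - z) := h2
      _ = FR f z * (a * (v - z)) + FR f v * (b * (v - z)) := by ring
      _ = FR f z * (v - u) + FR f v * (u - z) := by rw [e1, e2]

/-- the secant line through `(p, f p), (q, f q)` lies below `f` to the right of `q`. -/
lemma line_right (hf : NiceF f) {p q z : ℝ} (hp : 0 < p) (hpq : p < q) (hz : q ≤ z) :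
    FR f p + (FR f q - FR f p) / (q - p) * (z - p) ≤ FR f z := by
  have h3 := tp_right hf hp hpq hz
  have hqp : (0:ℝ) < q - p := by linarith
  rw [show FR f p + (FR f q - FR f p)/(q-p)*(z-p)
      = (FR f p*(q-p) + (FR f q - FR f p)*(z-p))/(q-p) by field_simp,
    div_le_iff₀ hqp]
  nlinarith [h3]

/-- the secant line through `(p, f p), (q, f q)` lies below `f` to the left of `p`
(if `f z` is finite). -/
lemma line_left (hf : NiceF f) {p q z : ℝ} (hp : 0 < p) (hpq : p < q) (hz : z ≤ p)
    (hfz : f z ≠ ⊤) :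
    FR f p + (FR f q - FR f p) / (q - p) * (z - p) ≤ FR f z := by
  have h3 := tp_left hf hp hpq hz hfz
  have hqp : (0:ℝ) < q - p := by linarith
  rw [show FR f p + (FR f q - FR f p)/(q-p)*(z-p)
      = (FR f p*(q-p) + (FR f q - FR f p)*(z-p))/(q-p) by field_simp,
    div_le_iff₀ hqp]
  nlinarith [h3]

lemma f_top_of_nonpos (hf : NiceF f) (h0 : f 0 = ⊤) {z : ℝ} (hz : z ≤ 0) : f z = ⊤ := by
  rcases hz.eq_or_lt with h | h
  · rw [h]; exact h0
  · by_contra hfz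
    have h1 := tp_left hf one_pos (by linarith : (1:ℝ) < 2) (by linarith : z ≤ 1) hfz
    -- not needed; instead use convexity directly to bound f 0
    -- f 0 ≤ a f z + b f 1 where a = 1/(1-z), b = -z/(1-z)
    have hden : (0:ℝ) < 1 - z := by linarith
    set a := 1 / (1 - z) with hadef
    set b := (-z) / (1 - z) with hbdef
    have ha : 0 ≤ a := div_nonneg one_pos.le hden.le
    have hb : 0 ≤ b := div_nonneg (by linarith) hden.le
    have hab : a + b = 1 := by
      rw [hadef, hbdef, ← add_div, show 1 + -z = 1 - z by ring, div_self hden.ne']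
    have harg : a * z + b * 1 = 0 := by
      rw [hadef, hbdef]; field_simp; ring
    have h2 := hf.convex z 1 a b ha hb hab
    rw [harg, h0, f_coe' hf hfz, f_coe hf one_pos, ← EReal.coe_mul, ← EReal.coe_mul,
      ← EReal.coe_add] at h2
    exact (EReal.coe_lt_top _).not_ge h2

lemma fR_le_max (hf : NiceF f) {r x R : ℝ} (hr : 0 < r) (h1 : r ≤ x) (h2 : x ≤ R) :
    FR f x ≤ max (FR f r) (FR f R) := by
  rcases h1.eq_or_lt with h | h
  · rw [← h]; exact le_max_left _ _
  rcases h2.eq_or_lt with h' | h'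
  · rw [h']; exact le_max_right _ _
  have h3 := tp_right hf hr h h'.le
  have hRr : (0:ℝ) < R - r := by linarith
  rw [show max (FR f r) (FR f R) = (max (FR f r) (FR f R) * (R - r))/(R-r) by
    rw [mul_div_cancel_right₀ _ hRr.ne'], le_div_iff₀ hRr]
  nlinarith [h3, le_max_left (FR f r) (FR f R), le_max_right (FR f r) (FR f R),
    mul_le_mul_of_nonneg_right (le_max_left (FR f r) (FR f R)) (by linarith : (0:ℝ) ≤ R - x),
    mul_le_mul_of_nonneg_right (le_max_right (FR f r) (FR f R)) (by linarith : (0:ℝ) ≤ x - r)]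

lemma fR_le_max0 (hf : NiceF f) (h0 : f 0 ≠ ⊤) {x R : ℝ} (hx : 0 < x) (hR : x ≤ R) :
    FR f x ≤ max (FR f 0) (FR f R) := by
  rcases hR.eq_or_lt with h | h
  · rw [h]; exact le_max_right _ _
  have hR0 : 0 < R := hx.trans h
  set a := (R - x)/R with hadef
  set b := x/R with hbdef
  have ha : 0 ≤ a := div_nonneg (by linarith) hR0.le
  have hb : 0 ≤ b := div_nonneg hx.le hR0.le
  have hab : a + b = 1 := by
    rw [hadef, hbdef, ← add_div, show R - x + x = R by ring, div_self hR0.ne']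
  have harg : a * 0 + b * R = x := by
    rw [hbdef, mul_zero, zero_add, div_mul_cancel₀ _ hR0.ne']
  have h2 := hf.convex 0 R a b ha hb hab
  rw [harg, f_coe hf hx, f_coe hf hR0, f_coe' hf h0, ← EReal.coe_mul, ← EReal.coe_mul,
    ← EReal.coe_add] at h2
  have h2r : FR f x ≤ a * FR f 0 + b * FR f R := by exact_mod_cast h2
  refine h2r.trans ?_
  calc a * FR f 0 + b * FR f R
      ≤ a * max (FR f 0) (FR f R) + b * max (FR f 0) (FR f R) :=
        add_le_add (mul_le_mul_of_nonneg_left (le_max_left _ _) ha)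
          (mul_le_mul_of_nonneg_left (le_max_right _ _) hb)
    _ = max (FR f 0) (FR f R) := by rw [← add_mul, hab, one_mul]

/-- linear growth of `f` at `+∞`. -/
def LinG (f : ℝ → EReal) : Prop := ∃ K : ℝ, ∀ s : ℝ, 1 ≤ s → FR f s ≤ FR f 1 + K * (s - 1)

end Stmt2
-- SECTION 2 : conjugate conditions
namespace Stmt2

variable {f : ℝ → EReal}

lemma conjBddBelow_of_f0 (hf : NiceF f) (h0 : f 0 ≠ ⊤) : ConjBddBelow f := by
  refine ⟨-(f 0).toReal, fun t _ => ?_⟩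
  have h00 : f 0 = (((f 0).toReal : ℝ) : EReal) := (EReal.coe_toReal h0 (hf.ne_bot 0)).symm
  have he : ((-(f 0).toReal : ℝ) : EReal) = ((t * 0 : ℝ) : EReal) - f 0 := by
    rw [h00, ← EReal.coe_sub]; norm_num
  rw [he]
  exact le_iSup (fun l => ((t * l : ℝ) : EReal) - f l) 0

lemma not_conjBddBelow (hf : NiceF f) (h0 : f 0 = ⊤) : ¬ ConjBddBelow f := by
  rintro ⟨c, hc⟩
  have hlsc := hf.lsc 0 (((1 - c : ℝ) : EReal)) (by show ((1 - c : ℝ) : EReal) < f 0; rw [h0]; exact EReal.coe_lt_top _)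
  obtain ⟨δ, hδ0, hδ⟩ := Metric.eventually_nhds_iff.mp hlsc
  set p := δ/4 with hpdef
  set q := δ/2 with hqdef
  have hp0 : 0 < p := by positivity
  have hpq : p < q := by rw [hpdef, hqdef]; linarith
  set m := (FR f q - FR f p) / (q - p) with hmdef
  set t := min (min m 0) ((FR f p + m*(q-p) + (c-1))/q) with htdef
  have ht_m : t ≤ m := le_trans (min_le_left _ _) (min_le_left _ _)
  have ht_0 : t ≤ 0 := le_trans (min_le_left _ _) (min_le_right _ _)
  have ht_q : t * q ≤ FR f p + m*(q-p) + (c-1) := by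
    have h1 : t ≤ (FR f p + m*(q-p) + (c-1))/q := min_le_right _ _
    have hq0 : 0 < q := hp0.trans hpq
    calc t * q ≤ ((FR f p + m*(q-p) + (c-1))/q) * q := mul_le_mul_of_nonneg_right h1 hq0.le
      _ = FR f p + m*(q-p) + (c-1) := div_mul_cancel₀ _ hq0.ne'
  have hle : econj f t ≤ ((c - 1 : ℝ) : EReal) := by
    refine iSup_le fun l => ?_
    rcases le_or_gt l 0 with hl | hl
    · rw [f_top_of_nonpos hf h0 hl]
      simp
    rcases lt_or_ge l q with hlq | hlq
    · -- 0 < l < q < δ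
      have hdist : dist l 0 < δ := by
        rw [Real.dist_eq, sub_zero, abs_of_pos hl]
        rw [hqdef] at hlq; linarith
      have hfl : ((1 - c : ℝ) : EReal) < f l := hδ hdist
      rw [f_coe hf hl] at hfl ⊢
      rw [← EReal.coe_sub, EReal.coe_le_coe_iff]
      have hfl' : 1 - c < FR f l := by exact_mod_cast hfl
      nlinarith [mul_nonpos_of_nonpos_of_nonneg ht_0 hl.le]
    · -- q ≤ l
      have hline := line_right hf hp0 hpq hlq
      rw [f_coe hf (lt_of_lt_of_le (hp0.trans hpq) hlq)]
      rw [← EReal.coe_sub, EReal.coe_le_coe_iff]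
      rw [← hmdef] at hline
      nlinarith [mul_le_mul_of_nonneg_right ht_m (by linarith : (0:ℝ) ≤ l - q)]
  have htedom : t ∈ edom (econj f) := lt_of_le_of_lt hle (EReal.coe_lt_top _)
  have h2 := (hc t htedom).trans hle
  rw [EReal.coe_le_coe_iff] at h2
  linarith

lemma conjDomBddAbove_of_linG (hf : NiceF f) (h : LinG f) : ConjDomBddAbove f := by
  obtain ⟨K, hK⟩ := h
  refine ⟨K, fun t ht => ?_⟩
  by_contra hKt
  push_neg at hKt
  have hlow : ∀ s : ℝ, 0 < s → ((t*s - FR f s : ℝ) : EReal) ≤ econj f t := by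
    intro s hs
    have : ((t*s - FR f s : ℝ) : EReal) = ((t*s : ℝ) : EReal) - f s := by
      rw [f_coe hf hs, ← EReal.coe_sub]
    rw [this]
    exact le_iSup (fun l => ((t*l : ℝ) : EReal) - f l) s
  have hnetop : econj f t ≠ ⊤ := (mem_edom.mp ht).ne
  have hnebot : econj f t ≠ ⊥ := fun hb => by
    have := hlow 1 one_pos; rw [hb, le_bot_iff] at this; exact EReal.coe_ne_bot _ this
  set r := (econj f t).toReal with hrdef
  have hre : econj f t = ((r : ℝ) : EReal) := (EReal.coe_toReal hnetop hnebot).symm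
  set s := max 1 ((r + FR f 1 - K + 1)/(t - K)) with hsdef
  have hs1 : (1:ℝ) ≤ s := le_max_left _ _
  have h1 := hlow s (by linarith)
  rw [hre, EReal.coe_le_coe_iff] at h1
  have h2 := hK s hs1
  have h3 : (r + FR f 1 - K + 1)/(t-K) ≤ s := le_max_right _ _
  have h4 := (div_le_iff₀ (by linarith : (0:ℝ) < t - K)).mp h3
  nlinarith

lemma linG_of_conjDomBddAbove (hf : NiceF f) (h : ConjDomBddAbove f) : LinG f := by
  by_contra hL
  obtain ⟨a, ha⟩ := h
  rw [LinG] at hL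
  push_neg at hL
  obtain ⟨s0, hs1, hgt⟩ := hL a
  have hs0gt1 : 1 < s0 := by
    rcases hs1.eq_or_lt with h' | h'
    · exfalso; rw [← h'] at hgt; simp at hgt
    · exact h'
  set m := (FR f s0 - FR f 1) / (s0 - 1) with hmdef
  have hma : a < m := by
    rw [hmdef, lt_div_iff₀ (by linarith : (0:ℝ) < s0 - 1)]
    linarith
  set m2 := (FR f 1 - FR f (1/2)) / (1 - 1/2) with hm2def
  set C1 := |m| * s0 + |FR f (1/2)| + |m2| * (s0+1) with hC1def
  set C0 := max (m - FR f 1) C1 with hC0def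
  have hbound : econj f m ≤ ((C0 : ℝ) : EReal) := by
    refine iSup_le fun l => ?_
    by_cases hfl : f l = ⊤
    · rw [hfl]; simp
    have hflc : f l = ((FR f l : ℝ) : EReal) := f_coe' hf hfl
    rw [hflc, ← EReal.coe_sub, EReal.coe_le_coe_iff]
    rcases le_or_gt l 1 with hl1 | hl1
    · have hline := line_left hf one_pos hs0gt1 hl1 hfl
      rw [← hmdef] at hline
      have : m * l - FR f l ≤ m - FR f 1 := by nlinarith
      exact this.trans (le_max_left _ _)
    rcases le_or_gt s0 l with hls | hls
    · have hline := line_right hf one_pos hs0gt1 hls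
      rw [← hmdef] at hline
      have : m * l - FR f l ≤ m - FR f 1 := by nlinarith
      exact this.trans (le_max_left _ _)
    · -- 1 < l < s0
      have hline := line_right hf (by norm_num : (0:ℝ) < 1/2) (by norm_num : (1:ℝ)/2 < 1) hl1.le
      rw [← hm2def] at hline
      have hl0 : 0 < l := by linarith
      have key : m * l - FR f l ≤ C1 := by
        have h5 : m * l ≤ |m| * s0 := by
          calc m * l ≤ |m| * l := mul_le_mul_of_nonneg_right (le_abs_self m) hl0.le
            _ ≤ |m| * s0 := mul_le_mul_of_nonneg_left hls.le (abs_nonneg m)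
        have h6 : -(FR f (1/2)) ≤ |FR f (1/2)| := neg_le_abs _
        have h7 : -(m2 * (l - 1/2)) ≤ |m2| * (s0+1) := by
          have : |m2 * (l - 1/2)| ≤ |m2| * (s0+1) := by
            rw [abs_mul]
            apply mul_le_mul_of_nonneg_left _ (abs_nonneg m2)
            rw [abs_of_pos (by linarith : (0:ℝ) < l - 1/2)]
            linarith
          linarith [neg_abs_le (m2 * (l - 1/2))]
        rw [hC1def]
        nlinarith
      exact key.trans (le_max_right _ _)
  have hedom : m ∈ edom (econj f) := lt_of_le_of_lt hbound (EReal.coe_lt_top _)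
  exact absurd (ha m hedom) (by linarith)

end Stmt2
-- SECTION 3 : the perspective limit at l2 = 0
namespace Stmt2

variable {f : ℝ → EReal}

/-- convexity of the perspective-like function `u ↦ u f(p/u)`. -/
lemma phi_cvx (hf : NiceF f) {p : ℝ} (hp : 0 < p) {u v a b : ℝ} (hu : 0 < u) (hv : 0 < v)
    (ha : 0 ≤ a) (hb : 0 ≤ b) (hab : a + b = 1) :
    (a*u+b*v) * FR f (p/(a*u+b*v)) ≤ a*(u * FR f (p/u)) + b*(v * FR f (p/v)) := by
  have hw : 0 < a*u+b*v := comb_pos hu hv ha hb hab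
  set w := a*u+b*v with hwdef
  set a' := a*u/w with ha'def
  set b' := b*v/w with hb'def
  have ha' : 0 ≤ a' := div_nonneg (mul_nonneg ha hu.le) hw.le
  have hb' : 0 ≤ b' := div_nonneg (mul_nonneg hb hv.le) hw.le
  have hab' : a' + b' = 1 := by
    rw [ha'def, hb'def, ← add_div, hwdef, div_self hw.ne']
  have e3 : a' * (p/u) = a * (p/w) := by
    rw [ha'def]; field_simp [hu.ne', hw.ne']
  have e4 : b' * (p/v) = b * (p/w) := by
    rw [hb'def]; field_simp [hv.ne', hw.ne']
  have harg : a' * (p/u) + b' * (p/v) = p/w := by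
    rw [e3, e4, ← add_mul, hab, one_mul]
  have h1 := fR_cvx hf (div_pos hp hu) (div_pos hp hv) ha' hb' hab'
  rw [harg] at h1
  have h2 := mul_le_mul_of_nonneg_left h1 hw.le
  have e1 : w * a' = a * u := by rw [ha'def, mul_div_cancel₀ _ hw.ne']
  have e2 : w * b' = b * v := by rw [hb'def, mul_div_cancel₀ _ hw.ne']
  calc w * FR f (p/w) ≤ w * (a' * FR f (p/u) + b' * FR f (p/v)) := h2
    _ = (w * a') * FR f (p/u) + (w * b') * FR f (p/v) := by ring
    _ = a*(u * FR f (p/u)) + b*(v * FR f (p/v)) := by rw [e1, e2]; ring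

/-- slope monotonicity for `φ u = u f(p/u)` w.r.t. the right endpoint `d`. -/
lemma phi_slope_mono (hf : NiceF f) {p : ℝ} (hp : 0 < p) {u1 u2 d : ℝ}
    (h0 : 0 < u1) (h12 : u1 < u2) (h2d : u2 < d) :
    (d * FR f (p/d) - u1 * FR f (p/u1))/(d - u1)
      ≤ (d * FR f (p/d) - u2 * FR f (p/u2))/(d - u2) := by
  set a := (d - u2)/(d - u1) with hadef
  set b := (u2 - u1)/(d - u1) with hbdef
  have hdu1 : (0:ℝ) < d - u1 := by linarith
  have hdu2 : (0:ℝ) < d - u2 := by linarith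
  have ha : 0 ≤ a := div_nonneg hdu2.le hdu1.le
  have hb : 0 ≤ b := div_nonneg (by linarith) hdu1.le
  have hab : a + b = 1 := by
    rw [hadef, hbdef, ← add_div, show d - u2 + (u2 - u1) = d - u1 by ring,
      div_self hdu1.ne']
  have e1 : a * (d - u1) = d - u2 := div_mul_cancel₀ _ hdu1.ne'
  have e2 : b * (d - u1) = u2 - u1 := div_mul_cancel₀ _ hdu1.ne'
  have harg : a * u1 + b * d = u2 := by
    have h' : (a * u1 + b * d) * (d - u1) = u2 * (d - u1) := by
      rw [add_mul, mul_right_comm a u1, e1, mul_right_comm b d, e2]; ring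
    exact mul_right_cancel₀ hdu1.ne' h'
  have h1 := phi_cvx hf hp h0 (h0.trans (h12.trans h2d)) ha hb hab
  rw [harg] at h1
  rw [div_le_div_iff₀ hdu1 hdu2]
  have hmul2 : u2 * FR f (p/u2) * (d - u1)
      ≤ (d - u2) * (u1 * FR f (p/u1)) + (u2 - u1) * (d * FR f (p/d)) := by
    calc u2 * FR f (p/u2) * (d - u1)
        ≤ (a * (u1 * FR f (p/u1)) + b * (d * FR f (p/d))) * (d - u1) :=
          mul_le_mul_of_nonneg_right h1 hdu1.le
      _ = (u1 * FR f (p/u1)) * (a * (d - u1)) + (d * FR f (p/d)) * (b * (d - u1)) := by ring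
      _ = (d - u2) * (u1 * FR f (p/u1)) + (u2 - u1) * (d * FR f (p/d)) := by
          rw [e1, e2]; ring
  nlinarith [hmul2]

/-- If `f` has linear growth with constant `K`, the perspective limit exists and is `≤ K p`. -/
lemma lem_fin (hf : NiceF f) {K p : ℝ} (hp : 0 < p)
    (hK : ∀ s : ℝ, 1 ≤ s → FR f s ≤ FR f 1 + K * (s - 1)) :
    ∃ r : ℝ, r ≤ K * p ∧
      Tendsto (fun u : ℝ => ((u : ℝ) : EReal) * f (p/u)) (nhdsWithin 0 (Set.Ioi 0))
        (nhds ((r : ℝ) : EReal)) := by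
  set δ := p/2 with hδdef
  have hδ : 0 < δ := by positivity
  set φ := fun u : ℝ => u * FR f (p/u) with hφdef
  set ψ := fun u : ℝ => (φ δ - φ u)/(δ - u) with hψdef
  have hφbound : ∀ u : ℝ, 0 < u → u ≤ δ → φ u ≤ u * FR f 1 + K * (p - u) := by
    intro u h1 h2
    have hs : (1:ℝ) ≤ p/u := by
      rw [le_div_iff₀ h1]; rw [hδdef] at h2; linarith
    have h3 := hK _ hs
    have h4 := mul_le_mul_of_nonneg_left h3 h1.le
    have hup : u * (p/u) = p := by field_simp
    calc φ u = u * FR f (p/u) := rfl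
      _ ≤ u * (FR f 1 + K * (p/u - 1)) := h4
      _ = u * FR f 1 + K * (u * (p/u)) - K * u := by ring
      _ = u * FR f 1 + K * (p - u) := by rw [hup]; ring
  have hmono : MonotoneOn ψ (Set.Ioo 0 δ) := by
    rintro u1 ⟨hu1, hu1'⟩ u2 ⟨hu2, hu2'⟩ h12
    rcases h12.eq_or_lt with h | h
    · rw [h]
    · exact phi_slope_mono hf hp hu1 h hu2'
  set M0 := |FR f 1| * δ + |K| * p with hM0def
  have hφM : ∀ u ∈ Set.Ioo (0:ℝ) δ, φ u ≤ M0 := by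
    rintro u ⟨hu, hu'⟩
    have h1 := hφbound u hu hu'.le
    have h2 : u * FR f 1 ≤ |FR f 1| * δ := by
      calc u * FR f 1 ≤ u * |FR f 1| := mul_le_mul_of_nonneg_left (le_abs_self _) hu.le
        _ ≤ δ * |FR f 1| := mul_le_mul_of_nonneg_right hu'.le (abs_nonneg _)
        _ = |FR f 1| * δ := mul_comm _ _
    have h3 : K * (p - u) ≤ |K| * p := by
      have hpu : 0 ≤ p - u ∧ p - u ≤ p := by constructor <;> [linarith [hu', hδdef ▸ hδ]; linarith]
      calc K * (p - u) ≤ |K| * |p - u| := by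
            rw [← abs_mul]; exact le_abs_self _
        _ ≤ |K| * p := by
            apply mul_le_mul_of_nonneg_left _ (abs_nonneg K)
            rw [abs_of_nonneg hpu.1]; exact hpu.2
    linarith
  set N := max (M0 - φ δ) 0 with hNdef
  have hN : 0 ≤ N := le_max_right _ _
  have hbd : BddBelow (ψ '' Set.Ioo 0 δ) := by
    refine ⟨min (ψ (δ/2)) (-(N/(δ/2))), ?_⟩
    rintro x ⟨u, hu, rfl⟩
    rcases le_or_gt u (δ/2) with hc | hc
    · have hδu : δ/2 ≤ δ - u := by linarith [hu.2]
      have hnum : -N ≤ φ δ - φ u := by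
        have := hφM u hu
        have h1 : M0 - φ δ ≤ N := le_max_left _ _
        linarith
      have hdpos : (0:ℝ) < δ - u := by linarith [hu.2]
      have h2 : (-N)/(δ - u) ≤ ψ u := by
        rw [hψdef, div_le_div_iff_of_pos_right hdpos]
        exact hnum
      have h3 : -(N/(δ/2)) ≤ (-N)/(δ - u) := by
        rw [neg_div, neg_le_neg_iff]
        exact div_le_div_of_nonneg_left hN (by positivity) hδu
      exact le_trans (min_le_right _ _) (h3.trans h2)
    · have h4 : ψ (δ/2) ≤ ψ u :=
        hmono ⟨by positivity, by linarith⟩ hu hc.le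
      exact le_trans (min_le_left _ _) h4
  have hne : (Set.Ioo (0:ℝ) δ).Nonempty := ⟨δ/2, by constructor <;> [positivity; linarith]⟩
  have htψ := MonotoneOn.tendsto_nhdsWithin_Ioo_right hne hmono hbd
  set L := sInf (ψ '' Set.Ioo 0 δ) with hLdef
  have htφ : Tendsto φ (nhdsWithin 0 (Set.Ioi 0)) (nhds (φ δ - L * δ)) := by
    have htd : Tendsto (fun u : ℝ => δ - u) (nhdsWithin 0 (Set.Ioi 0)) (nhds δ) := by
      have : Tendsto (fun u : ℝ => δ - u) (nhds 0) (nhds (δ - 0)) :=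
        (continuous_const.sub continuous_id).tendsto 0
      rw [sub_zero] at this
      exact this.mono_left nhdsWithin_le_nhds
    have h1 : Tendsto (fun u => φ δ - ψ u * (δ - u)) (nhdsWithin 0 (Set.Ioi 0))
        (nhds (φ δ - L * δ)) := Tendsto.sub tendsto_const_nhds (Tendsto.mul htψ htd)
    refine h1.congr' ?_
    filter_upwards [Ioo_mem_nhdsGT_of_mem (Set.mem_Ico.mpr ⟨le_refl 0, hδ⟩)] with u hu
    have hdpos : (0:ℝ) < δ - u := by linarith [hu.2]
    rw [hψdef]
    field_simp
    ring
  refine ⟨φ δ - L * δ, ?_, ?_⟩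
  · have h2 : Tendsto (fun u : ℝ => u * FR f 1 + K * (p - u)) (nhdsWithin 0 (Set.Ioi 0))
        (nhds (K * p)) := by
      have : Tendsto (fun u : ℝ => u * FR f 1 + K * (p - u)) (nhds 0)
          (nhds (0 * FR f 1 + K * (p - 0))) := by
        apply Tendsto.add
        · exact (continuous_id.mul continuous_const).tendsto 0
        · exact (continuous_const.mul (continuous_const.sub continuous_id)).tendsto 0
      simp only [zero_mul, zero_add, sub_zero] at this
      exact this.mono_left nhdsWithin_le_nhds
    refine le_of_tendsto_of_tendsto htφ h2 ?_
    filter_upwards [Ioo_mem_nhdsGT_of_mem (Set.mem_Ico.mpr ⟨le_refl 0, hδ⟩)] with u hu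
    exact hφbound u hu.1 hu.2.le
  · have h3 : Tendsto (fun u : ℝ => ((φ u : ℝ) : EReal)) (nhdsWithin 0 (Set.Ioi 0))
        (nhds (((φ δ - L * δ : ℝ) : EReal))) := EReal.tendsto_coe.mpr htφ
    refine h3.congr' ?_
    filter_upwards [self_mem_nhdsWithin] with u hu
    rw [hφdef]
    simp only
    rw [f_coe hf (div_pos hp hu), ← EReal.coe_mul]

/-- If `f` does not have linear growth, the perspective tends to `⊤`. -/
lemma lem_top (hf : NiceF f) (hnl : ¬ LinG f) {p : ℝ} (hp : 0 < p) :
    Tendsto (fun u : ℝ => ((u : ℝ) : EReal) * f (p/u)) (nhdsWithin 0 (Set.Ioi 0)) (nhds ⊤) := by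
  rw [EReal.tendsto_nhds_top_iff_real]
  intro C
  rw [LinG] at hnl
  push_neg at hnl
  set K := max 0 ((C + |FR f 1|)/(p/2)) with hKdef
  obtain ⟨s0, hs1, hgt⟩ := hnl K
  have hs0 : 1 < s0 := by
    rcases hs1.eq_or_lt with h' | h'
    · exfalso; rw [← h'] at hgt; simp at hgt
    · exact h'
  set m := (FR f s0 - FR f 1)/(s0 - 1) with hmdef
  have hmK : K < m := by
    rw [hmdef, lt_div_iff₀ (by linarith : (0:ℝ) < s0 - 1)]
    linarith
  have hm0 : 0 < m := lt_of_le_of_lt (le_max_left _ _) hmK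
  have hKC : C + |FR f 1| ≤ K * (p/2) := by
    have h1 : (C + |FR f 1|)/(p/2) ≤ K := le_max_right _ _
    calc C + |FR f 1| = ((C + |FR f 1|)/(p/2)) * (p/2) := by field_simp
      _ ≤ K * (p/2) := mul_le_mul_of_nonneg_right h1 (by positivity)
  set u0 := min (p/s0) (min 1 (p/2)) with hu0def
  have hu0 : 0 < u0 := by
    apply lt_min (by positivity) (lt_min one_pos (by positivity))
  filter_upwards [Ioo_mem_nhdsGT_of_mem (Set.mem_Ico.mpr ⟨le_refl (0:ℝ), hu0⟩)] with u hu
  obtain ⟨hu1, hu2⟩ := hu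
  have hu_ps : u ≤ p/s0 := le_trans hu2.le (min_le_left _ _)
  have hu_1 : u ≤ 1 := le_trans hu2.le (le_trans (min_le_right _ _) (min_le_left _ _))
  have hu_p2 : u ≤ p/2 := le_trans hu2.le (le_trans (min_le_right _ _) (min_le_right _ _))
  have hpu : (0:ℝ) < p/u := div_pos hp hu1
  rw [f_coe hf hpu, ← EReal.coe_mul, EReal.coe_lt_coe_iff]
  have hz : s0 ≤ p/u := by
    rw [le_div_iff₀ hu1]
    calc s0 * u ≤ s0 * (p/s0) := mul_le_mul_of_nonneg_left hu_ps (by linarith)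
      _ = p := mul_div_cancel₀ _ (by linarith : s0 ≠ 0)
  have hline := line_right hf one_pos hs0 hz
  rw [← hmdef] at hline
  have h5 := mul_le_mul_of_nonneg_left hline hu1.le
  have hup : u * (p/u) = p := by field_simp
  have h6 : u * FR f 1 + m * (p - u) ≤ u * FR f (p/u) := by nlinarith [h5, hup]
  have h7 : -|FR f 1| ≤ u * FR f 1 := by
    calc -|FR f 1| ≤ u * (-|FR f 1|) := by nlinarith [abs_nonneg (FR f 1)]
      _ ≤ u * FR f 1 := mul_le_mul_of_nonneg_left (neg_abs_le _) hu1.le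
  have h8 : K * (p/2) < m * (p - u) := by
    have : p/2 ≤ p - u := by linarith
    calc K * (p/2) < m * (p/2) := by nlinarith
      _ ≤ m * (p - u) := mul_le_mul_of_nonneg_left this hm0.le
  linarith
end Stmt2
-- SECTION 4 : evaluation of gfun
namespace Stmt2

variable {f : ℝ → EReal}

lemma gfun_zero_zero : gfun f 0 0 = 0 := if_pos ⟨rfl, rfl⟩

lemma gfun_pos_pos (hf : NiceF f) {p q : ℝ} (hp : 0 < p) (hq : 0 < q) :
    gfun f p q = ((q * FR f (p/q) : ℝ) : EReal) := by
  rw [gfun, if_neg (by rintro ⟨h, -⟩; exact hp.ne' h),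
    if_pos ⟨hf.dom (Set.mem_Ioi.mpr hp), hq⟩,
    f_coe hf (div_pos hp hq), ← EReal.coe_mul]

lemma gfun_zero_pos (hq : (0:ℝ) < q) : gfun f 0 q = ((q : ℝ) : EReal) * f 0 := by
  by_cases h0 : f 0 < ⊤
  · rw [gfun, if_neg (by rintro ⟨-, h⟩; exact hq.ne' h), if_pos ⟨h0, hq⟩]
    norm_num
  · rw [gfun, if_neg (by rintro ⟨-, h⟩; exact hq.ne' h),
      if_neg (by rintro ⟨h, -⟩; exact h0 h), if_neg (by rintro ⟨h, -⟩; exact h0 h)]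
    rw [top_le_iff.mp (not_lt.mp h0), EReal.coe_mul_top_of_pos hq]

lemma gfun_pos_zero (hf : NiceF f) {p : ℝ} (hp : 0 < p) :
    gfun f p 0 = limUnder (nhdsWithin 0 (Set.Ioi 0))
      (fun u : ℝ => ((u : ℝ) : EReal) * f (p / u)) := by
  rw [gfun, if_neg (by rintro ⟨h, -⟩; exact hp.ne' h),
    if_neg (by rintro ⟨-, h⟩; exact lt_irrefl 0 h),
    if_pos ⟨hf.dom (Set.mem_Ioi.mpr hp), rfl⟩]

lemma gfun_pos_zero_top (hf : NiceF f) (hnl : ¬ LinG f) {p : ℝ} (hp : 0 < p) :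
    gfun f p 0 = ⊤ := by
  rw [gfun_pos_zero hf hp]
  exact (lem_top hf hnl hp).limUnder_eq

lemma gfun_pos_zero_le (hf : NiceF f) {K p : ℝ} (hp : 0 < p)
    (hK : ∀ s : ℝ, 1 ≤ s → FR f s ≤ FR f 1 + K * (s - 1)) :
    gfun f p 0 ≤ ((K * p : ℝ) : EReal) ∧ gfun f p 0 ≠ ⊥ := by
  obtain ⟨r, hr, ht⟩ := lem_fin hf hp hK
  rw [gfun_pos_zero hf hp, ht.limUnder_eq]
  exact ⟨EReal.coe_le_coe_iff.mpr hr, EReal.coe_ne_bot r⟩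

lemma gfun_pos_zero_ne_bot (hf : NiceF f) {p : ℝ} (hp : 0 < p) : gfun f p 0 ≠ ⊥ := by
  by_cases h : LinG f
  · obtain ⟨K, hK⟩ := h
    exact (gfun_pos_zero_le hf hp hK).2
  · rw [gfun_pos_zero_top hf h hp]; exact (top_ne_bot : (⊤:EReal) ≠ ⊥)

lemma gfun_ne_bot (hf : NiceF f) {p q : ℝ} (hp : 0 ≤ p) (hq : 0 ≤ q) :
    gfun f p q ≠ ⊥ := by
  rcases hp.eq_or_lt with hp0 | hp0 <;> rcases hq.eq_or_lt with hq0 | hq0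
  · rw [← hp0, ← hq0, gfun_zero_zero]; simp
  · rw [← hp0, gfun_zero_pos hq0]
    by_cases h0 : f 0 = ⊤
    · rw [h0, EReal.coe_mul_top_of_pos hq0]; exact (top_ne_bot : (⊤:EReal) ≠ ⊥)
    · rw [f_coe' hf h0, ← EReal.coe_mul]; exact EReal.coe_ne_bot _
  · rw [← hq0]; exact gfun_pos_zero_ne_bot hf hp0
  · rw [gfun_pos_pos hf hp0 hq0]; exact EReal.coe_ne_bot _

/-- pointwise bound, case (b): both conditions, no comparability. -/
lemma pt_b (hf : NiceF f) (h0 : f 0 ≠ ⊤) {K : ℝ}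
    (hK : ∀ s : ℝ, 1 ≤ s → FR f s ≤ FR f 1 + K * (s - 1)) {p q : ℝ}
    (hp : 0 ≤ p) (hq : 0 ≤ q) :
    gfun f p q ≤ (((max (max (FR f 0) (FR f 1)) 0 + |FR f 1| + |K|) * q + |K| * p : ℝ) : EReal) := by
  set A := max (max (FR f 0) (FR f 1)) 0 + |FR f 1| + |K| with hAdef
  have hA0 : 0 ≤ A := by
    have := le_max_right (max (FR f 0) (FR f 1)) (0:ℝ)
    have := abs_nonneg (FR f 1); have := abs_nonneg K
    rw [hAdef]; linarith [le_max_right (max (FR f 0) (FR f 1)) (0:ℝ)]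
  rcases hp.eq_or_lt with hp0 | hp0 <;> rcases hq.eq_or_lt with hq0 | hq0
  · rw [← hp0, ← hq0, gfun_zero_zero, mul_zero, mul_zero, add_zero]
    simp
  · -- p = 0 < q
    rw [← hp0, gfun_zero_pos hq0, f_coe' hf h0, ← EReal.coe_mul, EReal.coe_le_coe_iff]
    have h1 : FR f 0 ≤ A := by
      rw [hAdef]
      have h2 : FR f 0 ≤ max (max (FR f 0) (FR f 1)) 0 :=
        le_trans (le_max_left _ _) (le_max_left _ _)
      linarith [abs_nonneg (FR f 1), abs_nonneg K]
    have : q * FR f 0 ≤ q * A := mul_le_mul_of_nonneg_left h1 hq0.le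
    nlinarith [abs_nonneg K]
  · -- q = 0 < p
    rw [← hq0]
    refine le_trans (gfun_pos_zero_le hf hp0 hK).1 ?_
    rw [EReal.coe_le_coe_iff]
    have : K * p ≤ |K| * p := mul_le_mul_of_nonneg_right (le_abs_self K) hp0.le
    nlinarith [hA0]
  · -- both positive
    rw [gfun_pos_pos hf hp0 hq0, EReal.coe_le_coe_iff]
    set x := p / q with hxdef
    have hx0 : 0 < x := div_pos hp0 hq0
    have hqx : q * x = p := by rw [hxdef, mul_div_cancel₀ _ hq0.ne']
    rcases le_or_gt x 1 with hx1 | hx1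
    · have h1 : FR f x ≤ max (FR f 0) (FR f 1) := fR_le_max0 hf h0 hx0 hx1
      have h2 : FR f x ≤ A := by
        rw [hAdef]
        linarith [le_max_left (max (FR f 0) (FR f 1)) (0:ℝ),
          le_max_left (FR f 0) (FR f 1), abs_nonneg (FR f 1), abs_nonneg K,
          (le_max_left (max (FR f 0) (FR f 1)) (0:ℝ)).trans' (le_max_left (FR f 0) (FR f 1))]
      have h3 : q * FR f x ≤ q * A := mul_le_mul_of_nonneg_left h2 hq0.le
      nlinarith [abs_nonneg K, mul_nonneg (abs_nonneg K) hp]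
    · have h1 : FR f x ≤ FR f 1 + K * (x - 1) := hK x hx1.le
      have h3 : q * FR f x ≤ q * FR f 1 + K * (q * x) - K * q := by
        have := mul_le_mul_of_nonneg_left h1 hq0.le
        nlinarith [this]
      rw [hqx] at h3
      have h4 : q * FR f 1 ≤ q * |FR f 1| := mul_le_mul_of_nonneg_left (le_abs_self _) hq0.le
      have h5 : K * p ≤ |K| * p := mul_le_mul_of_nonneg_right (le_abs_self K) hp
      have h6 : - (K * q) ≤ |K| * q := by
        rw [← neg_mul]; exact mul_le_mul_of_nonneg_right (neg_le_abs K) hq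
      have h7 : q * |FR f 1| + |K| * q ≤ A * q := by
        rw [hAdef]
        nlinarith [le_max_right (max (FR f 0) (FR f 1)) (0:ℝ), hq0.le]
      nlinarith
end Stmt2
-- SECTION 5 : remaining pointwise bounds
namespace Stmt2

variable {f : ℝ → EReal}

/-- pointwise bound, case (a): two-sided comparability, no conditions on `f`. -/
lemma pt_a (hf : NiceF f) {c c' : ℝ} (hc : 0 < c) (hc' : 0 < c') {p q : ℝ}
    (hp : 0 ≤ p) (hq : 0 ≤ q) (h1 : p ≤ c * q) (h2 : q ≤ c' * p) :
    gfun f p q ≤ (((max (max (FR f (1/c')) (FR f c)) 0) * q : ℝ) : EReal) := by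
  set A := max (max (FR f (1/c')) (FR f c)) 0 with hAdef
  have hA0 : (0:ℝ) ≤ A := le_max_right _ _
  rcases hp.eq_or_lt with hp0 | hp0
  · have hq0 : q = 0 := le_antisymm (by rw [← hp0] at h2; linarith) hq
    rw [← hp0, hq0, gfun_zero_zero, mul_zero]
    simp
  rcases hq.eq_or_lt with hq0 | hq0
  · exfalso; rw [← hq0] at h1; nlinarith
  rw [gfun_pos_pos hf hp0 hq0, EReal.coe_le_coe_iff]
  set x := p / q with hxdef
  have hx0 : 0 < x := div_pos hp0 hq0
  have hxc : x ≤ c := by rw [hxdef, div_le_iff₀ hq0]; linarith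
  have hxc' : 1/c' ≤ x := by
    rw [hxdef, div_le_div_iff₀ hc' hq0]
    linarith
  have h3 : FR f x ≤ max (FR f (1/c')) (FR f c) := fR_le_max hf (by positivity) hxc' hxc
  have h4 : FR f x ≤ A := le_trans h3 (le_max_left _ _)
  calc q * FR f x ≤ q * A := mul_le_mul_of_nonneg_left h4 hq0.le
    _ = A * q := mul_comm _ _

/-- pointwise bound, case (c): `p ≤ c q` and `f 0` finite. -/
lemma pt_c (hf : NiceF f) (h0 : f 0 ≠ ⊤) {c : ℝ} (hc : 0 < c) {p q : ℝ}
    (hp : 0 ≤ p) (hq : 0 ≤ q) (h1 : p ≤ c * q) :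
    gfun f p q ≤ (((max (max (FR f 0) (FR f c)) 0) * q : ℝ) : EReal) := by
  set A := max (max (FR f 0) (FR f c)) 0 with hAdef
  have hA0 : (0:ℝ) ≤ A := le_max_right _ _
  rcases hq.eq_or_lt with hq0 | hq0
  · have hp0 : p = 0 := le_antisymm (by rw [← hq0] at h1; linarith) hp
    rw [hp0, ← hq0, gfun_zero_zero, mul_zero]
    simp
  rcases hp.eq_or_lt with hp0 | hp0
  · rw [← hp0, gfun_zero_pos hq0, f_coe' hf h0, ← EReal.coe_mul, EReal.coe_le_coe_iff]
    have h2 : FR f 0 ≤ A := le_trans (le_max_left _ _) (le_max_left _ _)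
    calc q * FR f 0 ≤ q * A := mul_le_mul_of_nonneg_left h2 hq0.le
      _ = A * q := mul_comm _ _
  · rw [gfun_pos_pos hf hp0 hq0, EReal.coe_le_coe_iff]
    set x := p / q with hxdef
    have hx0 : 0 < x := div_pos hp0 hq0
    have hxc : x ≤ c := by rw [hxdef, div_le_iff₀ hq0]; linarith
    have h3 : FR f x ≤ max (FR f 0) (FR f c) := fR_le_max0 hf h0 hx0 hxc
    have h4 : FR f x ≤ A := le_trans h3 (le_max_left _ _)
    calc q * FR f x ≤ q * A := mul_le_mul_of_nonneg_left h4 hq0.le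
      _ = A * q := mul_comm _ _

/-- pointwise bound, case (d): `q ≤ c p` and linear growth. -/
lemma pt_d (hf : NiceF f) {K : ℝ}
    (hK : ∀ s : ℝ, 1 ≤ s → FR f s ≤ FR f 1 + K * (s - 1)) {c : ℝ} (hc : 0 < c) {p q : ℝ}
    (hp : 0 ≤ p) (hq : 0 ≤ q) (h2 : q ≤ c * p) :
    gfun f p q ≤
      (((max (max (FR f (1/c)) (FR f 1)) 0 + |FR f 1| + |K|) * q + |K| * p : ℝ) : EReal) := by
  set A := max (max (FR f (1/c)) (FR f 1)) 0 + |FR f 1| + |K| with hAdef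
  have hA0 : 0 ≤ A := by
    rw [hAdef]
    linarith [le_max_right (max (FR f (1/c)) (FR f 1)) (0:ℝ), abs_nonneg (FR f 1), abs_nonneg K]
  rcases hp.eq_or_lt with hp0 | hp0
  · have hq0 : q = 0 := le_antisymm (by rw [← hp0] at h2; linarith) hq
    rw [← hp0, hq0, gfun_zero_zero, mul_zero, mul_zero, add_zero]
    simp
  rcases hq.eq_or_lt with hq0 | hq0
  · rw [← hq0]
    refine le_trans (gfun_pos_zero_le hf hp0 hK).1 ?_
    rw [EReal.coe_le_coe_iff]
    have : K * p ≤ |K| * p := mul_le_mul_of_nonneg_right (le_abs_self K) hp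
    nlinarith [mul_nonneg hA0 hq]
  · rw [gfun_pos_pos hf hp0 hq0, EReal.coe_le_coe_iff]
    set x := p / q with hxdef
    have hx0 : 0 < x := div_pos hp0 hq0
    have hqx : q * x = p := by rw [hxdef, mul_div_cancel₀ _ hq0.ne']
    have hxc : 1/c ≤ x := by
      rw [hxdef, div_le_div_iff₀ hc hq0]
      linarith
    rcases le_or_gt x 1 with hx1 | hx1
    · have h3 : FR f x ≤ max (FR f (1/c)) (FR f 1) := fR_le_max hf (by positivity) hxc hx1
      have h4 : FR f x ≤ A := by
        rw [hAdef]
        linarith [le_max_left (max (FR f (1/c)) (FR f 1)) (0:ℝ), abs_nonneg (FR f 1),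
          abs_nonneg K, (le_max_left (max (FR f (1/c)) (FR f 1)) (0:ℝ)).trans' h3]
      have h5 : q * FR f x ≤ q * A := mul_le_mul_of_nonneg_left h4 hq0.le
      nlinarith [mul_nonneg (abs_nonneg K) hp]
    · have h1 : FR f x ≤ FR f 1 + K * (x - 1) := hK x hx1.le
      have h3 : q * FR f x ≤ q * FR f 1 + K * (q * x) - K * q := by
        have := mul_le_mul_of_nonneg_left h1 hq0.le
        nlinarith [this]
      rw [hqx] at h3
      have h4 : q * FR f 1 ≤ q * |FR f 1| := mul_le_mul_of_nonneg_left (le_abs_self _) hq0.le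
      have h5 : K * p ≤ |K| * p := mul_le_mul_of_nonneg_right (le_abs_self K) hp
      have h6 : - (K * q) ≤ |K| * q := by
        rw [← neg_mul]; exact mul_le_mul_of_nonneg_right (neg_le_abs K) hq
      have h7 : q * |FR f 1| + |K| * q ≤ A * q := by
        rw [hAdef]
        nlinarith [le_max_right (max (FR f (1/c)) (FR f 1)) (0:ℝ), hq0.le]
      nlinarith
end Stmt2
-- SECTION 6 : functional calculus algebra
namespace Stmt2

section FC
variable {k : ℕ} {A : Matrix (Fin k) (Fin k) ℂ} (hA : A.IsHermitian)

local notation "U" => (hA.eigenvectorUnitary : Matrix (Fin k) (Fin k) ℂ)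

lemma U_mul_star : U * star U = 1 :=
  Matrix.mem_unitaryGroup_iff.mp hA.eigenvectorUnitary.property

lemma star_mul_U : star U * U = 1 :=
  Matrix.mem_unitaryGroup_iff'.mp hA.eigenvectorUnitary.property

lemma FC_mul (g h : ℝ → ℝ) :
    hermFC g hA * hermFC h hA = hermFC (fun t => g t * h t) hA := by
  rw [hermFC, hermFC, hermFC]
  have key : U * Matrix.diagonal (fun i => (g (hA.eigenvalues i) : ℂ)) * star U *
      (U * Matrix.diagonal (fun i => (h (hA.eigenvalues i) : ℂ)) * star U)
      = U * (Matrix.diagonal (fun i => (g (hA.eigenvalues i) : ℂ)) *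
        Matrix.diagonal (fun i => (h (hA.eigenvalues i) : ℂ))) * star U := by
    calc U * Matrix.diagonal (fun i => (g (hA.eigenvalues i) : ℂ)) * star U *
        (U * Matrix.diagonal (fun i => (h (hA.eigenvalues i) : ℂ)) * star U)
        = U * (Matrix.diagonal (fun i => (g (hA.eigenvalues i) : ℂ)) * ((star U * U) *
          (Matrix.diagonal (fun i => (h (hA.eigenvalues i) : ℂ)) * star U))) := by
          simp only [Matrix.mul_assoc]
      _ = _ := by rw [star_mul_U hA, Matrix.one_mul]; simp only [Matrix.mul_assoc]
  rw [key, Matrix.diagonal_mul_diagonal]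
  simp only [← Complex.ofReal_mul]

lemma FC_one : hermFC (fun _ => (1:ℝ)) hA = 1 := by
  rw [hermFC]
  simp only [Complex.ofReal_one, Matrix.diagonal_one, Matrix.mul_one]
  exact U_mul_star hA

lemma FC_id : hermFC (fun t => t) hA = A := by
  rw [hermFC]
  exact hA.spectral_theorem.symm

lemma FC_zero : hermFC (fun _ => (0:ℝ)) hA = 0 := by
  rw [hermFC]
  simp

lemma FC_sub (g h : ℝ → ℝ) :
    hermFC (fun t => g t - h t) hA = hermFC g hA - hermFC h hA := by
  rw [hermFC, hermFC, hermFC, ← Matrix.sub_mul, ← Matrix.mul_sub, Matrix.diagonal_sub]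
  simp only [Complex.ofReal_sub]

lemma FC_smul (r : ℝ) (g : ℝ → ℝ) :
    hermFC (fun t => r * g t) hA = (r : ℂ) • hermFC g hA := by
  rw [hermFC, hermFC]
  have hd : (fun i => ((r * g (hA.eigenvalues i) : ℝ) : ℂ))
      = (r : ℂ) • (fun i => ((g (hA.eigenvalues i) : ℝ) : ℂ)) := by
    funext i
    simp [Complex.ofReal_mul, smul_eq_mul]
  rw [hd, Matrix.diagonal_smul, Matrix.mul_smul, Matrix.smul_mul]

lemma FC_psd (g : ℝ → ℝ) (hg : ∀ i, 0 ≤ g (hA.eigenvalues i)) :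
    (hermFC g hA).PosSemidef := by
  rw [hermFC, Matrix.star_eq_conjTranspose]
  exact (Matrix.posSemidef_diagonal_iff.mpr fun i =>
    Complex.zero_le_real.mpr (hg i)).mul_mul_conjTranspose_same _

lemma FC_herm (g : ℝ → ℝ) : (hermFC g hA).IsHermitian := by
  rw [hermFC]
  have hD : (Matrix.diagonal (fun i => (g (hA.eigenvalues i) : ℂ))).IsHermitian := by
    rw [Matrix.IsHermitian, Matrix.diagonal_conjTranspose,
      show (star fun i => ((g (hA.eigenvalues i) : ℝ) : ℂ))
          = fun i => ((g (hA.eigenvalues i) : ℝ) : ℂ) from funext fun i => by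
        simp [Pi.star_apply]]
  have h2 := Matrix.isHermitian_mul_mul_conjTranspose
    (hA.eigenvectorUnitary : Matrix (Fin k) (Fin k) ℂ) hD
  rwa [← Matrix.star_eq_conjTranspose] at h2

lemma FC_trace (g : ℝ → ℝ) :
    (hermFC g hA).trace = ∑ i, (g (hA.eigenvalues i) : ℂ) := by
  rw [hermFC, Matrix.trace_mul_cycle, star_mul_U hA, Matrix.one_mul, Matrix.trace_diagonal]

end FC

@[irreducible]
noncomputable def _root_.Matrix.PosSemidef.sqrt {m : ℕ} {A : Matrix (Fin m) (Fin m) ℂ}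
    (hA : A.PosSemidef) : Matrix (Fin m) (Fin m) ℂ :=
  hermFC Real.sqrt hA.1

lemma _root_.Matrix.PosSemidef.posSemidef_sqrt {m : ℕ} {A : Matrix (Fin m) (Fin m) ℂ}
    (hA : A.PosSemidef) : hA.sqrt.PosSemidef :=
  by rw [Matrix.PosSemidef.sqrt]; exact FC_psd hA.1 _ fun _ => Real.sqrt_nonneg _

lemma _root_.Matrix.PosSemidef.sqrt_mul_self {m : ℕ} {A : Matrix (Fin m) (Fin m) ℂ}
    (hA : A.PosSemidef) : hA.sqrt * hA.sqrt = A := by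
  rw [Matrix.PosSemidef.sqrt, FC_mul]
  conv_rhs => rw [← FC_id hA.1]
  have e : (fun i => ((√(hA.1.eigenvalues i) * √(hA.1.eigenvalues i) : ℝ) : ℂ))
      = fun i => ((hA.1.eigenvalues i : ℝ) : ℂ) :=
    funext fun i => by rw [Real.mul_self_sqrt (hA.eigenvalues_nonneg i)]
  simp only [hermFC]
  rw [e]
end Stmt2
-- SECTION 7 : matrix support lemmas
namespace Stmt2

section Mat
variable {n : ℕ}

lemma psd_trace_nonneg {A : Matrix (Fin n) (Fin n) ℂ} (hA : A.PosSemidef) :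
    0 ≤ A.trace := by
  rw [Matrix.trace]
  apply Finset.sum_nonneg
  intro i _
  have h := hA.dotProduct_mulVec_nonneg (Pi.single i 1)
  have e : star (Pi.single i 1) ⬝ᵥ A *ᵥ Pi.single i 1 = A.diag i := by
    rw [Matrix.mulVec_single]
    simp [dotProduct, Pi.single_apply, apply_ite, Matrix.diag]
  rwa [e] at h

lemma trace_psd_mul_nonneg {A N : Matrix (Fin n) (Fin n) ℂ} (hA : A.PosSemidef)
    (hN : N.PosSemidef) : 0 ≤ (A * N).trace := by
  have hX := hN.sqrt_mul_self
  set X := hN.sqrt with hXdef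
  have hXh : Xᴴ = X := hN.posSemidef_sqrt.1
  have e : A * N = A * X * X := by rw [← hX, Matrix.mul_assoc]
  rw [e, Matrix.trace_mul_cycle]
  have hpsd : (Xᴴ * A * X).PosSemidef := hA.conjTranspose_mul_mul_same X
  rw [hXh] at hpsd
  exact psd_trace_nonneg hpsd

lemma trace_psd_mul_re_nonneg {A N : Matrix (Fin n) (Fin n) ℂ} (hA : A.PosSemidef)
    (hN : N.PosSemidef) : 0 ≤ (A * N).trace.re := by
  have := (Complex.le_def.mp (trace_psd_mul_nonneg hA hN)).1
  simpa using this

lemma trace_conjTranspose_mul_self_re_zero {B : Matrix (Fin n) (Fin n) ℂ}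
    (h : (Bᴴ * B).trace.re = 0) : B = 0 := by
  have htr : (Bᴴ * B).trace.re = ∑ j, ∑ i, Complex.normSq (B i j) := by
    rw [Matrix.trace, Complex.re_sum]
    apply Finset.sum_congr rfl
    intro j _
    rw [Matrix.diag, Matrix.mul_apply, Complex.re_sum]
    apply Finset.sum_congr rfl
    intro i _
    rw [Matrix.conjTranspose_apply, Complex.star_def, ← Complex.normSq_eq_conj_mul_self, Complex.ofReal_re]
  rw [htr] at h
  have h1 := (Finset.sum_eq_zero_iff_of_nonneg
    (fun j _ => Finset.sum_nonneg fun i _ => Complex.normSq_nonneg _)).mp h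
  ext i j
  have h2 := (Finset.sum_eq_zero_iff_of_nonneg
    (fun i _ => Complex.normSq_nonneg _)).mp (h1 j (Finset.mem_univ j)) i (Finset.mem_univ i)
  simpa using Complex.normSq_eq_zero.mp h2

lemma suppM_le_of_factor {ρa ρ S : Matrix (Fin n) (Fin n) ℂ} (h : ρa = ρ * S) :
    suppM ρa ≤ suppM ρ := by
  rintro y ⟨v, rfl⟩
  refine ⟨S *ᵥ v, ?_⟩
  rw [Matrix.mulVecLin_apply, Matrix.mulVecLin_apply, h, ← Matrix.mulVec_mulVec]

lemma matrix_eq_zero_of_mulVec {A : Matrix (Fin n) (Fin n) ℂ}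
    (h : ∀ v, A *ᵥ v = 0) : A = 0 := by
  ext i j
  have h2 := congr_fun (h (Pi.single j 1)) i
  rw [Matrix.mulVec_single] at h2
  simpa using h2

lemma mul_left_zero_of_supp {ρa ρ Q' : Matrix (Fin n) (Fin n) ℂ}
    (hsupp : suppM ρa ≤ suppM ρ) (hQρ : Q' * ρ = 0) : Q' * ρa = 0 := by
  apply matrix_eq_zero_of_mulVec
  intro v
  have hmem : ρa *ᵥ v ∈ suppM ρ := hsupp ⟨v, Matrix.mulVecLin_apply _ _⟩
  obtain ⟨w, hw⟩ := hmem
  rw [Matrix.mulVecLin_apply] at hw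
  rw [← Matrix.mulVec_mulVec, ← hw, Matrix.mulVec_mulVec, hQρ, Matrix.zero_mulVec]

lemma quad_conj (P B : Matrix (Fin n) (Fin n) ℂ) (hP : Pᴴ = P) (x : Fin n → ℂ) :
    star (P *ᵥ x) ⬝ᵥ (B *ᵥ (P *ᵥ x)) = star x ⬝ᵥ ((P * B * P) *ᵥ x) := by
  rw [Matrix.star_mulVec, hP, Matrix.mulVec_mulVec, Matrix.dotProduct_mulVec,
    Matrix.vecMul_vecMul, ← Matrix.dotProduct_mulVec, ← Matrix.mul_assoc]

variable {ρ : Matrix (Fin n) (Fin n) ℂ}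

/-- projection onto the kernel of `ρ`. -/
noncomputable def Qm (hd : IsDensity ρ) : Matrix (Fin n) (Fin n) ℂ :=
  hermFC (fun t => if t = 0 then 1 else 0) hd.1.1

lemma Qm_psd (hd : IsDensity ρ) : (Qm hd).PosSemidef :=
  FC_psd _ _ fun i => by split <;> norm_num

lemma Qm_herm (hd : IsDensity ρ) : (Qm hd).IsHermitian := FC_herm _ _

lemma Qm_idem (hd : IsDensity ρ) : Qm hd * Qm hd = Qm hd := by
  rw [Qm, FC_mul,
    show (fun t : ℝ => (if t = 0 then (1:ℝ) else 0) * (if t = 0 then 1 else 0))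
      = fun t : ℝ => if t = 0 then (1:ℝ) else 0 from funext fun t => by split <;> norm_num]

lemma oneSubQm_eq (hd : IsDensity ρ) :
    (1 : Matrix (Fin n) (Fin n) ℂ) - Qm hd
      = hermFC (fun t => 1 - (if t = 0 then 1 else 0)) hd.1.1 := by
  rw [FC_sub, FC_one, Qm]

lemma oneSubQm_psd (hd : IsDensity ρ) :
    ((1 : Matrix (Fin n) (Fin n) ℂ) - Qm hd).PosSemidef := by
  rw [oneSubQm_eq hd]
  exact FC_psd _ _ fun i => by split <;> norm_num

lemma rho_mul_Qm (hd : IsDensity ρ) : ρ * Qm hd = 0 := by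
  have e : (fun t : ℝ => t * (if t = 0 then 1 else 0)) = fun _ => (0:ℝ) := by
    funext t
    split <;> simp_all
  have h1 : hermFC (fun t => t) hd.1.1 * Qm hd = 0 := by
    rw [Qm, FC_mul, e, FC_zero]
  rwa [FC_id] at h1

lemma Qm_mul_rho (hd : IsDensity ρ) : Qm hd * ρ = 0 := by
  have e : (fun t : ℝ => (if t = 0 then 1 else 0) * t) = fun _ => (0:ℝ) := by
    funext t
    split <;> simp_all
  have h1 : Qm hd * hermFC (fun t => t) hd.1.1 = 0 := by
    rw [Qm, FC_mul, e, FC_zero]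
  rwa [FC_id] at h1

lemma rho_mul_pinv (hd : IsDensity ρ) :
    ρ * hermFC (fun t => if t = 0 then 0 else t⁻¹) hd.1.1
      = 1 - Qm hd := by
  have e : (fun t : ℝ => t * (if t = 0 then 0 else t⁻¹))
      = fun t : ℝ => 1 - (if t = 0 then 1 else 0) := by
    funext t
    by_cases h : t = 0
    · simp [h]
    · simp [h, mul_inv_cancel₀ h]
  have h1 : hermFC (fun t => t) hd.1.1 * hermFC (fun t => if t = 0 then 0 else t⁻¹) hd.1.1
      = 1 - Qm hd := by
    rw [FC_mul, e, oneSubQm_eq hd]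
  rwa [FC_id] at h1

lemma eigen_sum_one (hd : IsDensity ρ) : ∑ i, hd.1.1.eigenvalues i = 1 := by
  have h := FC_trace hd.1.1 (fun t => t)
  rw [FC_id] at h
  have h2 : (1 : ℂ) = ∑ i, ((hd.1.1.eigenvalues i : ℝ) : ℂ) := hd.2.symm.trans h
  have h3 := congrArg Complex.re h2.symm
  rw [Complex.re_sum] at h3
  simpa using h3

lemma one_sub_rho_psd (hd : IsDensity ρ) :
    ((1 : Matrix (Fin n) (Fin n) ℂ) - ρ).PosSemidef := by
  have e : (1 : Matrix (Fin n) (Fin n) ℂ) - ρ = hermFC (fun t => 1 - t) hd.1.1 := by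
    rw [FC_sub, FC_one, FC_id]
  rw [e]
  refine FC_psd _ _ fun i => ?_
  have h1 : hd.1.1.eigenvalues i ≤ 1 := by
    rw [← eigen_sum_one hd]
    exact Finset.single_le_sum (fun j _ => hd.1.eigenvalues_nonneg j) (Finset.mem_univ i)
  linarith

lemma trace_rho_Qm (hd : IsDensity ρ) : (ρ * Qm hd).trace.re = 0 := by
  rw [rho_mul_Qm hd]
  simp

lemma supp_le_of_trace_zero {ρa : Matrix (Fin n) (Fin n) ℂ} (hda : IsDensity ρa)
    (hd : IsDensity ρ) (h : (ρa * Qm hd).trace.re = 0) : suppM ρa ≤ suppM ρ := by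
  set Q := Qm hd with hQdef
  have hQQ : Q * Q = Q := Qm_idem hd
  have hQh : Qᴴ = Q := Qm_herm hd
  set X := hda.1.sqrt with hXdef
  have hXX : X * X = ρa := hda.1.sqrt_mul_self
  have hXh : Xᴴ = X := hda.1.posSemidef_sqrt.1
  have h2 : ((X*Q)ᴴ * (X*Q)).trace.re = 0 := by
    have e : (X*Q)ᴴ * (X*Q) = Q * (X * (X * Q)) := by
      rw [Matrix.conjTranspose_mul, hXh, hQh]
      simp only [Matrix.mul_assoc]
    have e2 : (Q * (X * (X * Q))).trace = (ρa * Q).trace := by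
      rw [Matrix.trace_mul_comm]
      congr 1
      rw [← hXX]
      simp only [Matrix.mul_assoc, hQQ]
    rw [e, e2]
    exact h
  have h3 : X * Q = 0 := trace_conjTranspose_mul_self_re_zero h2
  have h4 : ρa * Q = 0 := by
    rw [← hXX, Matrix.mul_assoc, h3, Matrix.mul_zero]
  have h5 : (1 - Q) * ρa = ρa := by
    have hQρa : Q * ρa = 0 := by
      have h6 := congrArg Matrix.conjTranspose h4
      rwa [Matrix.conjTranspose_mul, hQh, hda.1.1.eq, Matrix.conjTranspose_zero] at h6
    rw [Matrix.sub_mul, Matrix.one_mul, hQρa, sub_zero]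
  have h6 : ρa = ρ * (hermFC (fun t => if t = 0 then 0 else t⁻¹) hd.1.1 * ρa) := by
    rw [← Matrix.mul_assoc, rho_mul_pinv hd, h5]
  exact suppM_le_of_factor h6

lemma trace_pos_of_not_supp_le {ρa : Matrix (Fin n) (Fin n) ℂ} (hda : IsDensity ρa)
    (hd : IsDensity ρ) (h : ¬ suppM ρa ≤ suppM ρ) : 0 < (ρa * Qm hd).trace.re := by
  rcases (trace_psd_mul_re_nonneg hda.1 (Qm_psd hd)).eq_or_lt with h0 | h0
  · exact absurd (supp_le_of_trace_zero hda hd h0.symm) h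
  · exact h0
end Mat
end Stmt2
-- SECTION 8 : Loewner comparability from support inclusion
namespace Stmt2

variable {n : ℕ}

lemma compare_of_supp_le {ρa ρ : Matrix (Fin n) (Fin n) ℂ} (hda : IsDensity ρa)
    (hd : IsDensity ρ) (hsupp : suppM ρa ≤ suppM ρ) :
    ∃ c : ℝ, 0 < c ∧ ∀ N : Matrix (Fin n) (Fin n) ℂ, N.PosSemidef →
      (ρa * N).trace.re ≤ c * (ρ * N).trace.re := by
  classical
  have hev0 : ∀ i, 0 ≤ hd.1.1.eigenvalues i := hd.1.eigenvalues_nonneg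
  have hsum : ∑ i, hd.1.1.eigenvalues i = 1 := eigen_sum_one hd
  have hSne : (Finset.univ.filter (fun i => 0 < hd.1.1.eigenvalues i)).Nonempty := by
    by_contra hne
    rw [Finset.not_nonempty_iff_eq_empty, Finset.filter_eq_empty_iff] at hne
    have h0 : ∑ i, hd.1.1.eigenvalues i = 0 :=
      Finset.sum_eq_zero fun i _ => le_antisymm (not_lt.mp (hne (Finset.mem_univ i))) (hev0 i)
    rw [hsum] at h0
    norm_num at h0
  set ε := (Finset.univ.filter (fun i => 0 < hd.1.1.eigenvalues i)).inf' hSne hd.1.1.eigenvalues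
    with hεdef
  have hε : 0 < ε := by
    obtain ⟨i0, hi0, he⟩ := Finset.exists_mem_eq_inf' hSne hd.1.1.eigenvalues
    rw [hεdef, he]
    exact (Finset.mem_filter.mp hi0).2
  set Q := Qm hd with hQdef
  have hQρa : Q * ρa = 0 := mul_left_zero_of_supp hsupp (Qm_mul_rho hd)
  have hρaQ : ρa * Q = 0 := by
    have h6 := congrArg Matrix.conjTranspose hQρa
    rwa [Matrix.conjTranspose_mul, (Qm_herm hd).eq, hda.1.1.eq, Matrix.conjTranspose_zero] at h6
  have hPρa : (1 - Q) * ρa = ρa := by rw [Matrix.sub_mul, Matrix.one_mul, hQρa, sub_zero]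
  have hρaP : ρa * (1 - Q) = ρa := by rw [Matrix.mul_sub, Matrix.mul_one, hρaQ, sub_zero]
  have hQQ : Q * Q = Q := Qm_idem hd
  have hPP : (1 - Q) * (1 - Q) = (1 - Q) := by
    rw [Matrix.mul_sub, Matrix.mul_one, Matrix.sub_mul, Matrix.one_mul, hQQ]
    abel
  have hPherm : ((1 : Matrix (Fin n) (Fin n) ℂ) - Q).IsHermitian :=
    Matrix.isHermitian_one.sub (Qm_herm hd)
  -- first piece : ε⁻¹ • ρ - (1 - Q) is PSD
  have hM1 : ((ε⁻¹ : ℂ) • ρ - (1 - Q)).PosSemidef := by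
    have he1 : hermFC (fun t => ε⁻¹ * t) hd.1.1 = (ε⁻¹ : ℂ) • ρ := by
      have := FC_smul hd.1.1 ε⁻¹ (fun t => t)
      rwa [FC_id, Complex.ofReal_inv] at this
    have he2 : hermFC (fun t => ε⁻¹ * t - (1 - (if t = 0 then 1 else 0))) hd.1.1
        = (ε⁻¹ : ℂ) • ρ - (1 - Q) := by
      rw [FC_sub, he1, oneSubQm_eq hd]
    rw [← he2]
    refine FC_psd _ _ fun i => ?_
    by_cases h : hd.1.1.eigenvalues i = 0
    · simp [h]
    · have hi : i ∈ Finset.univ.filter (fun i => 0 < hd.1.1.eigenvalues i) :=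
        Finset.mem_filter.mpr ⟨Finset.mem_univ i, lt_of_le_of_ne (hev0 i) (Ne.symm h)⟩
      have hle : ε ≤ hd.1.1.eigenvalues i := Finset.inf'_le _ hi
      have h1 : (1:ℝ) ≤ ε⁻¹ * hd.1.1.eigenvalues i := by
        calc (1:ℝ) = ε⁻¹ * ε := by rw [inv_mul_cancel₀ hε.ne']
          _ ≤ ε⁻¹ * hd.1.1.eigenvalues i := mul_le_mul_of_nonneg_left hle (by positivity)
      simp [h]
      linarith
  -- second piece : (1 - Q) - ρa is PSD
  have hM2 : (((1 : Matrix (Fin n) (Fin n) ℂ) - Q) - ρa).PosSemidef := by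
    refine Matrix.PosSemidef.of_dotProduct_mulVec_nonneg ?_ ?_
    · exact hPherm.sub hda.1.1
    · intro x
      have hid : (1 - Q) * ((1 : Matrix (Fin n) (Fin n) ℂ) - ρa) * (1 - Q) = (1 - Q) - ρa := by
        have e1 : (1 - Q) * ((1 : Matrix (Fin n) (Fin n) ℂ) - ρa) = (1 - Q) - ρa := by
          rw [Matrix.mul_sub, Matrix.mul_one, hPρa]
        rw [e1, Matrix.sub_mul, hPP, hρaP]
      have hq := (one_sub_rho_psd hda).dotProduct_mulVec_nonneg ((1 - Q) *ᵥ x)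
      rwa [quad_conj _ _ hPherm.eq, hid] at hq
  have hsum' : (((ε⁻¹:ℂ) • ρ - (1 - Q)) + ((1 - Q) - ρa)) = (ε⁻¹:ℂ) • ρ - ρa :=
    sub_add_sub_cancel _ _ _
  have hD : ((ε⁻¹:ℂ) • ρ - ρa).PosSemidef := hsum' ▸ hM1.add hM2
  refine ⟨ε⁻¹, by positivity, fun N hN => ?_⟩
  have h0 := trace_psd_mul_nonneg hD hN
  have hexp : ((ε⁻¹:ℂ) • ρ - ρa) * N = (ε⁻¹:ℂ) • (ρ * N) - ρa * N := by
    rw [Matrix.sub_mul, Matrix.smul_mul]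
  rw [hexp, Matrix.trace_sub, Matrix.trace_smul] at h0
  have h1 := (Complex.le_def.mp h0).1
  rw [smul_eq_mul, ← Complex.ofReal_inv] at h1
  simp only [Complex.zero_re, Complex.sub_re, Complex.mul_re, Complex.ofReal_re,
    Complex.ofReal_im, zero_mul, sub_zero] at h1
  linarith

end Stmt2
-- SECTION 9 : Dfmin bounds
namespace Stmt2

variable {f : ℝ → EReal} {n : ℕ}

lemma povm_sum_trace {ρ : Matrix (Fin n) (Fin n) ℂ} (hd : IsDensity ρ) {m : ℕ}
    {M : Fin m → Matrix (Fin n) (Fin n) ℂ} (hM : IsPOVM M) :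
    ∑ x, (ρ * M x).trace.re = 1 := by
  calc ∑ x, (ρ * M x).trace.re = (∑ x, (ρ * M x).trace).re := (Complex.re_sum _ _).symm
    _ = ((ρ * ∑ x, M x).trace).re := by rw [Matrix.mul_sum, Matrix.trace_sum]
    _ = ((ρ * 1).trace).re := by rw [hM.2]
    _ = 1 := by rw [Matrix.mul_one, hd.2, Complex.one_re]

lemma dfmin_le_of_pointwise (hf : NiceF f) {ρ1 ρ2 : Matrix (Fin n) (Fin n) ℂ}
    (h1 : IsDensity ρ1) (h2 : IsDensity ρ2) (A B : ℝ)
    (hpt : ∀ N : Matrix (Fin n) (Fin n) ℂ, N.PosSemidef →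
      gfun f ((ρ1*N).trace.re) ((ρ2*N).trace.re)
        ≤ ((A * (ρ2*N).trace.re + B * (ρ1*N).trace.re : ℝ) : EReal)) :
    Dfmin f ρ1 ρ2 ≤ ((A + B : ℝ) : EReal) := by
  rw [Dfmin]
  refine iSup_le fun m => iSup_le fun M => iSup_le fun hM => ?_
  have hsum : ∑ x, gfun f ((ρ1*M x).trace.re) ((ρ2*M x).trace.re)
      ≤ ∑ x, ((A * (ρ2*M x).trace.re + B * (ρ1*M x).trace.re : ℝ) : EReal) :=
    Finset.sum_le_sum fun x _ => hpt (M x) (hM.1 x)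
  refine hsum.trans ?_
  have hcoe : ∑ x, ((A * (ρ2*M x).trace.re + B * (ρ1*M x).trace.re : ℝ) : EReal)
      = ((∑ x, (A * (ρ2*M x).trace.re + B * (ρ1*M x).trace.re) : ℝ) : EReal) :=
    (map_sum (⟨⟨Real.toEReal, EReal.coe_zero⟩, EReal.coe_add⟩ : ℝ →+ EReal) _ _).symm
  rw [hcoe, EReal.coe_le_coe_iff, Finset.sum_add_distrib, ← Finset.mul_sum, ← Finset.mul_sum,
    povm_sum_trace h2 hM, povm_sum_trace h1 hM, mul_one, mul_one]

lemma dfmin_lt_top_of_pointwise (hf : NiceF f) {ρ1 ρ2 : Matrix (Fin n) (Fin n) ℂ}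
    (h1 : IsDensity ρ1) (h2 : IsDensity ρ2) (A B : ℝ)
    (hpt : ∀ N : Matrix (Fin n) (Fin n) ℂ, N.PosSemidef →
      gfun f ((ρ1*N).trace.re) ((ρ2*N).trace.re)
        ≤ ((A * (ρ2*N).trace.re + B * (ρ1*N).trace.re : ℝ) : EReal)) :
    Dfmin f ρ1 ρ2 < ⊤ :=
  lt_of_le_of_lt (dfmin_le_of_pointwise hf h1 h2 A B hpt) (EReal.coe_lt_top _)

lemma isPOVM_pair {Q : Matrix (Fin n) (Fin n) ℂ} (hQ : Q.PosSemidef)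
    (hQ' : ((1 : Matrix (Fin n) (Fin n) ℂ) - Q).PosSemidef) :
    IsPOVM (![Q, 1 - Q]) := by
  constructor
  · intro x
    fin_cases x
    · simpa using hQ
    · simpa using hQ'
  · rw [Fin.sum_univ_two]
    simp

lemma dfmin_ge_pair (f : ℝ → EReal) (ρ1 ρ2 : Matrix (Fin n) (Fin n) ℂ)
    {W : Fin 2 → Matrix (Fin n) (Fin n) ℂ} (hW : IsPOVM W) :
    (∑ x, gfun f ((ρ1 * W x).trace.re) ((ρ2 * W x).trace.re)) ≤ Dfmin f ρ1 ρ2 := by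
  rw [Dfmin]
  exact le_iSup_of_le 2 (le_iSup_of_le W (le_iSup_of_le hW le_rfl))

lemma dfmin_top_of_not_linG (hf : NiceF f) {ρ1 ρ2 : Matrix (Fin n) (Fin n) ℂ}
    (h1 : IsDensity ρ1) (h2 : IsDensity ρ2)
    (hsupp : ¬ suppM ρ1 ≤ suppM ρ2) (hnl : ¬ LinG f) : Dfmin f ρ1 ρ2 = ⊤ := by
  have hW := isPOVM_pair (Qm_psd h2) (oneSubQm_psd h2)
  have hp1 : 0 < (ρ1 * Qm h2).trace.re := trace_pos_of_not_supp_le h1 h2 hsupp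
  have hq1 : (ρ2 * Qm h2).trace.re = 0 := trace_rho_Qm h2
  have hle := dfmin_ge_pair f ρ1 ρ2 hW
  rw [Fin.sum_univ_two] at hle
  simp only [Matrix.cons_val_zero, Matrix.cons_val_one, Matrix.head_cons] at hle
  rw [hq1, gfun_pos_zero_top hf hnl hp1] at hle
  have hnb : gfun f ((ρ1*(1 - Qm h2)).trace.re) ((ρ2*(1 - Qm h2)).trace.re) ≠ ⊥ :=
    gfun_ne_bot hf (trace_psd_mul_re_nonneg h1.1 (oneSubQm_psd h2))
      (trace_psd_mul_re_nonneg h2.1 (oneSubQm_psd h2))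
  rw [EReal.top_add_of_ne_bot hnb] at hle
  exact top_le_iff.mp hle

lemma dfmin_top_of_f0_top (hf : NiceF f) {ρ1 ρ2 : Matrix (Fin n) (Fin n) ℂ}
    (h1 : IsDensity ρ1) (h2 : IsDensity ρ2)
    (hsupp : ¬ suppM ρ2 ≤ suppM ρ1) (h0 : f 0 = ⊤) : Dfmin f ρ1 ρ2 = ⊤ := by
  have hW := isPOVM_pair (Qm_psd h1) (oneSubQm_psd h1)
  have hq1 : 0 < (ρ2 * Qm h1).trace.re := trace_pos_of_not_supp_le h2 h1 hsupp
  have hp1 : (ρ1 * Qm h1).trace.re = 0 := trace_rho_Qm h1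
  have hle := dfmin_ge_pair f ρ1 ρ2 hW
  rw [Fin.sum_univ_two] at hle
  simp only [Matrix.cons_val_zero, Matrix.cons_val_one, Matrix.head_cons] at hle
  have htop : gfun f ((ρ1 * Qm h1).trace.re) ((ρ2 * Qm h1).trace.re) = ⊤ := by
    rw [hp1, gfun_zero_pos hq1, h0, EReal.coe_mul_top_of_pos hq1]
  rw [htop] at hle
  have hnb : gfun f ((ρ1*(1 - Qm h1)).trace.re) ((ρ2*(1 - Qm h1)).trace.re) ≠ ⊥ :=
    gfun_ne_bot hf (trace_psd_mul_re_nonneg h1.1 (oneSubQm_psd h1))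
      (trace_psd_mul_re_nonneg h2.1 (oneSubQm_psd h1))
  rw [EReal.top_add_of_ne_bot hnb] at hle
  exact top_le_iff.mp hle

end Stmt2
open Stmt2 in
/-- finiteness of `D_f^min` in terms of the supports of the two states. -/
theorem stmt_2 (f : ℝ → EReal) (hf : NiceF f) {n : ℕ}
    (ρ1 ρ2 : Matrix (Fin n) (Fin n) ℂ) (h1 : IsDensity ρ1) (h2 : IsDensity ρ2) :
    (suppM ρ1 = suppM ρ2 → Dfmin f ρ1 ρ2 < ⊤) ∧
    (¬ suppM ρ1 ≤ suppM ρ2 → ¬ suppM ρ2 ≤ suppM ρ1 →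
      (Dfmin f ρ1 ρ2 < ⊤ ↔ ConjBddBelow f ∧ ConjDomBddAbove f)) ∧
    (suppM ρ1 < suppM ρ2 → (Dfmin f ρ1 ρ2 < ⊤ ↔ ConjBddBelow f)) ∧
    (suppM ρ2 < suppM ρ1 → (Dfmin f ρ1 ρ2 < ⊤ ↔ ConjDomBddAbove f)) := by
  refine ⟨?_, ?_, ?_, ?_⟩
  · -- (a) equal supports
    intro heq
    obtain ⟨c, hc, hcomp⟩ := compare_of_supp_le h1 h2 heq.le
    obtain ⟨c', hc', hcomp'⟩ := compare_of_supp_le h2 h1 heq.ge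
    refine dfmin_lt_top_of_pointwise hf h1 h2 (max (max (FR f (1/c')) (FR f c)) 0) 0 fun N hN => ?_
    rw [zero_mul, add_zero]
    exact pt_a hf hc hc'
      (trace_psd_mul_re_nonneg h1.1 hN) (trace_psd_mul_re_nonneg h2.1 hN)
      (hcomp N hN) (hcomp' N hN)
  · -- (b) incomparable supports
    intro h12 h21
    constructor
    · intro hfin
      have h0 : f 0 ≠ ⊤ := by
        intro h0top
        rw [dfmin_top_of_f0_top hf h1 h2 h21 h0top] at hfin
        exact lt_irrefl _ hfin
      have hlin : LinG f := by
        by_contra hnl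
        rw [dfmin_top_of_not_linG hf h1 h2 h12 hnl] at hfin
        exact lt_irrefl _ hfin
      exact ⟨conjBddBelow_of_f0 hf h0, conjDomBddAbove_of_linG hf hlin⟩
    · rintro ⟨hb, hd⟩
      have h0 : f 0 ≠ ⊤ := fun h0top => not_conjBddBelow hf h0top hb
      obtain ⟨K, hK⟩ := linG_of_conjDomBddAbove hf hd
      refine dfmin_lt_top_of_pointwise hf h1 h2
        (max (max (FR f 0) (FR f 1)) 0 + |FR f 1| + |K|) (|K|) fun N hN => ?_
      exact pt_b hf h0 hK
        (trace_psd_mul_re_nonneg h1.1 hN) (trace_psd_mul_re_nonneg h2.1 hN)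
  · -- (c) supp ρ1 ⊊ supp ρ2
    intro hlt
    constructor
    · intro hfin
      have h0 : f 0 ≠ ⊤ := by
        intro h0top
        rw [dfmin_top_of_f0_top hf h1 h2 hlt.not_ge h0top] at hfin
        exact lt_irrefl _ hfin
      exact conjBddBelow_of_f0 hf h0
    · intro hb
      have h0 : f 0 ≠ ⊤ := fun h0top => not_conjBddBelow hf h0top hb
      obtain ⟨c, hc, hcomp⟩ := compare_of_supp_le h1 h2 hlt.le
      refine dfmin_lt_top_of_pointwise hf h1 h2 (max (max (FR f 0) (FR f c)) 0) 0 fun N hN => ?_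
      rw [zero_mul, add_zero]
      exact pt_c hf h0 hc
        (trace_psd_mul_re_nonneg h1.1 hN) (trace_psd_mul_re_nonneg h2.1 hN) (hcomp N hN)
  · -- (d) supp ρ2 ⊊ supp ρ1
    intro hlt
    constructor
    · intro hfin
      have hlin : LinG f := by
        by_contra hnl
        rw [dfmin_top_of_not_linG hf h1 h2 hlt.not_ge hnl] at hfin
        exact lt_irrefl _ hfin
      exact conjDomBddAbove_of_linG hf hlin
    · intro hd
      obtain ⟨K, hK⟩ := linG_of_conjDomBddAbove hf hd
      obtain ⟨c, hc, hcomp⟩ := compare_of_supp_le h2 h1 hlt.le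
      refine dfmin_lt_top_of_pointwise hf h1 h2
        (max (max (FR f (1/c)) (FR f 1)) 0 + |FR f 1| + |K|) (|K|) fun N hN => ?_
      exact pt_d hf hK hc
        (trace_psd_mul_re_nonneg h1.1 hN) (trace_psd_mul_re_nonneg h2.1 hN) (hcomp N hN)
end
end

section
/- Let D^Q assign to each pair of density matrices of any common finite size a value in ℝ ∪ {+∞}, and suppose: (i) whenever ρ1 and ρ2 commute and (p_i), (q_i) are their eigenvalues with respect to a common orthonormal eigenbasis, D^Q(ρ1‖ρ2) = Σ_i g(p_i, q_i); (ii) D^Q(Λ(ρ1)‖Λ(ρ2)) ≤ D^Q(ρ1‖ρ2) for every completely positive trace-preserving linear map Λ between matrix algebras. Then D_f^min(ρ1‖ρ2) ≤ D^Q(ρ1‖ρ2) for all density matrices ρ1, ρ2 of the same size. -/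
open Filter Matrix
open scoped ComplexOrder
open scoped BigOperators

noncomputable section

attribute [local instance] Classical.propDecidable

/-- The blockwise extension `Λ ⊗ id_k` of a linear map on matrices. -/
def cpExt {n m : ℕ} (Λ : Matrix (Fin n) (Fin n) ℂ →ₗ[ℂ] Matrix (Fin m) (Fin m) ℂ) (k : ℕ)
    (M : Matrix (Fin n × Fin k) (Fin n × Fin k) ℂ) :
    Matrix (Fin m × Fin k) (Fin m × Fin k) ℂ :=
  Matrix.of fun p q => Λ (Matrix.of fun i j => M (i, p.2) (j, q.2)) p.1 q.1

/-- Completely positive trace preserving linear maps between matrix algebras. -/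
def IsCPTP {n m : ℕ} (Λ : Matrix (Fin n) (Fin n) ℂ →ₗ[ℂ] Matrix (Fin m) (Fin m) ℂ) : Prop :=
  (∀ A, (Λ A).trace = A.trace) ∧
  ∀ (k : ℕ) (M : Matrix (Fin n × Fin k) (Fin n × Fin k) ℂ),
    M.PosSemidef → (cpExt Λ k M).PosSemidef

/-- `D^Q` coincides with the classical f-divergence on commuting pairs of density
matrices (i.e. pairs that are simultaneously unitarily diagonalizable with
eigenvalue lists `p`, `q` w.r.t. a common orthonormal eigenbasis). -/
def AgreesOnCommuting (f : ℝ → EReal)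
    (DQ : (k : ℕ) → Matrix (Fin k) (Fin k) ℂ → Matrix (Fin k) (Fin k) ℂ → EReal) : Prop :=
  ∀ (k : ℕ) (U : Matrix.unitaryGroup (Fin k) ℂ) (p q : Fin k → ℝ),
    (∀ i, 0 ≤ p i) → (∀ i, 0 ≤ q i) → ∑ i, p i = 1 → ∑ i, q i = 1 →
    DQ k ((U : Matrix (Fin k) (Fin k) ℂ) * Matrix.diagonal (fun i => ((p i : ℝ) : ℂ)) *
            star (U : Matrix (Fin k) (Fin k) ℂ))
         ((U : Matrix (Fin k) (Fin k) ℂ) * Matrix.diagonal (fun i => ((q i : ℝ) : ℂ)) *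
            star (U : Matrix (Fin k) (Fin k) ℂ))
      = ∑ i, gfun f (p i) (q i)

/-- `D^Q` is monotone non-increasing under CPTP maps (on density matrices). -/
def CPTPMonotone
    (DQ : (k : ℕ) → Matrix (Fin k) (Fin k) ℂ → Matrix (Fin k) (Fin k) ℂ → EReal) : Prop :=
  ∀ (n m : ℕ) (Λ : Matrix (Fin n) (Fin n) ℂ →ₗ[ℂ] Matrix (Fin m) (Fin m) ℂ),
    IsCPTP Λ → ∀ ρ1 ρ2 : Matrix (Fin n) (Fin n) ℂ, IsDensity ρ1 → IsDensity ρ2 →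
    DQ m (Λ ρ1) (Λ ρ2) ≤ DQ n ρ1 ρ2


/-! ### Auxiliary lemmas for the proof -/

lemma sum_swap5 {A B I J L : Type*} [Fintype A] [Fintype B] [Fintype I] [Fintype J] [Fintype L]
    {M : Type*} [AddCommMonoid M] (F : A → B → I → J → L → M) :
    ∑ a, ∑ b, ∑ i, ∑ j, ∑ l, F a b i j l = ∑ l, ∑ i, ∑ a, ∑ j, ∑ b, F a b i j l := by
  calc ∑ a, ∑ b, ∑ i, ∑ j, ∑ l, F a b i j l
      = ∑ a, ∑ b, ∑ i, ∑ l, ∑ j, F a b i j l :=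
        Finset.sum_congr rfl fun _ _ => Finset.sum_congr rfl fun _ _ =>
          Finset.sum_congr rfl fun _ _ => Finset.sum_comm
    _ = ∑ a, ∑ b, ∑ l, ∑ i, ∑ j, F a b i j l :=
        Finset.sum_congr rfl fun _ _ => Finset.sum_congr rfl fun _ _ => Finset.sum_comm
    _ = ∑ a, ∑ l, ∑ b, ∑ i, ∑ j, F a b i j l :=
        Finset.sum_congr rfl fun _ _ => Finset.sum_comm
    _ = ∑ l, ∑ a, ∑ b, ∑ i, ∑ j, F a b i j l := Finset.sum_comm
    _ = ∑ l, ∑ a, ∑ i, ∑ b, ∑ j, F a b i j l :=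
        Finset.sum_congr rfl fun _ _ => Finset.sum_congr rfl fun _ _ => Finset.sum_comm
    _ = ∑ l, ∑ i, ∑ a, ∑ j, ∑ b, F a b i j l := by
        refine Finset.sum_congr rfl fun l _ => ?_
        rw [Finset.sum_comm]
        exact Finset.sum_congr rfl fun _ _ => Finset.sum_congr rfl fun _ _ => Finset.sum_comm

open scoped MatrixOrder in
lemma psd_eq_conjTranspose_mul_self {k : Type*} [Fintype k] [DecidableEq k]
    {B : Matrix k k ℂ} (hB : B.PosSemidef) : ∃ C : Matrix k k ℂ, B = Cᴴ * C := by
  obtain ⟨C, hC⟩ := CStarAlgebra.nonneg_iff_eq_star_mul_self.mp hB.nonneg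
  exact ⟨C, hC⟩

lemma psd_trace_nonneg {k : ℕ} {A : Matrix (Fin k) (Fin k) ℂ} (hA : A.PosSemidef) :
    0 ≤ A.trace := by
  rw [Matrix.trace]
  refine Finset.sum_nonneg fun i _ => ?_
  have := hA.dotProduct_mulVec_nonneg (Pi.single i 1)
  simpa [dotProduct, Matrix.mulVec, Pi.single_apply] using this

lemma psd_mul_trace_nonneg {k : ℕ} {A B : Matrix (Fin k) (Fin k) ℂ}
    (hA : A.PosSemidef) (hB : B.PosSemidef) : 0 ≤ (A * B).trace := by
  obtain ⟨C, rfl⟩ := psd_eq_conjTranspose_mul_self hB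
  calc (0:ℂ) ≤ (C * A * Cᴴ).trace := psd_trace_nonneg (hA.mul_mul_conjTranspose_same C)
    _ = (A * (Cᴴ * C)).trace := by
        rw [Matrix.mul_assoc, Matrix.trace_mul_comm, Matrix.mul_assoc]

/-- The measurement CPTP map associated to a POVM. -/
def measMap {n m : ℕ} (M : Fin m → Matrix (Fin n) (Fin n) ℂ) :
    Matrix (Fin n) (Fin n) ℂ →ₗ[ℂ] Matrix (Fin m) (Fin m) ℂ where
  toFun ρ := Matrix.diagonal fun x => (ρ * M x).trace
  map_add' ρ σ := by
    rw [Matrix.diagonal_add]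
    congr 1; funext x
    simp [Matrix.add_mul]
  map_smul' c ρ := by
    ext i j
    simp [Matrix.diagonal_apply, Matrix.smul_mul, mul_ite, Matrix.smul_apply]

lemma measMap_apply {n m : ℕ} (M : Fin m → Matrix (Fin n) (Fin n) ℂ) (ρ) :
    measMap M ρ = Matrix.diagonal fun x => (ρ * M x).trace := rfl

lemma measMap_trace {n m : ℕ} (M : Fin m → Matrix (Fin n) (Fin n) ℂ)
    (hM : ∑ x, M x = 1) (ρ : Matrix (Fin n) (Fin n) ℂ) :
    (measMap M ρ).trace = ρ.trace := by
  rw [measMap_apply, Matrix.trace_diagonal, ← Matrix.trace_sum, ← Finset.mul_sum, hM,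
    Matrix.mul_one]

lemma cpExt_measMap_apply {n m k : ℕ} (M : Fin m → Matrix (Fin n) (Fin n) ℂ)
    (P : Matrix (Fin n × Fin k) (Fin n × Fin k) ℂ) (p q : Fin m × Fin k) :
    cpExt (measMap M) k P p q =
      if p.1 = q.1 then ∑ i, ∑ j, P (i, p.2) (j, q.2) * M p.1 j i else 0 := by
  show (Matrix.diagonal fun x => ((Matrix.of fun i j => P (i, p.2) (j, q.2)) * M x).trace) p.1 q.1
      = _
  rw [Matrix.diagonal_apply]
  rcases eq_or_ne p.1 q.1 with h | h
  · rw [if_pos h, if_pos h]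
    simp only [Matrix.trace, Matrix.diag, Matrix.mul_apply, Matrix.of_apply]
  · rw [if_neg h, if_neg h]

lemma cpExt_measMap_posSemidef {n m : ℕ} {M : Fin m → Matrix (Fin n) (Fin n) ℂ}
    (hM : ∀ x, (M x).PosSemidef) (k : ℕ)
    {P : Matrix (Fin n × Fin k) (Fin n × Fin k) ℂ} (hP : P.PosSemidef) :
    (cpExt (measMap M) k P).PosSemidef := by
  choose C hC using fun x => psd_eq_conjTranspose_mul_self (hM x)
  have hPs : ∀ a b, star (P a b) = P b a := fun a b => by
    rw [← Matrix.conjTranspose_apply, hP.1]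
  have hMs : ∀ x i j, star (M x i j) = M x j i := fun x i j => by
    rw [← Matrix.conjTranspose_apply, (hM x).1]
  have hMC : ∀ x j i, M x j i = ∑ l, star (C x l j) * C x l i := by
    intro x j i
    rw [hC x, Matrix.mul_apply]
    rfl
  refine Matrix.PosSemidef.of_dotProduct_mulVec_nonneg ?_ ?_
  · ext p q
    rw [Matrix.conjTranspose_apply, cpExt_measMap_apply, cpExt_measMap_apply]
    obtain ⟨x, a⟩ := p
    obtain ⟨y, b⟩ := q
    rcases eq_or_ne x y with h | h
    · subst h
      rw [if_pos rfl, if_pos rfl]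
      calc star (∑ i, ∑ j, P (i, b) (j, a) * M x j i)
          = ∑ i, ∑ j, P (j, a) (i, b) * M x i j := by
            rw [star_sum]
            refine Finset.sum_congr rfl fun i _ => ?_
            rw [star_sum]
            refine Finset.sum_congr rfl fun j _ => ?_
            rw [star_mul', hPs, hMs]
        _ = ∑ j, ∑ i, P (j, a) (i, b) * M x i j := Finset.sum_comm
    · rw [if_neg (Ne.symm h), if_neg h, star_zero]
  · intro v
    set w : Fin m → Fin n → Fin n × Fin k → ℂ :=
      fun x l ia => star (C x l ia.1) * v (x, ia.2) with hw
    have key : dotProduct (star v) (cpExt (measMap M) k P *ᵥ v)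
        = ∑ x, ∑ l, dotProduct (star (w x l)) (P *ᵥ (w x l)) := by
      simp only [dotProduct, Matrix.mulVec, hw, Fintype.sum_prod_type,
        cpExt_measMap_apply, Pi.star_apply]
      refine Finset.sum_congr rfl fun x _ => ?_
      have step1 : ∀ a : Fin k,
          (∑ y : Fin m, ∑ b : Fin k,
            (if x = y then ∑ i, ∑ j, P (i,a) (j,b) * M x j i else 0) * v (y,b))
          = ∑ b : Fin k, ∑ i, ∑ j, P (i,a) (j,b) * M x j i * v (x,b) := by
        intro a
        rw [Finset.sum_comm]
        refine Finset.sum_congr rfl fun b _ => ?_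
        simp only [ite_mul, zero_mul, Finset.sum_ite_eq, Finset.mem_univ, if_true,
          Finset.sum_mul]
      simp only [step1]
      simp only [hMC, star_mul', star_star, Finset.mul_sum, Finset.sum_mul]
      rw [sum_swap5]
      refine Finset.sum_congr rfl fun l _ => Finset.sum_congr rfl fun i _ =>
        Finset.sum_congr rfl fun a _ => Finset.sum_congr rfl fun j _ =>
        Finset.sum_congr rfl fun b _ => ?_
      ring
    rw [key]
    exact Finset.sum_nonneg fun x _ => Finset.sum_nonneg fun l _ => hP.dotProduct_mulVec_nonneg (w x l)

/-- `D_f^min` is the least quantum extension of the f-divergence that is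
monotone under CPTP maps. -/
theorem stmt_3 (f : ℝ → EReal) (hf : NiceF f)
    (DQ : (k : ℕ) → Matrix (Fin k) (Fin k) ℂ → Matrix (Fin k) (Fin k) ℂ → EReal)
    (hcomm : AgreesOnCommuting f DQ) (hmono : CPTPMonotone DQ)
    {n : ℕ} (ρ1 ρ2 : Matrix (Fin n) (Fin n) ℂ)
    (h1 : IsDensity ρ1) (h2 : IsDensity ρ2) :
    Dfmin f ρ1 ρ2 ≤ DQ n ρ1 ρ2 := by
  refine iSup_le fun m => iSup_le fun M => iSup_le fun hM => ?_
  have htr : ∀ (ρ : Matrix (Fin n) (Fin n) ℂ), ρ.PosSemidef → ∀ x,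
      ((ρ * M x).trace = (((ρ * M x).trace.re : ℝ) : ℂ) ∧ 0 ≤ (ρ * M x).trace.re) := by
    intro ρ hρ x
    have h0 := psd_mul_trace_nonneg hρ (hM.1 x)
    obtain ⟨hre, him⟩ := Complex.nonneg_iff.mp h0
    exact ⟨Complex.ext rfl (by simp [← him]), hre⟩
  have hsum : ∀ (ρ : Matrix (Fin n) (Fin n) ℂ), ρ.trace = 1 →
      ∑ x, (ρ * M x).trace.re = 1 := by
    intro ρ hρ
    have h : ∑ x, (ρ * M x).trace = 1 := by
      rw [← Matrix.trace_sum, ← Finset.mul_sum, hM.2, Matrix.mul_one, hρ]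
    have := congrArg Complex.re h
    rw [Complex.re_sum] at this
    simpa using this
  have hcptp : IsCPTP (measMap M) :=
    ⟨measMap_trace M hM.2, fun k P hP => cpExt_measMap_posSemidef hM.1 k hP⟩
  have hdiag : ∀ (ρ : Matrix (Fin n) (Fin n) ℂ), ρ.PosSemidef →
      measMap M ρ = ((1 : Matrix.unitaryGroup (Fin m) ℂ) : Matrix (Fin m) (Fin m) ℂ) *
        Matrix.diagonal (fun x => (((ρ * M x).trace.re : ℝ) : ℂ)) *
        star ((1 : Matrix.unitaryGroup (Fin m) ℂ) : Matrix (Fin m) (Fin m) ℂ) := by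
    intro ρ hρ
    rw [Matrix.UnitaryGroup.one_val, star_one, Matrix.mul_one, Matrix.one_mul, measMap_apply,
      funext fun x => (htr ρ hρ x).1]
  have hval : DQ m (measMap M ρ1) (measMap M ρ2)
      = ∑ x, gfun f ((ρ1 * M x).trace.re) ((ρ2 * M x).trace.re) := by
    rw [hdiag ρ1 h1.1, hdiag ρ2 h2.1]
    exact hcomm m 1 (fun x => (ρ1 * M x).trace.re) (fun x => (ρ2 * M x).trace.re)
      (fun x => (htr ρ1 h1.1 x).2) (fun x => (htr ρ2 h2.1 x).2)
      (hsum ρ1 h1.2) (hsum ρ2 h2.2)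
  calc ∑ x, gfun f ((ρ1 * M x).trace.re) ((ρ2 * M x).trace.re)
      = DQ m (measMap M ρ1) (measMap M ρ2) := hval.symm
    _ ≤ DQ n ρ1 ρ2 := hmono n m (measMap M) hcptp ρ1 ρ2 h1 h2
end
end

section
/- On the cone of pairs (ρ1, ρ2) of positive semidefinite matrices of a fixed finite size, the function (ρ1, ρ2) ↦ D_f^min(ρ1‖ρ2) ∈ ℝ ∪ {+∞} is jointly convex (D_f^min(tρ1+(1−t)σ1 ‖ tρ2+(1−t)σ2) ≤ t·D_f^min(ρ1‖ρ2) + (1−t)·D_f^min(σ1‖σ2) for all t ∈ [0,1]), positively homogeneous (D_f^min(a·ρ1‖a·ρ2) = a·D_f^min(ρ1‖ρ2) for all a ≥ 0), nowhere equal to −∞, and lower semicontinuous. -/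
open Filter Matrix
open scoped ComplexOrder
open scoped BigOperators

noncomputable section

attribute [local instance] Classical.propDecidable

open scoped Topology
open Set

section util
variable {f : ℝ → EReal}

lemma ereal_exists_real {a : EReal} (h1 : a ≠ ⊥) (h2 : a ≠ ⊤) : ∃ r : ℝ, a = (r : EReal) :=
  ⟨a.toReal, (EReal.coe_toReal h2 h1).symm⟩

lemma NiceF.freal (hf : NiceF f) {x : ℝ} (hx : x ∈ edom f) : ∃ r : ℝ, f x = (r : EReal) :=
  ereal_exists_real (hf.ne_bot x) hx.ne

lemma NiceF.fpos_real (hf : NiceF f) {x : ℝ} (hx : 0 < x) : ∃ r : ℝ, f x = (r : EReal) :=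
  hf.freal (hf.dom hx)


lemma ereal_coe_mul_ne_bot {t : ℝ} (ht : 0 < t) {x : EReal} (hx : x ≠ ⊥) :
    (t : EReal) * x ≠ ⊥ := by
  have htpos' : (0 : EReal) < (t : EReal) := by exact_mod_cast ht
  induction x using EReal.rec with
  | bot => exact absurd rfl hx
  | coe r => rw [← EReal.coe_mul]; exact EReal.coe_ne_bot _
  | top => rw [EReal.mul_top_of_pos htpos']; simp

/-- distributivity of nonneg real scalar over EReal sums of non-bot elements -/
lemma ereal_mul_add {t : ℝ} (ht : 0 ≤ t) {x y : EReal} (hx : x ≠ ⊥) (hy : y ≠ ⊥) :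
    (t : EReal) * (x + y) = (t : EReal) * x + (t : EReal) * y := by
  rcases eq_or_lt_of_le ht with h0 | htpos
  · simp [← h0]
  have htpos' : (0 : EReal) < (t : EReal) := by exact_mod_cast htpos
  rcases eq_or_ne x ⊤ with rfl | hxt
  · rw [EReal.top_add_of_ne_bot hy, EReal.mul_top_of_pos htpos',
      EReal.top_add_of_ne_bot (ereal_coe_mul_ne_bot htpos hy)]
  · rcases eq_or_ne y ⊤ with rfl | hyt
    · rw [EReal.add_top_of_ne_bot hx, EReal.mul_top_of_pos htpos',
        EReal.add_top_of_ne_bot (ereal_coe_mul_ne_bot htpos hx)]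
    · obtain ⟨rx, rfl⟩ := ereal_exists_real hx hxt
      obtain ⟨ry, rfl⟩ := ereal_exists_real hy hyt
      rw [← EReal.coe_add, ← EReal.coe_mul, ← EReal.coe_mul, ← EReal.coe_mul, ← EReal.coe_add,
        mul_add]

lemma ereal_sum_ne_bot {ι : Type*} (s : Finset ι) (g : ι → EReal) (hg : ∀ i ∈ s, g i ≠ ⊥) :
    ∑ i ∈ s, g i ≠ ⊥ := by
  classical
  induction s using Finset.induction_on with
  | empty => simp
  | @insert a s' hx ih =>
    rw [Finset.sum_insert hx]
    simp only [ne_eq, EReal.add_eq_bot_iff, not_or]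
    exact ⟨hg a (Finset.mem_insert_self a s'), ih fun i hi => hg i (Finset.mem_insert_of_mem hi)⟩

lemma ereal_mul_sum {ι : Type*} (s : Finset ι) (g : ι → EReal) (hg : ∀ i ∈ s, g i ≠ ⊥)
    {t : ℝ} (ht : 0 ≤ t) : (t : EReal) * ∑ i ∈ s, g i = ∑ i ∈ s, (t : EReal) * g i := by
  classical
  induction s using Finset.induction_on with
  | empty => simp
  | @insert a s' hx ih =>
    rw [Finset.sum_insert hx, Finset.sum_insert hx,
      ereal_mul_add ht (hg a (Finset.mem_insert_self a s'))
        (ereal_sum_ne_bot s' g fun i hi => hg i (Finset.mem_insert_of_mem hi)),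
      ih fun i hi => hg i (Finset.mem_insert_of_mem hi)]

end util

section helper
variable {α : Type*}

/-- Key multiplicative lower-semicontinuity helper. -/
lemma ev_lt_mul {l : Filter α} {v : α → ℝ} {b : ℝ} (hv : Filter.Tendsto v l (𝓝 b)) (hb : 0 < b)
    {w : α → EReal} {F : EReal} (hF : F ≠ ⊥)
    (hw : ∀ r : ℝ, (r : EReal) < F → ∀ᶠ z in l, (r : EReal) < w z)
    {c : EReal} (hc : c < (b : EReal) * F) :
    ∀ᶠ z in l, c < ((v z : ℝ) : EReal) * w z := by
  -- find a good real r with r < F and c < b * r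
  obtain ⟨r, hrF, hcr⟩ : ∃ r : ℝ, (r : EReal) < F ∧ c < ((b * r : ℝ) : EReal) := by
    induction F using EReal.rec with
    | bot => exact absurd rfl hF
    | top =>
      rcases eq_or_ne c ⊥ with rfl | hcb
      · exact ⟨0, by simp, bot_lt_iff_ne_bot.2 (EReal.coe_ne_bot _)⟩
      · have hct : c ≠ ⊤ := hc.ne_top
        obtain ⟨rc, rfl⟩ := ereal_exists_real hcb hct
        refine ⟨(rc + 1) / b, EReal.coe_lt_top _, ?_⟩
        rw [mul_div_cancel₀ _ hb.ne']
        exact_mod_cast lt_add_one rc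
    | coe rF =>
      rcases eq_or_ne c ⊥ with rfl | hcb
      · exact ⟨rF - 1, by exact_mod_cast sub_one_lt rF,
          bot_lt_iff_ne_bot.2 (EReal.coe_ne_bot _)⟩
      · have hct : c ≠ ⊤ := hc.ne_top
        obtain ⟨rc, rfl⟩ := ereal_exists_real hcb hct
        have hlt : rc < b * rF := by rw [← EReal.coe_mul] at hc; exact_mod_cast hc
        refine ⟨rF - (b * rF - rc) / (2 * b), ?_, ?_⟩
        · exact_mod_cast sub_lt_self rF (div_pos (by linarith) (by linarith))
        · have key : rc < b * (rF - (b * rF - rc) / (2 * b)) := by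
            have heq : b * (rF - (b * rF - rc) / (2 * b)) = b * rF - (b * rF - rc) / 2 := by
              field_simp
            rw [heq]; linarith
          exact_mod_cast key
  have hvr : Filter.Tendsto (fun z => ((v z * r : ℝ) : EReal)) l (𝓝 ((b * r : ℝ) : EReal)) :=
    EReal.tendsto_coe.2 (hv.mul_const r)
  have h1 : ∀ᶠ z in l, c < ((v z * r : ℝ) : EReal) :=
    hvr.eventually (isOpen_Ioi.eventually_mem (by simpa using hcr))
  have h2 : ∀ᶠ z in l, (r : EReal) < w z := hw r hrF
  have h3 : ∀ᶠ z in l, 0 < v z := hv.eventually (eventually_gt_nhds hb)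
  filter_upwards [h1, h2, h3] with z hz1 hz2 hz3
  calc c < ((v z * r : ℝ) : EReal) := hz1
  _ = ((v z : ℝ) : EReal) * (r : EReal) := EReal.coe_mul _ _
  _ ≤ ((v z : ℝ) : EReal) * w z :=
      mul_le_mul_of_nonneg_left hz2.le (by exact_mod_cast hz3.le)

end helper

section key
variable {f : ℝ → EReal}

lemma NiceF.conv_real (hf : NiceF f) {x y a b : ℝ} (ha : 0 ≤ a) (hb : 0 ≤ b) (hab : a + b = 1)
    {rx ry rz : ℝ} (hx : f x = (rx : EReal)) (hy : f y = (ry : EReal))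
    (hz : f (a*x + b*y) = (rz : EReal)) : rz ≤ a * rx + b * ry := by
  have h := hf.convex x y a b ha hb hab
  rw [hx, hy, hz, ← EReal.coe_mul, ← EReal.coe_mul, ← EReal.coe_add] at h
  exact_mod_cast h

lemma NiceF.key_tendsto (hf : NiceF f) {x : ℝ} (hx : x ∈ edom f) :
    ∃ L : EReal, L ≠ ⊥ ∧
      Filter.Tendsto (fun u : ℝ => ((u : ℝ) : EReal) * f (x / u)) (𝓝[>] (0:ℝ)) (𝓝 L) := by
  by_cases hdom : ∀ u : ℝ, 0 < u → f (x / u) ≠ ⊤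
  · -- real-valued case
    have hfr : ∀ u : ℝ, 0 < u → f (x / u) = (((f (x/u)).toReal : ℝ) : EReal) := fun u hu =>
      (EReal.coe_toReal (hdom u hu) (hf.ne_bot _)).symm
    set F : ℝ → ℝ := fun z => (f z).toReal with hF
    set H : ℝ → ℝ := fun u => u * F (x / u) with hH
    have hcoeH : ∀ u : ℝ, 0 < u → ((u : ℝ) : EReal) * f (x / u) = ((H u : ℝ) : EReal) := by
      intro u hu
      rw [hfr u hu, ← EReal.coe_mul]
    -- H is convex on Ioi 0
    have hHconv : ConvexOn ℝ (Set.Ioi (0:ℝ)) H := by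
      refine ⟨convex_Ioi 0, ?_⟩
      rintro u (hu : 0 < u) v (hv : 0 < v) a b ha hb hab
      rcases eq_or_lt_of_le ha with rfl|ha'
      · simp only [zero_add] at hab; subst hab; simp
      rcases eq_or_lt_of_le hb with rfl|hb'
      · simp only [add_zero] at hab; subst hab; simp
      have hW : 0 < a*u + b*v := by positivity
      have hw1 : (a*u/(a*u+b*v)) + (b*v/(a*u+b*v)) = 1 := by field_simp
      have hz0 : f ((a*u/(a*u+b*v)) * (x/u) + (b*v/(a*u+b*v)) * (x/v))
          = ((F (x/(a*u+b*v)) : ℝ) : EReal) := by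
        have e1 : (a*u/(a*u+b*v)) * (x/u) = a*(x/(a*u+b*v)) := by field_simp
        have e2 : (b*v/(a*u+b*v)) * (x/v) = b*(x/(a*u+b*v)) := by field_simp
        have harg : (a*u/(a*u+b*v)) * (x/u) + (b*v/(a*u+b*v)) * (x/v) = x / (a*u+b*v) := by
          rw [e1, e2, ← add_mul, hab, one_mul]
        rw [harg]
        exact hfr _ hW
      have hkey := hf.conv_real (by positivity : (0:ℝ) ≤ a*u/(a*u+b*v))
        (by positivity : (0:ℝ) ≤ b*v/(a*u+b*v)) hw1 (hfr u hu) (hfr v hv) hz0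
      have h2 := mul_le_mul_of_nonneg_left hkey hW.le
      have heq : (a*u+b*v) * ((a*u/(a*u+b*v)) * F (x/u) + (b*v/(a*u+b*v)) * F (x/v))
          = a*(u*F (x/u)) + b*(v*F (x/v)) := by
        field_simp
      rw [heq] at h2
      simpa [hH, smul_eq_mul] using h2
    -- slope function
    set φ : ℝ → ℝ := fun u => (H u - H 1) / (u - 1) with hφ
    have hφmono : MonotoneOn φ (Set.Ioo (0:ℝ) 1) := by
      intro u hu v hv huv
      exact hHconv.secant_mono (Set.mem_Ioi.2 one_pos) hu.1 hv.1
        (ne_of_lt hu.2) (ne_of_lt hv.2) huv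
    have hHid : ∀ u ∈ Set.Ioo (0:ℝ) 1, H u = H 1 + (u - 1) * φ u := by
      intro u hu
      have : u - 1 ≠ 0 := by have := hu.2; intro h; linarith [sub_eq_zero.1 h]
      simp only [hφ]; rw [mul_div_cancel₀ _ this]; ring
    by_cases hbdd : BddBelow (φ '' Set.Ioo (0:ℝ) 1)
    · -- finite limit
      have hne : (Set.Ioo (0:ℝ) 1).Nonempty := ⟨1/2, by norm_num⟩
      have htφ : Filter.Tendsto φ (𝓝[>] (0:ℝ)) (𝓝 (sInf (φ '' Set.Ioo (0:ℝ) 1))) :=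
        MonotoneOn.tendsto_nhdsWithin_Ioo_right hne hφmono hbdd
      set σ := sInf (φ '' Set.Ioo (0:ℝ) 1)
      have htH : Filter.Tendsto H (𝓝[>] (0:ℝ)) (𝓝 (H 1 - σ)) := by
        have h1 : Filter.Tendsto (fun u : ℝ => H 1 + (u - 1) * φ u) (𝓝[>] (0:ℝ))
            (𝓝 (H 1 + (0 - 1) * σ)) := by
          apply Filter.Tendsto.const_add
          exact (Filter.Tendsto.sub_const (tendsto_nhdsWithin_of_tendsto_nhds tendsto_id) 1).mul htφ
        have : H 1 + (0 - 1) * σ = H 1 - σ := by ring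
        rw [this] at h1
        refine h1.congr' ?_
        filter_upwards [Ioo_mem_nhdsGT_of_mem (by norm_num : (0:ℝ) ∈ Set.Ico (0:ℝ) 1)] with u hu
        exact (hHid u hu).symm
      refine ⟨((H 1 - σ : ℝ) : EReal), EReal.coe_ne_bot _, ?_⟩
      have h2 : Filter.Tendsto (fun u : ℝ => ((H u : ℝ) : EReal)) (𝓝[>] (0:ℝ))
          (𝓝 ((H 1 - σ : ℝ) : EReal)) := EReal.tendsto_coe.2 htH
      refine h2.congr' ?_
      filter_upwards [self_mem_nhdsWithin] with u hu
      exact (hcoeH u hu).symm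
    · -- limit is ⊤
      refine ⟨⊤, by simp, ?_⟩
      rw [EReal.tendsto_nhds_top_iff_real]
      intro r
      set b0 : ℝ := min (-1) (2*(H 1 - r)) with hb0
      have hb0neg : b0 ≤ -1 := min_le_left _ _
      have hb0le : b0 ≤ 2*(H 1 - r) := min_le_right _ _
      obtain ⟨y, ⟨u1, hu1, rfl⟩, hy⟩ : ∃ y ∈ φ '' Set.Ioo (0:ℝ) 1, y < b0 := by
        rcases not_bddBelow_iff.1 hbdd b0 with ⟨y, hy1, hy2⟩
        exact ⟨y, hy1, hy2⟩
      filter_upwards [Ioo_mem_nhdsGT_of_mem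
        ((Set.mem_Ico).2 ⟨le_rfl, lt_min hu1.1 one_half_pos⟩ :
          (0:ℝ) ∈ Set.Ico (0:ℝ) (min u1 (1/2)))] with u hu
      have hu0 : 0 < u := hu.1
      have huu1 : u < u1 := lt_of_lt_of_le hu.2 (min_le_left _ _)
      have huh : u ≤ 1/2 := le_of_lt (lt_of_lt_of_le hu.2 (min_le_right _ _))
      have huIoo : u ∈ Set.Ioo (0:ℝ) 1 := ⟨hu0, by linarith⟩
      have hmono := hφmono huIoo hu1 huu1.le
      have hid := hHid u huIoo
      have hφub : φ u < b0 := hmono.trans_lt hy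
      have p1 : (u-1)*b0 < (u-1)*(φ u) := mul_lt_mul_of_neg_left hφub (by linarith)
      have p2 : (-1/2 : ℝ)*b0 ≤ (u-1)*b0 :=
        mul_le_mul_of_nonpos_right (by linarith) (by linarith)
      have hru : r < H u := by rw [hid]; nlinarith
      rw [hcoeH u hu0]
      exact_mod_cast hru
  · -- f (x/·) is ⊤ near 0
    push_neg at hdom
    obtain ⟨u0, hu0, hft⟩ := hdom
    have htop : ∀ u : ℝ, 0 < u → u < u0 → f (x / u) = ⊤ := by
      intro u hu huu0
      by_contra hne
      -- then x < 0 and we derive a contradiction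
      have hxneg : x < 0 := by
        rcases lt_trichotomy x 0 with h|h|h
        · exact h
        · exfalso; apply hne; rw [h, zero_div]; rw [h, zero_div] at hft; exact hft
        · exact absurd hft (hf.dom (div_pos h hu0) : f (x/u0) < ⊤).ne
      obtain ⟨r, hr⟩ := ereal_exists_real (hf.ne_bot (x/u)) hne
      obtain ⟨r1, hr1⟩ := hf.fpos_real one_pos
      have hlt : x/u < x/u0 :=
        (div_lt_div_iff₀ hu hu0).2 (mul_lt_mul_of_neg_left huu0 hxneg)
      have hlt2 : x/u0 < 1 := by
        have : x/u0 < 0 := div_neg_of_neg_of_pos hxneg hu0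
        linarith
      set a : ℝ := (x/u0 - 1)/(x/u - 1) with ha
      have hden : x/u - 1 < 0 := by linarith
      have ha0 : 0 < a := div_pos_of_neg_of_neg (by linarith) hden
      have ha1 : a < 1 := by
        rw [div_lt_one_of_neg hden]
        linarith
      have hcancel : a * (x/u - 1) = x/u0 - 1 := by
        rw [ha]; exact div_mul_cancel₀ _ hden.ne
      have harg : a * (x/u) + (1-a) * 1 = x/u0 := by linear_combination hcancel
      have hconv := hf.convex (x/u) 1 a (1-a) ha0.le (by linarith) (by ring)
      rw [harg, hr, hr1, ← EReal.coe_mul, ← EReal.coe_mul, ← EReal.coe_add, hft] at hconv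
      exact (EReal.coe_lt_top _).not_ge hconv
    refine ⟨⊤, by simp, ?_⟩
    have hev : ∀ᶠ u in 𝓝[>] (0:ℝ), ((u : ℝ) : EReal) * f (x / u) = ⊤ := by
      filter_upwards [Ioo_mem_nhdsGT_of_mem (Set.mem_Ico.2 ⟨le_rfl, hu0⟩)] with u hu
      rw [htop u hu.1 hu.2, EReal.mul_top_of_pos (by exact_mod_cast hu.1)]
    exact Filter.Tendsto.congr'
      (show (fun _ : ℝ => (⊤ : EReal)) =ᶠ[𝓝[>] (0:ℝ)] _ by
        filter_upwards [hev] with u hu; exact hu.symm)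
      tendsto_const_nhds

end key

section gfacts
variable {f : ℝ → EReal}

lemma gfun_zero_zero : gfun f 0 0 = 0 := if_pos ⟨rfl, rfl⟩

lemma gfun_pos_y (hf : NiceF f) {x y : ℝ} (hx : 0 ≤ x) (hy : 0 < y) :
    gfun f x y = ((y : ℝ) : EReal) * f (x / y) := by
  rcases eq_or_lt_of_le hx with rfl|hx'
  · by_cases h0 : (0:ℝ) ∈ edom f
    · rw [gfun, if_neg (by rintro ⟨-, h⟩; exact hy.ne' h), if_pos ⟨h0, hy⟩]
    · rw [gfun, if_neg (by rintro ⟨-, h⟩; exact hy.ne' h), if_neg (by rintro ⟨h, -⟩; exact h0 h),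
        if_neg (by rintro ⟨h, -⟩; exact h0 h)]
      have hf0 : f (0/y) = ⊤ := by
        rw [zero_div]; by_contra h; exact h0 (lt_top_iff_ne_top.2 h)
      rw [hf0, EReal.mul_top_of_pos (by exact_mod_cast hy)]
  · rw [gfun, if_neg (by rintro ⟨h, -⟩; exact hx'.ne' h), if_pos ⟨hf.dom hx', hy⟩]

lemma gfun_tendsto (hf : NiceF f) {x : ℝ} (hx : 0 < x) :
    gfun f x 0 ≠ ⊥ ∧ Filter.Tendsto (fun u : ℝ => ((u : ℝ) : EReal) * f (x / u))
      (𝓝[>] (0:ℝ)) (𝓝 (gfun f x 0)) := by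
  obtain ⟨L, hL, hT⟩ := hf.key_tendsto (hf.dom hx)
  have hg : gfun f x 0 = L := by
    rw [gfun, if_neg (by rintro ⟨h, -⟩; exact hx.ne' h),
      if_neg (by rintro ⟨-, h⟩; exact lt_irrefl 0 h), if_pos ⟨hf.dom hx, rfl⟩]
    exact hT.limUnder_eq
  rw [hg]; exact ⟨hL, hT⟩

lemma gfun_ne_bot (hf : NiceF f) (x y : ℝ) : gfun f x y ≠ ⊥ := by
  rw [gfun]
  split_ifs with h1 h2 h3
  · simp
  · exact ereal_coe_mul_ne_bot h2.2 (hf.ne_bot _)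
  · obtain ⟨L, hL, hT⟩ := hf.key_tendsto h3.1
    rw [hT.limUnder_eq]; exact hL
  · simp

lemma gfun_tendsto' (hf : NiceF f) {x : ℝ} (hx : 0 < x) :
    Filter.Tendsto (fun u : ℝ => gfun f x u) (𝓝[>] (0:ℝ)) (𝓝 (gfun f x 0)) := by
  refine (gfun_tendsto hf hx).2.congr' ?_
  filter_upwards [self_mem_nhdsWithin] with u hu
  exact (gfun_pos_y hf hx.le hu).symm

lemma ereal_tendsto_const_mul {α : Type*} {l : Filter α} {h : α → EReal} {L : EReal} (hL : L ≠ ⊥)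
    {a : ℝ} (ha : 0 < a) (hT : Filter.Tendsto h l (𝓝 L)) :
    Filter.Tendsto (fun z => (a : EReal) * h z) l (𝓝 ((a : EReal) * L)) := by
  induction L using EReal.rec with
  | bot => exact absurd rfl hL
  | top =>
    rw [EReal.mul_top_of_pos (show (0:EReal) < (a:EReal) by exact_mod_cast ha)]
    rw [EReal.tendsto_nhds_top_iff_real] at hT ⊢
    intro r
    filter_upwards [hT ((r+1)/a)] with z hz
    have h1 : ((a * ((r+1)/a) : ℝ) : EReal) ≤ (a:EReal) * h z := by
      rw [EReal.coe_mul]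
      exact mul_le_mul_of_nonneg_left hz.le (by exact_mod_cast ha.le)
    have h2 : a * ((r+1)/a) = r + 1 := by field_simp
    rw [h2] at h1
    exact lt_of_lt_of_le (by exact_mod_cast lt_add_one r) h1
  | coe rL =>
    have hev : ∀ᶠ z in l, h z ∈ Set.Ioo ((rL - 1 : ℝ) : EReal) ((rL + 1 : ℝ) : EReal) :=
      hT.eventually (isOpen_Ioo.eventually_mem
        ⟨by exact_mod_cast (by linarith : rL - 1 < rL),
         by exact_mod_cast (by linarith : rL < rL + 1)⟩)
    have hreal : Filter.Tendsto (fun z => (h z).toReal) l (𝓝 rL) := by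
      have := (EReal.tendsto_toReal (by simp) (by simp)).comp hT
      simpa [Function.comp_def] using this
    have hco : Filter.Tendsto (fun z => ((a * (h z).toReal : ℝ) : EReal)) l
        (𝓝 ((a * rL : ℝ) : EReal)) := EReal.tendsto_coe.2 (hreal.const_mul a)
    rw [EReal.coe_mul] at hco
    refine hco.congr' ?_
    filter_upwards [hev] with z hz
    have h1 : h z ≠ ⊥ := by
      intro hc
      rw [hc] at hz
      exact absurd hz.1 (by simp)
    have h2 : h z ≠ ⊤ := hz.2.ne_top
    rw [EReal.coe_mul, EReal.coe_toReal h2 h1]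

lemma gfun_homog (hf : NiceF f) {a : ℝ} (ha : 0 < a) {x y : ℝ} (hx : 0 ≤ x) (hy : 0 ≤ y) :
    gfun f (a*x) (a*y) = (a : EReal) * gfun f x y := by
  rcases eq_or_lt_of_le hy with rfl|hy'
  · rcases eq_or_lt_of_le hx with rfl|hx'
    · rw [mul_zero, gfun_zero_zero, mul_zero]
    · rw [mul_zero]
      obtain ⟨hne, hT⟩ := gfun_tendsto hf hx'
      obtain ⟨hne2, hT2⟩ := gfun_tendsto hf (by positivity : 0 < a*x)
      have hmap : Filter.Tendsto (fun u : ℝ => u / a) (𝓝[>] (0:ℝ)) (𝓝[>] (0:ℝ)) := by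
        rw [tendsto_nhdsWithin_iff]
        constructor
        · have : Filter.Tendsto (fun u : ℝ => u / a) (𝓝 (0:ℝ)) (𝓝 ((0:ℝ)/a)) :=
            (continuous_id.div_const a).tendsto 0
          rw [zero_div] at this
          exact this.mono_left nhdsWithin_le_nhds
        · filter_upwards [self_mem_nhdsWithin] with u hu
          exact div_pos hu ha
      have hT3 : Filter.Tendsto
          (fun u : ℝ => (a : EReal) * ((((u/a : ℝ)) : EReal) * f (x/(u/a))))
          (𝓝[>] (0:ℝ)) (𝓝 ((a : EReal) * gfun f x 0)) :=
        (ereal_tendsto_const_mul hne ha hT).comp hmap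
      have hEq : ∀ᶠ u in 𝓝[>] (0:ℝ),
          (a : EReal) * ((((u/a : ℝ)) : EReal) * f (x/(u/a))) = ((u : ℝ) : EReal) * f ((a*x)/u) := by
        filter_upwards [self_mem_nhdsWithin] with u hu
        have e1 : x/(u/a) = (a*x)/u := by
          rw [div_div_eq_mul_div]; ring_nf
        have e2 : (a : EReal) * (((u/a : ℝ)) : EReal) = ((u : ℝ) : EReal) := by
          rw [← EReal.coe_mul]
          congr 1
          field_simp
        rw [e1, ← mul_assoc, e2]
      exact tendsto_nhds_unique hT2 (hT3.congr' hEq)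
  · have hay : 0 < a*y := by positivity
    rw [gfun_pos_y hf (by positivity) hay, gfun_pos_y hf hx hy']
    have e1 : (a*x)/(a*y) = x/y := mul_div_mul_left x y ha.ne'
    rw [e1, EReal.coe_mul, mul_assoc]

end gfacts

section gconv
variable {f : ℝ → EReal}

lemma ereal_tendsto_add_coe {α : Type*} {l : Filter α} {h k : α → EReal} {s t : ℝ}
    (hh : Filter.Tendsto h l (𝓝 ((s : ℝ) : EReal))) (hk : Filter.Tendsto k l (𝓝 ((t : ℝ) : EReal))) :
    Filter.Tendsto (fun z => h z + k z) l (𝓝 (((s + t : ℝ) : ℝ) : EReal)) := by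
  have hev1 : ∀ᶠ z in l, h z ∈ Set.Ioo ((s-1:ℝ):EReal) ((s+1:ℝ):EReal) :=
    hh.eventually (isOpen_Ioo.eventually_mem
      ⟨by exact_mod_cast (by linarith : s-1 < s), by exact_mod_cast (by linarith : s < s+1)⟩)
  have hev2 : ∀ᶠ z in l, k z ∈ Set.Ioo ((t-1:ℝ):EReal) ((t+1:ℝ):EReal) :=
    hk.eventually (isOpen_Ioo.eventually_mem
      ⟨by exact_mod_cast (by linarith : t-1 < t), by exact_mod_cast (by linarith : t < t+1)⟩)
  have hrt1 : Filter.Tendsto (fun z => (h z).toReal) l (𝓝 s) := by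
    have := (EReal.tendsto_toReal (by simp) (by simp)).comp hh
    simpa [Function.comp_def] using this
  have hrt2 : Filter.Tendsto (fun z => (k z).toReal) l (𝓝 t) := by
    have := (EReal.tendsto_toReal (by simp) (by simp)).comp hk
    simpa [Function.comp_def] using this
  have hsum : Filter.Tendsto (fun z => (((h z).toReal + (k z).toReal : ℝ) : EReal)) l
      (𝓝 ((s+t : ℝ):EReal)) := EReal.tendsto_coe.2 (hrt1.add hrt2)
  refine hsum.congr' ?_
  filter_upwards [hev1, hev2] with z hz1 hz2
  have e1 : h z ≠ ⊥ := by intro hcon; rw [hcon] at hz1; exact absurd hz1.1 (by simp)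
  have e2 : h z ≠ ⊤ := hz1.2.ne_top
  have e3 : k z ≠ ⊥ := by intro hcon; rw [hcon] at hz2; exact absurd hz2.1 (by simp)
  have e4 : k z ≠ ⊤ := hz2.2.ne_top
  rw [EReal.coe_add, EReal.coe_toReal e2 e1, EReal.coe_toReal e4 e3]

lemma gfun_lsc_y (hf : NiceF f) {x Y : ℝ} (hx : 0 ≤ x) (hY : 0 < Y)
    {α : Type*} {l : Filter α} {v : α → ℝ} (hv : Filter.Tendsto v l (𝓝 Y))
    {c : EReal} (hc : c < gfun f x Y) : ∀ᶠ z in l, c < gfun f x (v z) := by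
  have hvpos : ∀ᶠ z in l, 0 < v z := hv.eventually (eventually_gt_nhds hY)
  by_cases hxe : x = 0 ∧ (0:ℝ) ∉ edom f
  · obtain ⟨rfl, h0⟩ := hxe
    filter_upwards [hvpos] with z hz
    have htop : gfun f 0 (v z) = ⊤ := by
      rw [gfun_pos_y hf le_rfl hz]
      have hf0 : f (0/(v z)) = ⊤ := by
        rw [zero_div]; by_contra h; exact h0 (lt_top_iff_ne_top.2 h)
      rw [hf0, EReal.mul_top_of_pos (by exact_mod_cast hz)]
    rw [htop]
    exact lt_of_lt_of_le hc le_top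
  · have hF : f (x/Y) ≠ ⊥ := hf.ne_bot _
    rw [gfun_pos_y hf hx hY] at hc
    have hw : ∀ r : ℝ, (r:EReal) < f (x/Y) → ∀ᶠ z in l, (r:EReal) < f (x/(v z)) := by
      intro r hr
      have hdiv : Filter.Tendsto (fun z => x / (v z)) l (𝓝 (x/Y)) :=
        tendsto_const_nhds.div hv hY.ne'
      exact hdiv.eventually (hf.lsc (x/Y) r hr)
    filter_upwards [ev_lt_mul hv hY hF hw hc, hvpos] with z h1 h2
    rwa [gfun_pos_y hf hx h2]

lemma gfun_subadd_pos (hf : NiceF f) {x1 y1 x2 y2 : ℝ} (hx1 : 0 ≤ x1) (hx2 : 0 ≤ x2)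
    (hy1 : 0 < y1) (hy2 : 0 < y2) :
    gfun f (x1+x2) (y1+y2) ≤ gfun f x1 y1 + gfun f x2 y2 := by
  rcases eq_or_ne (gfun f x1 y1) ⊤ with h1|h1
  · rw [h1, EReal.top_add_of_ne_bot (gfun_ne_bot hf _ _)]; exact le_top
  rcases eq_or_ne (gfun f x2 y2) ⊤ with h2|h2
  · rw [h2, EReal.add_top_of_ne_bot (gfun_ne_bot hf _ _)]; exact le_top
  obtain ⟨r1, hr1⟩ := ereal_exists_real (gfun_ne_bot hf x1 y1) h1
  obtain ⟨r2, hr2⟩ := ereal_exists_real (gfun_ne_bot hf x2 y2) h2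
  have hg1 : gfun f x1 y1 = ((y1:ℝ):EReal) * f (x1/y1) := gfun_pos_y hf hx1 hy1
  have hg2 : gfun f x2 y2 = ((y2:ℝ):EReal) * f (x2/y2) := gfun_pos_y hf hx2 hy2
  have hf1top : f (x1/y1) ≠ ⊤ := by
    intro h
    rw [hg1, h, EReal.mul_top_of_pos (by exact_mod_cast hy1)] at h1
    exact h1 rfl
  have hf2top : f (x2/y2) ≠ ⊤ := by
    intro h
    rw [hg2, h, EReal.mul_top_of_pos (by exact_mod_cast hy2)] at h2
    exact h2 rfl
  obtain ⟨c1, hc1⟩ := ereal_exists_real (hf.ne_bot _) hf1top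
  obtain ⟨c2, hc2⟩ := ereal_exists_real (hf.ne_bot _) hf2top
  have hY : 0 < y1 + y2 := by linarith
  have hw1 : y1/(y1+y2) + y2/(y1+y2) = 1 := by field_simp
  have harg : (y1/(y1+y2)) * (x1/y1) + (y2/(y1+y2)) * (x2/y2) = (x1+x2)/(y1+y2) := by
    field_simp
  have hzlt := hf.convex (x1/y1) (x2/y2) (y1/(y1+y2)) (y2/(y1+y2))
    (div_nonneg hy1.le hY.le) (div_nonneg hy2.le hY.le) hw1
  rw [harg, hc1, hc2, ← EReal.coe_mul, ← EReal.coe_mul, ← EReal.coe_add] at hzlt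
  have htop : f ((x1+x2)/(y1+y2)) ≠ ⊤ := (lt_of_le_of_lt hzlt (EReal.coe_lt_top _)).ne
  obtain ⟨rz, hrz⟩ := ereal_exists_real (hf.ne_bot _) htop
  rw [hrz] at hzlt
  have hreal : rz ≤ y1/(y1+y2)*c1 + y2/(y1+y2)*c2 := by exact_mod_cast hzlt
  have hmul : (y1+y2) * rz ≤ y1*c1 + y2*c2 := by
    have hh := mul_le_mul_of_nonneg_left hreal hY.le
    calc (y1+y2)*rz ≤ (y1+y2) * (y1/(y1+y2)*c1 + y2/(y1+y2)*c2) := hh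
    _ = y1*c1 + y2*c2 := by field_simp
  have hr1' : r1 = y1 * c1 := by
    rw [hg1, hc1, ← EReal.coe_mul] at hr1
    exact (by exact_mod_cast hr1 : y1*c1 = r1).symm
  have hr2' : r2 = y2 * c2 := by
    rw [hg2, hc2, ← EReal.coe_mul] at hr2
    exact (by exact_mod_cast hr2 : y2*c2 = r2).symm
  rw [gfun_pos_y hf (add_nonneg hx1 hx2) hY, hrz, hr1, hr2, ← EReal.coe_mul,
    hr1', hr2', ← EReal.coe_add]
  exact_mod_cast hmul

lemma gfun_subadd_mix (hf : NiceF f) {x1 x2 y2 : ℝ} (hx1 : 0 ≤ x1) (hx2 : 0 ≤ x2)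
    (hy2 : 0 < y2) : gfun f (x1+x2) y2 ≤ gfun f x1 0 + gfun f x2 y2 := by
  rcases eq_or_lt_of_le hx1 with rfl|hx1'
  · rw [gfun_zero_zero, zero_add, zero_add]
  rcases eq_or_ne (gfun f x1 0) ⊤ with h1|h1
  · rw [h1, EReal.top_add_of_ne_bot (gfun_ne_bot hf _ _)]; exact le_top
  rcases eq_or_ne (gfun f x2 y2) ⊤ with h2|h2
  · rw [h2, EReal.add_top_of_ne_bot (gfun_ne_bot hf _ _)]; exact le_top
  obtain ⟨hb1, hT1⟩ := gfun_tendsto hf hx1'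
  obtain ⟨s1, hs1⟩ := ereal_exists_real hb1 h1
  obtain ⟨s2, hs2⟩ := ereal_exists_real (gfun_ne_bot hf x2 y2) h2
  by_contra hcon
  push_neg at hcon
  obtain ⟨c, hcR, hcL⟩ := exists_between hcon
  have hvten : Filter.Tendsto (fun u : ℝ => u + y2) (𝓝[>] (0:ℝ)) (𝓝 y2) := by
    have hh : Filter.Tendsto (fun u : ℝ => u + y2) (𝓝 (0:ℝ)) (𝓝 ((0:ℝ)+y2)) :=
      tendsto_id.add_const y2
    rw [zero_add] at hh
    exact hh.mono_left nhdsWithin_le_nhds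
  have hev1 : ∀ᶠ u in 𝓝[>] (0:ℝ), c < gfun f (x1+x2) (u + y2) :=
    gfun_lsc_y hf (add_nonneg hx1'.le hx2) hy2 hvten hcL
  have hpt : ∀ᶠ u in 𝓝[>] (0:ℝ),
      gfun f (x1+x2) (u + y2) ≤ gfun f x1 u + gfun f x2 y2 := by
    filter_upwards [self_mem_nhdsWithin] with u hu
    exact gfun_subadd_pos hf hx1'.le hx2 hu hy2
  have hRten : Filter.Tendsto (fun u : ℝ => gfun f x1 u + gfun f x2 y2) (𝓝[>] (0:ℝ))
      (𝓝 (((s1 + s2 : ℝ) : ℝ) : EReal)) := by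
    have ht1 : Filter.Tendsto (fun u : ℝ => gfun f x1 u) (𝓝[>] (0:ℝ)) (𝓝 ((s1:ℝ):EReal)) := by
      rw [← hs1]; exact gfun_tendsto' hf hx1'
    exact ereal_tendsto_add_coe ht1 (by rw [← hs2]; exact tendsto_const_nhds)
  have hcle : c ≤ (((s1 + s2 : ℝ) : ℝ) : EReal) := by
    refine ge_of_tendsto hRten ?_
    filter_upwards [hev1, hpt] with u hu1 hu2
    exact (lt_of_lt_of_le hu1 hu2).le
  rw [hs1, hs2, ← EReal.coe_add] at hcR
  exact absurd (lt_of_le_of_lt hcle hcR) (lt_irrefl c)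

lemma gfun_subadd (hf : NiceF f) {x1 y1 x2 y2 : ℝ} (hx1 : 0 ≤ x1) (hy1 : 0 ≤ y1)
    (hx2 : 0 ≤ x2) (hy2 : 0 ≤ y2) :
    gfun f (x1+x2) (y1+y2) ≤ gfun f x1 y1 + gfun f x2 y2 := by
  rcases eq_or_lt_of_le hy1 with rfl|hy1'
  · rcases eq_or_lt_of_le hy2 with rfl|hy2'
    · -- y1 = y2 = 0
      rcases eq_or_lt_of_le hx1 with rfl|hx1'
      · rw [gfun_zero_zero, zero_add, zero_add, zero_add]
      rcases eq_or_lt_of_le hx2 with rfl|hx2'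
      · rw [gfun_zero_zero, add_zero, add_zero, add_zero]
      rcases eq_or_ne (gfun f x1 0) ⊤ with h1|h1
      · rw [h1, EReal.top_add_of_ne_bot (gfun_ne_bot hf _ _)]; exact le_top
      rcases eq_or_ne (gfun f x2 0) ⊤ with h2|h2
      · rw [h2, EReal.add_top_of_ne_bot (gfun_ne_bot hf _ _)]; exact le_top
      obtain ⟨hb1, hT1⟩ := gfun_tendsto hf hx1'
      obtain ⟨hb2, hT2⟩ := gfun_tendsto hf hx2'
      obtain ⟨s1, hs1⟩ := ereal_exists_real hb1 h1
      obtain ⟨s2, hs2⟩ := ereal_exists_real hb2 h2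
      have hX : 0 < x1 + x2 := by linarith
      have hmap2 : Filter.Tendsto (fun u : ℝ => u + u) (𝓝[>] (0:ℝ)) (𝓝[>] (0:ℝ)) := by
        rw [tendsto_nhdsWithin_iff]
        constructor
        · have hh : Filter.Tendsto (fun u : ℝ => u + u) (𝓝 (0:ℝ)) (𝓝 ((0:ℝ)+0)) :=
            tendsto_id.add tendsto_id
          rw [add_zero] at hh
          exact hh.mono_left nhdsWithin_le_nhds
        · filter_upwards [self_mem_nhdsWithin] with u hu
          exact add_pos (Set.mem_Ioi.1 hu) (Set.mem_Ioi.1 hu)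
      have hTL : Filter.Tendsto (fun u : ℝ => gfun f (x1+x2) (u+u)) (𝓝[>] (0:ℝ))
          (𝓝 (gfun f (x1+x2) 0)) := (gfun_tendsto' hf hX).comp hmap2
      have hTR : Filter.Tendsto (fun u : ℝ => gfun f x1 u + gfun f x2 u) (𝓝[>] (0:ℝ))
          (𝓝 (((s1 + s2 : ℝ) : ℝ) : EReal)) := by
        have ht1 : Filter.Tendsto (fun u : ℝ => gfun f x1 u) (𝓝[>] (0:ℝ)) (𝓝 ((s1:ℝ):EReal)) := by
          rw [← hs1]; exact gfun_tendsto' hf hx1'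
        have ht2 : Filter.Tendsto (fun u : ℝ => gfun f x2 u) (𝓝[>] (0:ℝ)) (𝓝 ((s2:ℝ):EReal)) := by
          rw [← hs2]; exact gfun_tendsto' hf hx2'
        exact ereal_tendsto_add_coe ht1 ht2
      have hpt : ∀ᶠ u in 𝓝[>] (0:ℝ),
          gfun f (x1+x2) (u+u) ≤ gfun f x1 u + gfun f x2 u := by
        filter_upwards [self_mem_nhdsWithin] with u hu
        exact gfun_subadd_pos hf hx1'.le hx2'.le hu hu
      have hle := le_of_tendsto_of_tendsto hTL hTR hpt
      rw [add_zero, hs1, hs2, ← EReal.coe_add]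
      exact hle
    · -- y1 = 0, y2 > 0
      rw [zero_add]
      exact gfun_subadd_mix hf hx1 hx2 hy2'
  · rcases eq_or_lt_of_le hy2 with rfl|hy2'
    · -- y1 > 0, y2 = 0
      rw [add_zero, add_comm x1 x2, add_comm (gfun f x1 y1) (gfun f x2 0)]
      exact gfun_subadd_mix hf hx2 hx1 hy1'
    · exact gfun_subadd_pos hf hx1 hx2 hy1' hy2'

lemma gfun_convex (hf : NiceF f) {x1 y1 x2 y2 t : ℝ} (hx1 : 0 ≤ x1) (hy1 : 0 ≤ y1)
    (hx2 : 0 ≤ x2) (hy2 : 0 ≤ y2) (ht0 : 0 < t) (ht1 : t < 1) :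
    gfun f (t*x1 + (1-t)*x2) (t*y1 + (1-t)*y2) ≤
      (t : EReal) * gfun f x1 y1 + ((1-t : ℝ) : EReal) * gfun f x2 y2 := by
  have hs : (0:ℝ) < 1 - t := by linarith
  calc gfun f (t*x1 + (1-t)*x2) (t*y1 + (1-t)*y2)
      ≤ gfun f (t*x1) (t*y1) + gfun f ((1-t)*x2) ((1-t)*y2) :=
        gfun_subadd hf (by positivity) (by positivity) (by positivity) (by positivity)
    _ = (t : EReal) * gfun f x1 y1 + ((1-t : ℝ) : EReal) * gfun f x2 y2 := by
        rw [gfun_homog hf ht0 hx1 hy1, gfun_homog hf hs hx2 hy2]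

end gconv

section glsc
variable {f : ℝ → EReal}

lemma NiceF.minorant (hf : NiceF f) : ∃ A B : ℝ, ∀ x : ℝ, ((A*x + B : ℝ) : EReal) ≤ f x := by
  obtain ⟨f1, hf1⟩ := hf.fpos_real one_pos
  obtain ⟨f2, hf2⟩ := hf.fpos_real (by norm_num : (0:ℝ) < 2)
  obtain ⟨fq, hfq⟩ := hf.fpos_real (by norm_num : (0:ℝ) < 1/4)
  obtain ⟨fh, hfh⟩ := hf.fpos_real (by norm_num : (0:ℝ) < 1/2)
  refine ⟨f2 - f1, min (f1 - (f2-f1)) (min (f2 - 2*(f2-f1))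
    ((-7*(|fh|+|fq|)) - 2*|f2-f1|)), ?_⟩
  intro x
  rcases eq_or_ne (f x) ⊤ with hx|hx
  · rw [hx]; exact le_top
  obtain ⟨rx, hrx⟩ := ereal_exists_real (hf.ne_bot x) hx
  rw [hrx, EReal.coe_le_coe_iff]
  rcases le_or_gt x 1 with h1|h1
  · -- x ≤ 1
    have hd : 0 < 2 - x := by linarith
    have hw : (1/(2-x)) + ((1-x)/(2-x)) = 1 := by field_simp; ring
    have harg : (1/(2-x))*x + ((1-x)/(2-x))*2 = 1 := by field_simp; ring
    have hkey := hf.conv_real (by positivity : (0:ℝ) ≤ 1/(2-x))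
      (div_nonneg (by linarith) hd.le) hw hrx hf2 (by rw [harg]; exact hf1)
    have hm := mul_le_mul_of_nonneg_left hkey hd.le
    have he : (2-x)*((1/(2-x))*rx + ((1-x)/(2-x))*f2) = rx + (1-x)*f2 := by
      field_simp
    rw [he] at hm
    have hB : min (f1 - (f2-f1)) (min (f2 - 2*(f2-f1)) ((-7*(|fh|+|fq|)) - 2*|f2-f1|))
        ≤ f1 - (f2-f1) := min_le_left _ _
    nlinarith [hm, hB]
  rcases le_or_gt 2 x with h2|h2
  · -- x ≥ 2
    have hd : 0 < x - 1 := by linarith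
    have hw : ((x-2)/(x-1)) + (1/(x-1)) = 1 := by field_simp; ring
    have harg : ((x-2)/(x-1))*1 + (1/(x-1))*x = 2 := by field_simp; ring
    have hkey := hf.conv_real (div_nonneg (by linarith) hd.le)
      (by positivity : (0:ℝ) ≤ 1/(x-1)) hw hf1 hrx (by rw [harg]; exact hf2)
    have hm := mul_le_mul_of_nonneg_left hkey hd.le
    have he : (x-1)*(((x-2)/(x-1))*f1 + (1/(x-1))*rx) = (x-2)*f1 + rx := by
      field_simp
    rw [he] at hm
    have hB : min (f1 - (f2-f1)) (min (f2 - 2*(f2-f1)) ((-7*(|fh|+|fq|)) - 2*|f2-f1|))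
        ≤ f2 - 2*(f2-f1) := le_trans (min_le_right _ _) (min_le_left _ _)
    nlinarith [hm, hB]
  · -- 1 < x < 2
    have hd : (0:ℝ) < 4*x - 1 := by linarith
    have hb3 : 1/(4*x-1) ≤ 1/3 := one_div_le_one_div_of_le (by norm_num) (by linarith)
    have hb7 : 1/7 ≤ 1/(4*x-1) := one_div_le_one_div_of_le hd (by linarith)
    have hbpos : 0 < 1/(4*x-1) := by positivity
    have hw : (1 - 1/(4*x-1)) + (1/(4*x-1)) = 1 := by ring
    have harg : (1 - 1/(4*x-1))*(1/4) + (1/(4*x-1))*x = 1/2 := by field_simp; ring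
    have hkey := hf.conv_real (by linarith : (0:ℝ) ≤ 1 - 1/(4*x-1)) hbpos.le hw hfq hrx
      (by rw [harg]; exact hfh)
    -- fh ≤ (1 - 1/(4x-1)) * fq + (1/(4x-1)) * rx
    have haq : (1 - 1/(4*x-1))*fq ≤ |fq| := by
      calc (1 - 1/(4*x-1))*fq ≤ (1 - 1/(4*x-1))*|fq| :=
            mul_le_mul_of_nonneg_left (le_abs_self fq) (by linarith)
      _ ≤ 1*|fq| := mul_le_mul_of_nonneg_right (by linarith) (abs_nonneg _)
      _ = |fq| := one_mul _
    have h2' : -(|fh|+|fq|) ≤ (1/(4*x-1))*rx := by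
      have := neg_abs_le fh
      linarith
    have hsx : (f2-f1)*x ≤ 2*|f2-f1| := by
      calc (f2-f1)*x ≤ |f2-f1| * x := mul_le_mul_of_nonneg_right (le_abs_self _) (by linarith)
      _ ≤ |f2-f1| * 2 := mul_le_mul_of_nonneg_left (by linarith) (abs_nonneg _)
      _ = 2*|f2-f1| := mul_comm _ _
    have hB : min (f1 - (f2-f1)) (min (f2 - 2*(f2-f1)) ((-7*(|fh|+|fq|)) - 2*|f2-f1|))
        ≤ (-7*(|fh|+|fq|)) - 2*|f2-f1| := le_trans (min_le_right _ _) (min_le_right _ _)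
    rcases le_or_gt 0 rx with hrx0|hrx0
    · have habs : (0:ℝ) ≤ |fh|+|fq| := by positivity
      linarith
    · have h3 : ((1/(4*x-1)) - 1/7)*rx ≤ 0 :=
        mul_nonpos_of_nonneg_of_nonpos (by linarith) hrx0.le
      have hexp : ((1/(4*x-1)) - 1/7)*rx = (1/(4*x-1))*rx - (1/7)*rx := by ring
      rw [hexp] at h3
      have hrxge : -7*(|fh|+|fq|) ≤ rx := by linarith
      linarith

lemma gfun_lb (hf : NiceF f) {A B : ℝ} (hAB : ∀ x : ℝ, ((A*x + B : ℝ) : EReal) ≤ f x)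
    {x y : ℝ} (hx : 0 ≤ x) (hy : 0 ≤ y) : ((A*x + B*y : ℝ) : EReal) ≤ gfun f x y := by
  rcases eq_or_lt_of_le hy with rfl|hy'
  · rcases eq_or_lt_of_le hx with rfl|hx'
    · rw [gfun_zero_zero]
      norm_num
    · -- y = 0, x > 0 : limit bound
      obtain ⟨-, hT⟩ := gfun_tendsto hf hx'
      have hTlin : Filter.Tendsto (fun u : ℝ => ((A*x + B*u : ℝ) : EReal)) (𝓝[>] (0:ℝ))
          (𝓝 ((A*x + B*0 : ℝ) : EReal)) := by
        apply EReal.tendsto_coe.2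
        exact ((tendsto_const_nhds.add ((tendsto_id.const_mul B))).mono_left
          nhdsWithin_le_nhds : Filter.Tendsto (fun u : ℝ => A*x + B*u) (𝓝[>] (0:ℝ))
            (𝓝 (A*x + B*0)))
      have hpt : ∀ᶠ u in 𝓝[>] (0:ℝ),
          ((A*x + B*u : ℝ) : EReal) ≤ ((u : ℝ) : EReal) * f (x/u) := by
        filter_upwards [self_mem_nhdsWithin] with u hu
        have hu0 : u ≠ 0 := ne_of_gt hu
        have h1 : ((A*(x/u) + B : ℝ) : EReal) ≤ f (x/u) := hAB (x/u)
        have h2 := mul_le_mul_of_nonneg_left h1 (by exact_mod_cast hu.le :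
          (0:EReal) ≤ ((u:ℝ):EReal))
        rw [← EReal.coe_mul] at h2
        have he : u * (A*(x/u) + B) = A*x + B*u := by field_simp
        rwa [he] at h2
      have := le_of_tendsto_of_tendsto hTlin hT hpt
      rwa [mul_zero] at this ⊢
  · rw [gfun_pos_y hf hx hy']
    have h1 : ((A*(x/y) + B : ℝ) : EReal) ≤ f (x/y) := hAB (x/y)
    have h2 := mul_le_mul_of_nonneg_left h1 (by exact_mod_cast hy'.le :
      (0:EReal) ≤ ((y:ℝ):EReal))
    rw [← EReal.coe_mul] at h2
    have he : y * (A*(x/y) + B) = A*x + B*y := by field_simp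
    rwa [he] at h2

lemma gfun_lsc (hf : NiceF f) {a b : ℝ} (ha : 0 ≤ a) (hb : 0 ≤ b) {c : EReal}
    (hc : c < gfun f a b) :
    ∀ᶠ q in 𝓝[{q : ℝ×ℝ | 0 ≤ q.1 ∧ 0 ≤ q.2}] (a,b), c < gfun f q.1 q.2 := by
  set Q : Set (ℝ×ℝ) := {q : ℝ×ℝ | 0 ≤ q.1 ∧ 0 ≤ q.2} with hQ
  rcases eq_or_lt_of_le hb with rfl|hb'
  · rcases eq_or_lt_of_le ha with rfl|ha'
    · -- (0,0)
      rw [gfun_zero_zero] at hc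
      obtain ⟨A, B, hAB⟩ := hf.minorant
      have hlin : Filter.Tendsto (fun q : ℝ×ℝ => ((A*q.1 + B*q.2 : ℝ) : EReal)) (𝓝[Q] (0,0))
          (𝓝 ((A*0 + B*0 : ℝ) : EReal)) := by
        apply EReal.tendsto_coe.2
        exact ((continuous_const.mul continuous_fst).add
          ((continuous_const.mul continuous_snd))).continuousWithinAt
      have h0 : ((A*0 + B*0 : ℝ) : EReal) = (0 : EReal) := by norm_num
      rw [h0] at hlin
      filter_upwards [hlin.eventually (isOpen_Ioi.eventually_mem hc), self_mem_nhdsWithin]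
        with q h1 hq
      exact lt_of_lt_of_le h1 (gfun_lb hf hAB hq.1 hq.2)
    · -- b = 0, a > 0
      have hLb : gfun f a 0 ≠ ⊥ := (gfun_tendsto hf ha').1
      have hT : Filter.Tendsto (fun v => gfun f a v) (𝓝[>] (0:ℝ)) (𝓝 (gfun f a 0)) :=
        gfun_tendsto' hf ha'
      have hT0 : Filter.Tendsto (fun v => gfun f a v) (𝓝[Set.Ici (0:ℝ)] 0) (𝓝 (gfun f a 0)) := by
        have hIci : Set.Ici (0:ℝ) = insert 0 (Set.Ioi 0) := by
          ext z
          simp only [Set.mem_Ici, Set.mem_insert_iff, Set.mem_Ioi]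
          constructor
          · intro h; rcases eq_or_lt_of_le h with h|h; exacts [Or.inl h.symm, Or.inr h]
          · rintro (rfl|h); exacts [le_rfl, h.le]
        rw [hIci, nhdsWithin_insert, Filter.tendsto_sup]
        constructor
        · exact Filter.tendsto_pure_left.2 fun s hs => mem_of_mem_nhds hs
        · exact hT
      have hq1pos : ∀ᶠ q in 𝓝[Q] (a,(0:ℝ)), 0 < q.1 :=
        ((continuous_fst.tendsto _).mono_left nhdsWithin_le_nhds).eventually
          (eventually_gt_nhds ha')
      have hmapv : Filter.Tendsto (fun q : ℝ×ℝ => a * q.2 / q.1) (𝓝[Q] (a,(0:ℝ)))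
          (𝓝[Set.Ici (0:ℝ)] 0) := by
        rw [tendsto_nhdsWithin_iff]
        constructor
        · have h1 : Filter.Tendsto (fun q : ℝ×ℝ => a * q.2 / q.1) (𝓝 ((a,(0:ℝ)) : ℝ×ℝ))
              (𝓝 (a * 0 / a)) :=
            (tendsto_const_nhds.mul (continuous_snd.tendsto _)).div
              (continuous_fst.tendsto _) ha'.ne'
          rw [show a * (0:ℝ) / a = 0 by simp] at h1
          exact h1.mono_left nhdsWithin_le_nhds
        · filter_upwards [self_mem_nhdsWithin, hq1pos] with q hq hq1
          exact div_nonneg (mul_nonneg ha'.le hq.2) hq1.le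
      have hw := hT0.comp hmapv
      have hvten : Filter.Tendsto (fun q : ℝ×ℝ => q.1 / a) (𝓝[Q] (a,(0:ℝ))) (𝓝 1) := by
        have h1 : Filter.Tendsto (fun q : ℝ×ℝ => q.1 / a) (𝓝 ((a,(0:ℝ)) : ℝ×ℝ)) (𝓝 (a/a)) :=
          (continuous_fst.tendsto _).div_const a
        rw [div_self ha'.ne'] at h1
        exact h1.mono_left nhdsWithin_le_nhds
      have hwlsc : ∀ r : ℝ, (r:EReal) < gfun f a 0 →
          ∀ᶠ q in 𝓝[Q] (a,(0:ℝ)), (r:EReal) < gfun f a (a * q.2 / q.1) :=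
        fun r hr => hw.eventually (isOpen_Ioi.eventually_mem hr)
      have hone : c < ((1:ℝ):EReal) * gfun f a 0 := by
        rw [EReal.coe_one, one_mul]; exact hc
      filter_upwards [ev_lt_mul hvten one_pos hLb hwlsc hone, hq1pos, self_mem_nhdsWithin]
        with q h1 h2 hq
      have hid : gfun f q.1 q.2 = ((q.1/a : ℝ):EReal) * gfun f a (a * q.2 / q.1) := by
        have hq10 : q.1 ≠ 0 := ne_of_gt h2
        have ha0 : a ≠ 0 := ne_of_gt ha'
        have hh := gfun_homog hf (show 0 < q.1/a by positivity) ha'.le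
          (show 0 ≤ a * q.2 / q.1 from div_nonneg (mul_nonneg ha'.le hq.2) h2.le)
        rw [show (q.1/a)*a = q.1 by field_simp,
          show (q.1/a)*(a * q.2 / q.1) = q.2 by field_simp] at hh
        exact hh
      rw [hid]
      exact h1
  · -- b > 0
    have hbF : f (a/b) ≠ ⊥ := hf.ne_bot _
    rw [gfun_pos_y hf ha hb'] at hc
    have hvten : Filter.Tendsto (fun q : ℝ×ℝ => q.2) (𝓝[Q] (a,b)) (𝓝 b) :=
      (continuous_snd.tendsto _).mono_left nhdsWithin_le_nhds
    have hq2pos : ∀ᶠ q in 𝓝[Q] (a,b), 0 < q.2 := hvten.eventually (eventually_gt_nhds hb')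
    have hw : ∀ r : ℝ, (r:EReal) < f (a/b) →
        ∀ᶠ q in 𝓝[Q] (a,b), (r:EReal) < f (q.1/q.2) := by
      intro r hr
      have hdiv : Filter.Tendsto (fun q : ℝ×ℝ => q.1/q.2) (𝓝[Q] (a,b)) (𝓝 (a/b)) :=
        (((continuous_fst.tendsto _).div (continuous_snd.tendsto _) hb'.ne').mono_left
          nhdsWithin_le_nhds)
      exact hdiv.eventually (hf.lsc (a/b) r hr)
    filter_upwards [ev_lt_mul hvten hb' hbF hw hc, hq2pos, self_mem_nhdsWithin]
      with q h1 h2 hq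
    rwa [gfun_pos_y hf hq.1 h2]

end glsc


section matrixpart
variable {f : ℝ → EReal}

lemma trace_re_nonneg {n : ℕ} {ρ M : Matrix (Fin n) (Fin n) ℂ} (hρ : ρ.PosSemidef)
    (hM : M.PosSemidef) : 0 ≤ ((ρ * M).trace).re := by
  obtain ⟨P, rfl⟩ : ∃ P : Matrix (Fin n) (Fin n) ℂ, ρ = Pᴴ * P := by
    open scoped MatrixOrder in
    exact CStarAlgebra.nonneg_iff_eq_star_mul_self.mp (Matrix.nonneg_iff_posSemidef.mpr hρ)
  obtain ⟨Q, rfl⟩ : ∃ Q : Matrix (Fin n) (Fin n) ℂ, M = Qᴴ * Q := by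
    open scoped MatrixOrder in
    exact CStarAlgebra.nonneg_iff_eq_star_mul_self.mp (Matrix.nonneg_iff_posSemidef.mpr hM)
  have e1 : (Pᴴ * P * (Qᴴ * Q)).trace = ((P * Qᴴ) * (P * Qᴴ)ᴴ).trace := by
    rw [Matrix.conjTranspose_mul, Matrix.conjTranspose_conjTranspose]
    have h2 : Pᴴ * P * (Qᴴ * Q) = Pᴴ * (P * Qᴴ * Q) := by
      simp only [Matrix.mul_assoc]
    rw [h2, Matrix.trace_mul_comm]
    simp only [Matrix.mul_assoc]
  rw [e1, Matrix.trace, Complex.re_sum]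
  apply Finset.sum_nonneg
  intro i _
  have hdi : (P * Qᴴ * (P * Qᴴ)ᴴ).diag i
      = ∑ j, (P * Qᴴ) i j * star ((P * Qᴴ) i j) := by
    simp [Matrix.diag_apply, Matrix.mul_apply, Matrix.conjTranspose_apply, mul_comm]
  rw [hdi, Complex.re_sum]
  apply Finset.sum_nonneg
  intro j _
  have hz : ((P * Qᴴ) i j * star ((P * Qᴴ) i j)).re
      = ((P * Qᴴ) i j).re^2 + ((P * Qᴴ) i j).im^2 := by
    simp [Complex.mul_re, Complex.star_def]
    ring
  rw [hz]
  positivity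

lemma trace_re_comb {n : ℕ} (t s : ℝ) (A B M : Matrix (Fin n) (Fin n) ℂ) :
    ((((t:ℝ):ℂ) • A + ((s:ℝ):ℂ) • B) * M).trace.re
      = t * ((A*M).trace).re + s * ((B*M).trace).re := by
  rw [Matrix.add_mul, Matrix.smul_mul, Matrix.smul_mul, Matrix.trace_add, Matrix.trace_smul,
    Matrix.trace_smul]
  simp [smul_eq_mul, Complex.add_re, Complex.mul_re, Complex.ofReal_re, Complex.ofReal_im]

lemma trace_re_smul {n : ℕ} (a : ℝ) (A M : Matrix (Fin n) (Fin n) ℂ) :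
    ((((a:ℝ):ℂ) • A * M).trace).re = a * ((A*M).trace).re := by
  rw [Matrix.smul_mul, Matrix.trace_smul]
  simp [smul_eq_mul, Complex.mul_re, Complex.ofReal_re, Complex.ofReal_im]

lemma psd_smul {n : ℕ} {ρ : Matrix (Fin n) (Fin n) ℂ} (h : ρ.PosSemidef) {a : ℝ} (ha : 0 ≤ a) :
    (((a:ℝ):ℂ) • ρ).PosSemidef := by
  refine Matrix.PosSemidef.of_dotProduct_mulVec_nonneg ?_ ?_
  · show (((a:ℝ):ℂ) • ρ)ᴴ = ((a:ℝ):ℂ) • ρ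
    rw [Matrix.conjTranspose_smul, h.1.eq]
    congr 1
    simp [Complex.star_def, Complex.conj_ofReal]
  · intro x
    have h2 := h.dotProduct_mulVec_nonneg x
    rw [Matrix.smul_mulVec, dotProduct_smul, smul_eq_mul]
    have haC : (0:ℂ) ≤ ((a:ℝ):ℂ) := by exact_mod_cast ha
    exact mul_nonneg haC h2

lemma povm_one {n : ℕ} : IsPOVM (fun _ : Fin 1 => (1 : Matrix (Fin n) (Fin n) ℂ)) :=
  ⟨fun _ => Matrix.PosSemidef.one, by simp⟩

lemma le_Dfmin (f : ℝ → EReal) {n : ℕ} (ρ1 ρ2 : Matrix (Fin n) (Fin n) ℂ) {m : ℕ}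
    (M : Fin m → Matrix (Fin n) (Fin n) ℂ) (hM : IsPOVM M) :
    (∑ x, gfun f ((ρ1 * M x).trace.re) ((ρ2 * M x).trace.re)) ≤ Dfmin f ρ1 ρ2 :=
  le_iSup_of_le m (le_iSup_of_le M (le_iSup_of_le hM le_rfl))

lemma Dfmin_le (f : ℝ → EReal) {n : ℕ} {ρ1 ρ2 : Matrix (Fin n) (Fin n) ℂ} {X : EReal}
    (h : ∀ (m : ℕ) (M : Fin m → Matrix (Fin n) (Fin n) ℂ), IsPOVM M →
      (∑ x, gfun f ((ρ1 * M x).trace.re) ((ρ2 * M x).trace.re)) ≤ X) :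
    Dfmin f ρ1 ρ2 ≤ X :=
  iSup_le fun m => iSup_le fun M => iSup_le fun hM => h m M hM

lemma Dfmin_ne_bot (hf : NiceF f) {n : ℕ} (ρ1 ρ2 : Matrix (Fin n) (Fin n) ℂ) :
    Dfmin f ρ1 ρ2 ≠ ⊥ := by
  have hle := le_Dfmin f ρ1 ρ2 _ (povm_one (n := n))
  rw [Fin.sum_univ_one] at hle
  intro hbot
  rw [hbot, le_bot_iff] at hle
  exact gfun_ne_bot hf _ _ hle

lemma ereal_smul_inv (a : ℝ) (ha : 0 < a) (X : EReal) :
    (a:EReal) * (((a⁻¹ : ℝ):EReal) * X) = X := by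
  induction X using EReal.rec with
  | bot => rw [EReal.coe_mul_bot_of_pos (inv_pos.2 ha), EReal.coe_mul_bot_of_pos ha]
  | top => rw [EReal.coe_mul_top_of_pos (inv_pos.2 ha), EReal.coe_mul_top_of_pos ha]
  | coe r =>
    rw [← EReal.coe_mul, ← EReal.coe_mul]
    congr 1
    field_simp

lemma Dfmin_smul_le (hf : NiceF f) {n : ℕ} {a : ℝ} (ha : 0 < a)
    (ρ1 ρ2 : Matrix (Fin n) (Fin n) ℂ) (h1 : ρ1.PosSemidef) (h2 : ρ2.PosSemidef) :
    Dfmin f (((a:ℝ):ℂ) • ρ1) (((a:ℝ):ℂ) • ρ2) ≤ ((a:ℝ):EReal) * Dfmin f ρ1 ρ2 := by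
  apply Dfmin_le
  intro m M hM
  have he : ∀ x : Fin m, gfun f (((((a:ℝ):ℂ) • ρ1) * M x).trace.re)
        (((((a:ℝ):ℂ) • ρ2) * M x).trace.re)
      = ((a:ℝ):EReal) * gfun f ((ρ1 * M x).trace.re) ((ρ2 * M x).trace.re) := by
    intro x
    rw [trace_re_smul, trace_re_smul]
    exact gfun_homog hf ha (trace_re_nonneg h1 (hM.1 x)) (trace_re_nonneg h2 (hM.1 x))
  calc (∑ x, gfun f (((((a:ℝ):ℂ) • ρ1) * M x).trace.re) (((((a:ℝ):ℂ) • ρ2) * M x).trace.re))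
      = ∑ x, ((a:ℝ):EReal) * gfun f ((ρ1 * M x).trace.re) ((ρ2 * M x).trace.re) :=
        Finset.sum_congr rfl fun x _ => he x
    _ = ((a:ℝ):EReal) * ∑ x, gfun f ((ρ1 * M x).trace.re) ((ρ2 * M x).trace.re) :=
        (ereal_mul_sum _ _ (fun i _ => gfun_ne_bot hf _ _) ha.le).symm
    _ ≤ ((a:ℝ):EReal) * Dfmin f ρ1 ρ2 :=
        mul_le_mul_of_nonneg_left (le_Dfmin f ρ1 ρ2 M hM) (by exact_mod_cast ha.le)

lemma lsc_sum {α : Type*} [TopologicalSpace α] {s : Set α} {x : α} {ι : Type*} (t : Finset ι)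
    (g : ι → α → EReal) (hb : ∀ i y, g i y ≠ ⊥)
    (hg : ∀ i ∈ t, LowerSemicontinuousWithinAt (g i) s x) :
    LowerSemicontinuousWithinAt (fun y => ∑ i ∈ t, g i y) s x := by
  classical
  induction t using Finset.induction_on with
  | empty => simpa using lowerSemicontinuousWithinAt_const
  | @insert a t' hxt ih =>
    have hadd := (hg a (Finset.mem_insert_self a t')).add'
      (ih fun i hi => hg i (Finset.mem_insert_of_mem hi))
      (EReal.continuousAt_add
        (Or.inr (ereal_sum_ne_bot t' (fun i => g i x) fun i _ => hb i x))
        (Or.inl (hb a x)))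
    have heq : (fun y => ∑ i ∈ insert a t', g i y) = fun y => g a y + ∑ i ∈ t', g i y := by
      funext y; exact Finset.sum_insert hxt
    rw [heq]
    exact hadd

end matrixpart


/-- on pairs of positive semidefinite matrices, `D_f^min` is jointly
convex, positively homogeneous, nowhere `−∞`, and lower semicontinuous. -/
theorem stmt_5 (f : ℝ → EReal) (hf : NiceF f) {n : ℕ} :
    (∀ ρ1 ρ2 σ1 σ2 : Matrix (Fin n) (Fin n) ℂ,
      ρ1.PosSemidef → ρ2.PosSemidef → σ1.PosSemidef → σ2.PosSemidef →
      ∀ t : ℝ, 0 ≤ t → t ≤ 1 →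
        Dfmin f ((t : ℂ) • ρ1 + ((1 - t : ℝ) : ℂ) • σ1)
                ((t : ℂ) • ρ2 + ((1 - t : ℝ) : ℂ) • σ2)
          ≤ ((t : ℝ) : EReal) * Dfmin f ρ1 ρ2 + ((1 - t : ℝ) : EReal) * Dfmin f σ1 σ2) ∧
    (∀ ρ1 ρ2 : Matrix (Fin n) (Fin n) ℂ, ρ1.PosSemidef → ρ2.PosSemidef →
      ∀ a : ℝ, 0 ≤ a →
        Dfmin f ((a : ℂ) • ρ1) ((a : ℂ) • ρ2) = ((a : ℝ) : EReal) * Dfmin f ρ1 ρ2) ∧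
    (∀ ρ1 ρ2 : Matrix (Fin n) (Fin n) ℂ, ρ1.PosSemidef → ρ2.PosSemidef →
        Dfmin f ρ1 ρ2 ≠ ⊥) ∧
    LowerSemicontinuousOn
      (fun p : Matrix (Fin n) (Fin n) ℂ × Matrix (Fin n) (Fin n) ℂ => Dfmin f p.1 p.2)
      {p | p.1.PosSemidef ∧ p.2.PosSemidef} := by
  refine ⟨?_, ?_, ?_, ?_⟩
  · -- joint convexity
    intro ρ1 ρ2 σ1 σ2 h1 h2 h3 h4 t ht0 ht1
    rcases eq_or_lt_of_le ht0 with rfl|ht0'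
    · simp only [Complex.ofReal_zero, zero_smul, zero_add, sub_zero, Complex.ofReal_one,
        one_smul, EReal.coe_zero, zero_mul, EReal.coe_one, one_mul]
      exact le_rfl
    rcases eq_or_lt_of_le ht1 with rfl|ht1'
    · simp only [sub_self, Complex.ofReal_one, one_smul, Complex.ofReal_zero, zero_smul,
        add_zero, EReal.coe_one, one_mul, EReal.coe_zero, zero_mul]
      exact le_rfl
    · apply Dfmin_le
      intro m M hM
      have hterm : ∀ x : Fin m,
          gfun f ((((t:ℂ) • ρ1 + ((1-t:ℝ):ℂ) • σ1) * M x).trace.re)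
                 ((((t:ℂ) • ρ2 + ((1-t:ℝ):ℂ) • σ2) * M x).trace.re)
          ≤ ((t:ℝ):EReal) * gfun f ((ρ1 * M x).trace.re) ((ρ2 * M x).trace.re)
            + ((1-t:ℝ):EReal) * gfun f ((σ1 * M x).trace.re) ((σ2 * M x).trace.re) := by
        intro x
        rw [trace_re_comb t (1-t) ρ1 σ1 (M x), trace_re_comb t (1-t) ρ2 σ2 (M x)]
        exact gfun_convex hf (trace_re_nonneg h1 (hM.1 x)) (trace_re_nonneg h2 (hM.1 x))
          (trace_re_nonneg h3 (hM.1 x)) (trace_re_nonneg h4 (hM.1 x)) ht0' ht1'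
      calc (∑ x, gfun f ((((t:ℂ) • ρ1 + ((1-t:ℝ):ℂ) • σ1) * M x).trace.re)
              ((((t:ℂ) • ρ2 + ((1-t:ℝ):ℂ) • σ2) * M x).trace.re))
          ≤ ∑ x, (((t:ℝ):EReal) * gfun f ((ρ1 * M x).trace.re) ((ρ2 * M x).trace.re)
            + ((1-t:ℝ):EReal) * gfun f ((σ1 * M x).trace.re) ((σ2 * M x).trace.re)) :=
            Finset.sum_le_sum fun x _ => hterm x
        _ = (∑ x, ((t:ℝ):EReal) * gfun f ((ρ1 * M x).trace.re) ((ρ2 * M x).trace.re))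
            + ∑ x, ((1-t:ℝ):EReal) * gfun f ((σ1 * M x).trace.re) ((σ2 * M x).trace.re) :=
            Finset.sum_add_distrib
        _ = ((t:ℝ):EReal) * (∑ x, gfun f ((ρ1 * M x).trace.re) ((ρ2 * M x).trace.re))
            + ((1-t:ℝ):EReal) * ∑ x, gfun f ((σ1 * M x).trace.re) ((σ2 * M x).trace.re) := by
            rw [ereal_mul_sum _ _ (fun i _ => gfun_ne_bot hf _ _) ht0'.le,
              ereal_mul_sum _ _ (fun i _ => gfun_ne_bot hf _ _) (by linarith : (0:ℝ) ≤ 1-t)]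
        _ ≤ ((t:ℝ):EReal) * Dfmin f ρ1 ρ2 + ((1-t:ℝ):EReal) * Dfmin f σ1 σ2 :=
            add_le_add
              (mul_le_mul_of_nonneg_left (le_Dfmin f ρ1 ρ2 M hM) (by exact_mod_cast ht0'.le))
              (mul_le_mul_of_nonneg_left (le_Dfmin f σ1 σ2 M hM)
                (by exact_mod_cast (by linarith : (0:ℝ) ≤ 1-t)))
  · -- positive homogeneity
    intro ρ1 ρ2 h1 h2 a ha0
    rcases eq_or_lt_of_le ha0 with rfl|ha
    · rw [Complex.ofReal_zero, zero_smul, zero_smul, EReal.coe_zero, zero_mul]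
      apply le_antisymm
      · apply Dfmin_le
        intro m M hM
        have hz : ∀ x : Fin m, gfun f (((0 : Matrix (Fin n) (Fin n) ℂ) * M x).trace.re)
            (((0 : Matrix (Fin n) (Fin n) ℂ) * M x).trace.re) = 0 := by
          intro x
          rw [Matrix.zero_mul, Matrix.trace_zero]
          simpa using gfun_zero_zero (f := f)
        rw [Finset.sum_congr rfl fun x _ => hz x, Finset.sum_const, smul_zero]
      · have hle := le_Dfmin f (0 : Matrix (Fin n) (Fin n) ℂ) 0 _ (povm_one (n := n))
        rw [Fin.sum_univ_one, Matrix.zero_mul, Matrix.trace_zero] at hle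
        simpa using le_trans (le_of_eq (by simpa using (gfun_zero_zero (f := f)).symm)) hle
    · have hA := Dfmin_smul_le hf ha ρ1 ρ2 h1 h2
      have hB := Dfmin_smul_le hf (inv_pos.2 ha) ((a:ℂ) • ρ1) ((a:ℂ) • ρ2)
        (psd_smul h1 ha0) (psd_smul h2 ha0)
      have hcan : ∀ ρ : Matrix (Fin n) (Fin n) ℂ, ((a⁻¹:ℝ):ℂ) • ((a:ℂ) • ρ) = ρ := by
        intro ρ
        rw [smul_smul, ← Complex.ofReal_mul, inv_mul_cancel₀ ha.ne', Complex.ofReal_one, one_smul]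
      rw [hcan, hcan] at hB
      apply le_antisymm hA
      have := mul_le_mul_of_nonneg_left hB (by exact_mod_cast ha.le : (0:EReal) ≤ ((a:ℝ):EReal))
      rwa [ereal_smul_inv a ha] at this
  · -- never ⊥
    intro ρ1 ρ2 _ _
    exact Dfmin_ne_bot hf ρ1 ρ2
  · -- lower semicontinuity
    intro p hp
    show LowerSemicontinuousWithinAt _ _ p
    have hunfold : (fun p : Matrix (Fin n) (Fin n) ℂ × Matrix (Fin n) (Fin n) ℂ =>
        Dfmin f p.1 p.2) = fun p => ⨆ (m : ℕ) (M : Fin m → Matrix (Fin n) (Fin n) ℂ)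
          (_ : IsPOVM M), ∑ x, gfun f ((p.1 * M x).trace.re) ((p.2 * M x).trace.re) := rfl
    rw [hunfold]
    apply lowerSemicontinuousWithinAt_iSup
    intro m
    apply lowerSemicontinuousWithinAt_iSup
    intro M
    apply lowerSemicontinuousWithinAt_iSup
    intro hM
    apply lsc_sum _ _ (fun i y => gfun_ne_bot hf _ _)
    intro x _
    -- single term
    intro c hc
    have hcont1 : Continuous (fun q : Matrix (Fin n) (Fin n) ℂ × Matrix (Fin n) (Fin n) ℂ =>
        ((q.1 * M x).trace).re) :=
      Complex.continuous_re.comp ((continuous_fst.matrix_mul continuous_const).matrix_trace)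
    have hcont2 : Continuous (fun q : Matrix (Fin n) (Fin n) ℂ × Matrix (Fin n) (Fin n) ℂ =>
        ((q.2 * M x).trace).re) :=
      Complex.continuous_re.comp ((continuous_snd.matrix_mul continuous_const).matrix_trace)
    have hmap : Filter.Tendsto
        (fun q : Matrix (Fin n) (Fin n) ℂ × Matrix (Fin n) (Fin n) ℂ =>
          ((((q.1 * M x).trace).re, ((q.2 * M x).trace).re) : ℝ × ℝ))
        (𝓝[{p | p.1.PosSemidef ∧ p.2.PosSemidef}] p)
        (𝓝[{q : ℝ×ℝ | 0 ≤ q.1 ∧ 0 ≤ q.2}] (((p.1 * M x).trace).re, ((p.2 * M x).trace).re)) := by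
      rw [tendsto_nhdsWithin_iff]
      constructor
      · exact ((hcont1.prodMk hcont2).tendsto p).mono_left nhdsWithin_le_nhds
      · filter_upwards [self_mem_nhdsWithin] with q hq
        exact ⟨trace_re_nonneg hq.1 (hM.1 x), trace_re_nonneg hq.2 (hM.1 x)⟩
    exact hmap.eventually
      (gfun_lsc hf (trace_re_nonneg hp.1 (hM.1 x)) (trace_re_nonneg hp.2 (hM.1 x)) hc)
end
end

section
/- Suppose f is proper, lower semicontinuous, convex and canonical with dom f ⊇ (0,∞), f* is operator convex on dom f*, dom f* is unbounded from below, and f* is bounded from below (equivalently f*(−∞) := lim_{t→−∞} f*(t) > −∞). Then f* is operator monotone on dom f*: for all k ≥ 1 and all k×k Hermitian matrices A, B with spectra in dom f* and A ≤ B in the Loewner order, f*(A) ≤ f*(B), where f* is applied via the functional calculus on eigenvalues. -/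
open Filter Matrix
open scoped ComplexOrder
open scoped BigOperators

noncomputable section

attribute [local instance] Classical.propDecidable

section Stmt9Aux

variable {k : ℕ}

lemma posSemidef_real_smul {c : ℝ} (hc : 0 ≤ c) {X : Matrix (Fin k) (Fin k) ℂ}
    (hX : X.PosSemidef) : ((c : ℂ) • X).PosSemidef := by
  refine Matrix.PosSemidef.of_dotProduct_mulVec_nonneg ?_ ?_
  · have : ((c : ℂ) • X)ᴴ = star (c : ℂ) • Xᴴ := Matrix.conjTranspose_smul _ _
    rw [Matrix.IsHermitian, this, hX.1.eq]
    simp [Complex.star_def, Complex.conj_ofReal]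
  · intro x
    rw [Matrix.smul_mulVec, dotProduct_smul, smul_eq_mul]
    exact mul_nonneg (Complex.zero_le_real.2 hc) (hX.dotProduct_mulVec_nonneg x)

lemma isHermitian_real_smul (c : ℝ) {X : Matrix (Fin k) (Fin k) ℂ} (hX : X.IsHermitian) :
    ((c : ℂ) • X).IsHermitian := by
  have e : ((c : ℂ) • X)ᴴ = star (c : ℂ) • Xᴴ := Matrix.conjTranspose_smul _ _
  rw [Matrix.IsHermitian, e, hX.eq]
  simp [Complex.star_def, Complex.conj_ofReal]

lemma loewner_refl (X : Matrix (Fin k) (Fin k) ℂ) : Loewner X X := by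
  simpa [Loewner, sub_self] using (Matrix.PosSemidef.zero : (0 : Matrix (Fin k) (Fin k) ℂ).PosSemidef)

lemma loewner_trans {X Y Z : Matrix (Fin k) (Fin k) ℂ} (h1 : Loewner X Y) (h2 : Loewner Y Z) :
    Loewner X Z := by
  have := h2.add h1
  simpa [Loewner, sub_add_sub_cancel] using this

lemma loewner_smul {c : ℝ} (hc : 0 ≤ c) {X Y : Matrix (Fin k) (Fin k) ℂ} (h : Loewner X Y) :
    Loewner ((c : ℂ) • X) ((c : ℂ) • Y) := by
  have := posSemidef_real_smul hc h
  simpa [Loewner, smul_sub] using this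

lemma loewner_add_left (Z : Matrix (Fin k) (Fin k) ℂ) {X Y : Matrix (Fin k) (Fin k) ℂ}
    (h : Loewner X Y) : Loewner (Z + X) (Z + Y) := by
  have : Z + Y - (Z + X) = Y - X := by abel
  rw [Loewner, this]; exact h

lemma loewner_congr {X Y X' Y' : Matrix (Fin k) (Fin k) ℂ} (hx : X = X') (hy : Y = Y')
    (h : Loewner X Y) : Loewner X' Y' := hx ▸ hy ▸ h

lemma hermFC_congr (h : ℝ → ℝ) {A B : Matrix (Fin k) (Fin k) ℂ} (e : A = B)
    (hA : A.IsHermitian) (hB : B.IsHermitian) : hermFC h hA = hermFC h hB := by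
  subst e; rfl

lemma loewner_hermFC_mono {h1 h2 : ℝ → ℝ} {A : Matrix (Fin k) (Fin k) ℂ} (hA : A.IsHermitian)
    (hle : ∀ i, h1 (hA.eigenvalues i) ≤ h2 (hA.eigenvalues i)) :
    Loewner (hermFC h1 hA) (hermFC h2 hA) := by
  have key : hermFC h2 hA - hermFC h1 hA
      = (hA.eigenvectorUnitary : Matrix (Fin k) (Fin k) ℂ) *
        Matrix.diagonal (fun i => ((h2 (hA.eigenvalues i) - h1 (hA.eigenvalues i) : ℝ) : ℂ)) *
        (hA.eigenvectorUnitary : Matrix (Fin k) (Fin k) ℂ)ᴴ := by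
    unfold hermFC
    rw [Matrix.star_eq_conjTranspose]
    rw [← Matrix.sub_mul, ← Matrix.mul_sub, Matrix.diagonal_sub]
    congr 2
    funext i
    push_cast
    ring
  rw [Loewner, key]
  refine Matrix.PosSemidef.mul_mul_conjTranspose_same ?_ _
  refine Matrix.PosSemidef.diagonal ?_
  intro i
  exact Complex.zero_le_real.2 (by linarith [hle i])

lemma hermFC_const (c : ℝ) {A : Matrix (Fin k) (Fin k) ℂ} (hA : A.IsHermitian) :
    hermFC (fun _ => c) hA = (c : ℂ) • 1 := by
  unfold hermFC
  have hd : Matrix.diagonal (fun _ : Fin k => (c : ℂ)) = (c : ℂ) • 1 := by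
    ext i j
    by_cases h : i = j <;> simp [Matrix.diagonal_apply, Matrix.one_apply, h]
  rw [hd, Matrix.mul_smul, Matrix.smul_mul, mul_one,
    (Matrix.mem_unitaryGroup_iff).mp hA.eigenvectorUnitary.2]

lemma hermFC_id {A : Matrix (Fin k) (Fin k) ℂ} (hA : A.IsHermitian) :
    hermFC (fun x => x) hA = A := by
  conv_rhs => rw [hA.spectral_theorem]
  rfl

lemma hermFC_isHermitian (h : ℝ → ℝ) {A : Matrix (Fin k) (Fin k) ℂ} (hA : A.IsHermitian) :
    (hermFC h hA).IsHermitian := by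
  unfold hermFC
  rw [Matrix.star_eq_conjTranspose]
  refine Matrix.isHermitian_mul_mul_conjTranspose _ ?_
  refine Matrix.isHermitian_diagonal_of_self_adjoint _ ?_
  funext i
  simp [Complex.star_def, Complex.conj_ofReal]

lemma eigenvalues_le_of_loewner_smul_one {X : Matrix (Fin k) (Fin k) ℂ} (hX : X.IsHermitian)
    {M : ℝ} (h : Loewner X ((M : ℂ) • 1)) (i : Fin k) : hX.eigenvalues i ≤ M := by
  set v : Fin k → ℂ := ⇑(hX.eigenvectorBasis i) with hv_def
  have hv : X *ᵥ v = (hX.eigenvalues i : ℝ) • v := hX.mulVec_eigenvectorBasis i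
  have hvne : v ≠ 0 := by
    intro h0
    have := hX.eigenvectorBasis.orthonormal.ne_zero i
    apply this
    ext j
    exact congrFun h0 j
  have h2 := h.dotProduct_mulVec_nonneg v
  have hmv : ((M : ℂ) • 1 - X) *ᵥ v = ((M - hX.eigenvalues i : ℝ) : ℂ) • v := by
    rw [Matrix.sub_mulVec, Matrix.smul_mulVec, Matrix.one_mulVec, hv]
    funext j
    push_cast
    simp only [Pi.smul_apply, Pi.sub_apply, smul_eq_mul, Complex.real_smul, Complex.ofReal_sub]
    ring
  rw [hmv, dotProduct_smul, smul_eq_mul] at h2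
  set s := dotProduct (star v) v with hs_def
  have hs_pos : 0 < s := Matrix.dotProduct_star_self_pos_iff.mpr hvne
  have him : s.im = 0 := by
    have := (Complex.lt_def.mp hs_pos).2
    simpa using this.symm
  have hre : 0 < s.re := by
    simpa using (Complex.lt_def.mp hs_pos).1
  have h3 : 0 ≤ (M - hX.eigenvalues i) * s.re := by
    have := (Complex.nonneg_iff.mp h2).1
    simpa [Complex.mul_re, him] using this
  nlinarith

lemma edom_econj_segment {f : ℝ → EReal} (hf : NiceF f) {a b t : ℝ}
    (ha : a ∈ edom (econj f)) (hb : b ∈ edom (econj f)) (hat : a ≤ t) (htb : t ≤ b) :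
    t ∈ edom (econj f) := by
  have key : econj f t ≤ max (econj f a) (econj f b) := by
    refine iSup_le fun l => ?_
    by_cases hfl : f l = ⊤
    · rw [hfl, EReal.sub_top]
      exact bot_le
    · lift f l to ℝ using ⟨hfl, hf.ne_bot l⟩ with r hr
      have h1 : ((a * l : ℝ) : EReal) - (r : EReal) ≤ econj f a := by
        have := le_iSup (fun l' => ((a * l' : ℝ) : EReal) - f l') l
        rwa [← hr] at this
      have h2 : ((b * l : ℝ) : EReal) - (r : EReal) ≤ econj f b := by
        have := le_iSup (fun l' => ((b * l' : ℝ) : EReal) - f l') l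
        rwa [← hr] at this
      rw [← EReal.coe_sub] at h1 h2
      rw [show ((t * l : ℝ) : EReal) - (r : EReal) = ((t * l - r : ℝ) : EReal) from (EReal.coe_sub _ _).symm]
      have htl : t * l ≤ max (a * l) (b * l) := by
        rcases le_total 0 l with hl | hl
        · exact le_max_of_le_right (mul_le_mul_of_nonneg_right htb hl)
        · exact le_max_of_le_left (mul_le_mul_of_nonpos_right hat hl)
      calc ((t * l - r : ℝ) : EReal) ≤ ((max (a * l) (b * l) - r : ℝ) : EReal) := by
              exact_mod_cast sub_le_sub_right htl r
        _ = max ((a * l - r : ℝ) : EReal) ((b * l - r : ℝ) : EReal) := by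
              rw [← max_sub_sub_right]
              exact (EReal.coe_strictMono.monotone.map_max)
        _ ≤ max (econj f a) (econj f b) := max_le_max h1 h2
  exact lt_of_le_of_lt key (max_lt ha hb)

lemma econjR_mono_on {f : ℝ → EReal} (hcanon : StrictMonoOn (econj f) (edom (econj f)))
    {c : ℝ} (hc : ∀ t : ℝ, ((c : ℝ) : EReal) ≤ econj f t) {s t : ℝ}
    (hs : s ∈ edom (econj f)) (ht : t ∈ edom (econj f)) (hst : s ≤ t) :
    econjR f s ≤ econjR f t := by
  rcases eq_or_lt_of_le hst with rfl | h
  · exact le_refl _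
  · have hlt := hcanon hs ht h
    refine EReal.toReal_le_toReal hlt.le ?_ ?_
    · exact fun hbot => by simpa [hbot] using hc s
    · exact ne_of_lt ht

end Stmt9Aux

/-- if `f` is proper lsc convex canonical with `dom f ⊇ (0,∞)`, `f*` is
operator convex, `dom f*` is unbounded from below and `f*` is bounded from below,
then `f*` is operator monotone on `dom f*`. -/
theorem stmt_9 (f : ℝ → EReal) (hf : NiceF f)
    (hcanon : StrictMonoOn (econj f) (edom (econj f)))
    (hI : CondI f)
    (hunbdd : ¬ BddBelow (edom (econj f)))
    (hbddbelow : ∃ c : ℝ, ∀ t : ℝ, ((c : ℝ) : EReal) ≤ econj f t) :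
    ∀ (k : ℕ), 1 ≤ k → ∀ (A B : Matrix (Fin k) (Fin k) ℂ)
      (hA : A.IsHermitian) (hB : B.IsHermitian),
      specIn hA (edom (econj f)) → specIn hB (edom (econj f)) →
      Loewner A B →
      Loewner (hermFC (econjR f) hA) (hermFC (econjR f) hB) := by
  obtain ⟨c, hc⟩ := hbddbelow
  intro k hk A B hA hB hSA hSB hAB
  haveI : Nonempty (Fin k) := ⟨⟨0, hk⟩⟩
  set h : ℝ → ℝ := econjR f with hh_def
  obtain ⟨j₀, hj₀⟩ := Finite.exists_max hB.eigenvalues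
  set M : ℝ := hB.eigenvalues j₀ with hM_def
  have hMdom : M ∈ edom (econj f) := hSB j₀
  have hBM : Loewner B ((M : ℂ) • 1) := by
    have := loewner_hermFC_mono (h1 := fun x => x) (h2 := fun _ => M) hB (fun i => hj₀ i)
    rwa [hermFC_id, hermFC_const] at this
  set C : ℕ → Matrix (Fin k) (Fin k) ℂ := fun n => B + (((2 : ℝ) ^ n : ℝ) : ℂ) • (A - B)
    with hC_def
  have hCH : ∀ n, (C n).IsHermitian := fun n =>
    hB.add (isHermitian_real_smul _ (hA.sub hB))
  have hCB : ∀ n, Loewner (C n) B := by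
    intro n
    rw [Loewner]
    have e : B - C n = (((2 : ℝ) ^ n : ℝ) : ℂ) • (B - A) := by
      rw [hC_def]
      push_cast
      module
    rw [e]
    exact posSemidef_real_smul (by positivity) hAB
  have hCM : ∀ n, ∀ i, (hCH n).eigenvalues i ≤ M := fun n i =>
    eigenvalues_le_of_loewner_smul_one (hCH n) (loewner_trans (hCB n) hBM) i
  have hCdom : ∀ n, specIn (hCH n) (edom (econj f)) := by
    intro n i
    obtain ⟨y, hy, hylt⟩ := not_bddBelow_iff.mp hunbdd ((hCH n).eigenvalues i)
    exact edom_econj_segment hf hy hMdom hylt.le (hCM n i)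
  have hmid : ∀ n, (1/2 : ℂ) • (B + C (n+1)) = C n := by
    intro n
    rw [hC_def]
    push_cast
    module
  have key : ∀ n : ℕ, Loewner (hermFC h hA)
      ((((1 - (1/2 : ℝ) ^ n : ℝ)) : ℂ) • hermFC h hB
        + ((((1/2 : ℝ) ^ n : ℝ)) : ℂ) • hermFC h (hCH n)) := by
    intro n
    induction n with
    | zero =>
      have e0 : C 0 = A := by
        rw [hC_def]
        push_cast
        module
      rw [hermFC_congr h e0 (hCH 0) hA]
      refine loewner_congr rfl ?_ (loewner_refl (hermFC h hA))
      push_cast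
      module
    | succ n ih =>
      have hM' : ((1/2 : ℂ) • (B + C (n+1))).IsHermitian := by
        rw [hmid n]; exact hCH n
      have step : Loewner (hermFC h (hCH n))
          ((1/2 : ℂ) • (hermFC h hB + hermFC h (hCH (n+1)))) := by
        have := hI k hk B (C (n+1)) hB (hCH (n+1)) hM' hSB (hCdom (n+1))
        rwa [hermFC_congr h (hmid n) hM' (hCH n)] at this
      have step2 := loewner_smul (c := (1/2 : ℝ) ^ n) (by positivity) step
      have step3 := loewner_add_left ((((1 - (1/2 : ℝ) ^ n : ℝ)) : ℂ) • hermFC h hB) step2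
      refine loewner_congr rfl ?_ (loewner_trans ih step3)
      push_cast
      module
  have bound : ∀ n : ℕ, Loewner (hermFC h hA)
      ((((1 - (1/2 : ℝ) ^ n : ℝ)) : ℂ) • hermFC h hB
        + ((((1/2 : ℝ) ^ n : ℝ)) : ℂ) • ((h M : ℂ) • 1)) := by
    intro n
    refine loewner_trans (key n) (loewner_add_left _ (loewner_smul (by positivity) ?_))
    have := loewner_hermFC_mono (h1 := h) (h2 := fun _ => h M) (hCH n)
      (fun i => econjR_mono_on hcanon hc (hCdom n i) hMdom (hCM n i))
    rwa [hermFC_const] at this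
  rw [Loewner]
  refine Matrix.PosSemidef.of_dotProduct_mulVec_nonneg ?_ ?_
  · exact (hermFC_isHermitian h hB).sub (hermFC_isHermitian h hA)
  · intro x
    set w := dotProduct (star x) ((hermFC h hB - hermFC h hA) *ᵥ x) with hw
    set u := dotProduct (star x) (((h M : ℂ) • 1 - hermFC h hB) *ᵥ x) with hu
    have hn : ∀ n : ℕ, 0 ≤ w.re + (1/2 : ℝ) ^ n * u.re := by
      intro n
      have hb := (bound n).dotProduct_mulVec_nonneg x
      have hmat : (((1 - (1/2 : ℝ) ^ n : ℝ)) : ℂ) • hermFC h hB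
            + ((((1/2 : ℝ) ^ n : ℝ)) : ℂ) • ((h M : ℂ) • 1) - hermFC h hA
          = (hermFC h hB - hermFC h hA)
            + ((((1/2 : ℝ) ^ n : ℝ)) : ℂ) • ((h M : ℂ) • 1 - hermFC h hB) := by
        push_cast
        module
      rw [hmat, Matrix.add_mulVec, dotProduct_add, Matrix.smul_mulVec,
        dotProduct_smul] at hb
      have hre := (Complex.nonneg_iff.mp hb).1
      rw [← hw, ← hu] at hre
      simpa only [smul_eq_mul, Complex.add_re, Complex.re_ofReal_mul] using hre
    have hw_re : 0 ≤ w.re := by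
      have htend : Filter.Tendsto (fun n : ℕ => w.re + (1/2 : ℝ) ^ n * u.re)
          Filter.atTop (nhds (w.re + 0 * u.re)) :=
        Filter.Tendsto.add tendsto_const_nhds
          ((tendsto_pow_atTop_nhds_zero_of_lt_one (by norm_num) (by norm_num)).mul_const _)
      have := ge_of_tendsto' htend hn
      simpa using this
    have hH : (hermFC h hB - hermFC h hA).IsHermitian :=
      (hermFC_isHermitian h hB).sub (hermFC_isHermitian h hA)
    have hsw : star w = w := by
      conv_lhs => rw [hw, Matrix.star_dotProduct, star_star, Matrix.star_mulVec,
        ← Matrix.dotProduct_mulVec, hH.eq]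
    have him : w.im = 0 := by
      rw [Complex.star_def, Complex.conj_eq_iff_im] at hsw
      exact hsw
    exact Complex.nonneg_iff.mpr ⟨hw_re, him.symm⟩
end
end
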